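/- arXiv:2308.02975 — 6 statements merged into one kernel-verified Lean document; each statement's English description precedes it below -/
import Mathlib

section
/- Let G be a clique tree in which every block has at least 3 vertices, let v be a cut vertex of G contained in a pendant block isomorphic to K_m (m ≥ 3), and let G₁ = G − (K_m \ {v}) be the graph obtained by deleting the vertices of this pendant block other than v. Then Z(G₁ ⊕_v K_m) = Z(G₁) + Z(K_m) − 1, i.e., Z(G) = Z(G₁) + m − 2. -/
open Classical

/-- The set of vertices eventually forced blue, starting from the blue set `S`,
under the color-change rule: a blue vertex with exactly one non-blue neighbor
forces that neighbor. -/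
inductive SimpleGraph.Forced {V : Type*} (G : SimpleGraph V) (S : Set V) : V → Prop
  | init (v : V) (hv : v ∈ S) : SimpleGraph.Forced G S v
  | force (u w : V) (hu : SimpleGraph.Forced G S u) (hadj : G.Adj u w)
      (hothers : ∀ y, G.Adj u y → y ≠ w → SimpleGraph.Forced G S y) :
      SimpleGraph.Forced G S w

/-- `S` is a zero forcing set of `G` if starting from `S` blue, every vertex
eventually becomes blue. -/
def SimpleGraph.IsZeroForcingSet {V : Type*} (G : SimpleGraph V) (S : Set V) : Prop :=
  ∀ v, G.Forced S v

/-- The zero forcing number `Z(G)`: the least size of a zero forcing set. -/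
noncomputable def SimpleGraph.zeroForcingNumber {V : Type*} (G : SimpleGraph V) : ℕ :=
  sInf {n | ∃ S : Set V, S.ncard = n ∧ G.IsZeroForcingSet S}

/-- The induced subgraph of `G` on `B` is connected and has no cut vertex. -/
def SimpleGraph.IsConnectedNoCutVertexSet {V : Type*} (G : SimpleGraph V) (B : Set V) : Prop :=
  (G.induce B).Connected ∧ ∀ v ∈ B, B \ {v} = ∅ ∨ (G.induce (B \ {v})).Connected

/-- `B` is (the vertex set of) a block of `G`: a maximal connected subgraph
without cut vertices. -/
def SimpleGraph.IsBlock {V : Type*} (G : SimpleGraph V) (B : Set V) : Prop :=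
  G.IsConnectedNoCutVertexSet B ∧
    ∀ C, B ⊆ C → G.IsConnectedNoCutVertexSet C → B = C

/-- `v` is a cut vertex of `G`: `G` is connected but `G - v` is not. -/
def SimpleGraph.IsCutVertex {V : Type*} (G : SimpleGraph V) (v : V) : Prop :=
  G.Connected ∧ ¬ (G.induce ({v}ᶜ : Set V)).Connected

/-- A clique tree: a connected graph each of whose blocks is a clique. -/
def SimpleGraph.IsCliqueTree {V : Type*} (G : SimpleGraph V) : Prop :=
  G.Connected ∧ ∀ B : Set V, G.IsBlock B → G.IsClique B

/-- The real adjacency matrix of a graph. -/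
noncomputable def SimpleGraph.adjMatR {V : Type*} [Fintype V] (G : SimpleGraph V) :
    Matrix V V ℝ :=
  Matrix.of fun i j => if G.Adj i j then (1 : ℝ) else 0

/-- The spectral radius of a (connected) graph: the largest real eigenvalue of
its adjacency matrix. -/
noncomputable def SimpleGraph.specRad {V : Type*} [Fintype V] (G : SimpleGraph V) : ℝ :=
  sSup {t : ℝ | ∃ x : V → ℝ, x ≠ 0 ∧ G.adjMatR.mulVec x = t • x}

/-- The clique tree `𝒢(n,k)` on vertex set `Fin n`: one block `K_{2k-n+2}`
(on the vertices `0, 1, …, 2k-n+1`) and `n-k-1` triangle blocks (on the vertex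
`0` together with the pairs `{2k-n+2i, 2k-n+1+2i}` for `1 ≤ i ≤ n-k-1`), all
sharing the single central cut vertex `0`. -/
def calG (n k : ℕ) : SimpleGraph (Fin n) :=
  SimpleGraph.fromRel (fun i j =>
    (i.val = 0 ∨ j.val = 0) ∨
    (i.val ≤ 2 * k - n + 1 ∧ j.val ≤ 2 * k - n + 1) ∨
    (2 * k - n + 1 < i.val ∧ 2 * k - n + 1 < j.val ∧
      (i.val - (2 * k - n + 2)) / 2 = (j.val - (2 * k - n + 2)) / 2))

section ZFAux
open SimpleGraph
variable {V : Type*}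


lemma ZF.reach_induce {G : SimpleGraph V} {s : Set V} {a b : V} (w : G.Walk a b)
    (hw : ∀ z ∈ w.support, z ∈ s) :
    (G.induce s).Reachable ⟨a, hw a w.start_mem_support⟩ ⟨b, hw b w.end_mem_support⟩ := by
  induction w with
  | nil => exact Reachable.refl _
  | @cons u x c h p ih =>
    have hx : x ∈ s := hw x (by simp)
    have h2 := ih (fun z hz => hw z (by simp [hz]))
    have h1 : (G.induce s).Adj ⟨u, hw u (by simp)⟩ ⟨x, hx⟩ := h
    exact h1.reachable.trans h2

lemma ZF.connected_anchor {G : SimpleGraph V} {s : Set V} {a : V} (ha : a ∈ s)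
    (h : ∀ z ∈ s, ∃ w : G.Walk z a, ∀ y ∈ w.support, y ∈ s) :
    (G.induce s).Connected := by
  rw [SimpleGraph.connected_iff]
  refine ⟨fun x y => ?_, ⟨⟨a, ha⟩⟩⟩
  obtain ⟨wx, hwx⟩ := h x x.2
  obtain ⟨wy, hwy⟩ := h y y.2
  exact (ZF.reach_induce wx hwx).trans (ZF.reach_induce wy hwy).symm

lemma ZF.first_hit {G : SimpleGraph V} {B : Set V} {a b : V} (p : G.Walk a b)
    (hna : a ∉ B) (hb : b ∈ B) :
    ∃ w', ∃ (_ : w' ∈ B), ∃ q : G.Walk a w', (∀ z ∈ q.support, z ∈ p.support) ∧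
      (∀ z ∈ q.support, z ∈ B → z = w') := by
  induction p with
  | nil => exact absurd hb hna
  | @cons a c b h p ih =>
    by_cases hc : c ∈ B
    · refine ⟨c, hc, Walk.cons h Walk.nil, ?_, ?_⟩
      · intro z hz; simp at hz ⊢
        rcases hz with rfl | rfl
        · exact Or.inl rfl
        · exact Or.inr p.start_mem_support
      · intro z hz hzB; simp at hz
        rcases hz with rfl | rfl
        · exact absurd hzB hna
        · rfl
    · obtain ⟨w', hw', q, h1, h2⟩ := ih hc hb
      refine ⟨w', hw', Walk.cons h q, ?_, ?_⟩
      · intro z hz; simp at hz ⊢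
        rcases hz with rfl | hz
        · exact Or.inl rfl
        · exact Or.inr (h1 z hz)
      · intro z hz hzB; simp at hz
        rcases hz with rfl | hz
        · exact absurd hzB hna
        · exact h2 z hz hzB

lemma ZF.not_mem_takeUntil {G : SimpleGraph V} [DecidableEq V] {a b : V} {q : G.Walk a b}
    (hq : q.IsPath) {z : V} (hz : z ∈ q.support) {y : V} (hyz : y ≠ z)
    (hyd : y ∈ (q.dropUntil z hz).support) : y ∉ (q.takeUntil z hz).support := by
  intro hyt
  have hnd : q.support.Nodup := hq.support_nodup
  rw [← q.take_spec hz, Walk.support_append] at hnd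
  have hyd' : y ∈ (q.dropUntil z hz).support.tail := by
    have h3 := (q.dropUntil z hz).support_eq_cons
    rw [h3] at hyd
    exact (List.mem_cons.mp hyd).resolve_left hyz
  exact (List.disjoint_of_nodup_append hnd) hyt hyd'

lemma ZF.clique_walk {G : SimpleGraph V} {B : Set V} (hclq : G.IsClique B)
    {z z' : V} (hz : z ∈ B) (hz' : z' ∈ B) :
    ∃ w : G.Walk z z', ∀ y ∈ w.support, y = z ∨ y = z' := by
  by_cases h : z = z'
  · subst h; exact ⟨Walk.nil, by simp⟩
  · exact ⟨Walk.cons (hclq hz hz' h) Walk.nil, by intro y hy; simpa using hy⟩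

lemma ZF.nbhd_in_block {G : SimpleGraph V} (hGconn : G.Connected)
    {B : Set V} (hB : G.IsBlock B) (hclq : G.IsClique B) {v : V} (hv : v ∈ B)
    (hpendant : ∀ u ∈ B, G.IsCutVertex u → u = v)
    {u : V} (hu : u ∈ B) (huv : u ≠ v) {x : V} (hux : G.Adj u x) : x ∈ B := by
  classical
  by_contra hxB
  have hnotcut : ¬ G.IsCutVertex u := fun h => huv (hpendant u hu h)
  have hconn : (G.induce ({u}ᶜ : Set V)).Connected := by
    by_contra h; exact hnotcut ⟨hGconn, h⟩
  have hxu : x ∈ ({u}ᶜ : Set V) := by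
    simp only [Set.mem_compl_iff, Set.mem_singleton_iff]
    exact fun h => G.irrefl (h ▸ hux)
  have hvu : v ∈ ({u}ᶜ : Set V) := by
    simp only [Set.mem_compl_iff, Set.mem_singleton_iff]
    exact fun h => huv h.symm
  obtain ⟨w0⟩ := hconn.preconnected ⟨x, hxu⟩ ⟨v, hvu⟩
  -- map to a walk in G avoiding u
  let f : G.induce ({u}ᶜ : Set V) →g G := ⟨Subtype.val, fun h => h⟩
  let w1 : G.Walk x v := w0.map f
  have hw1 : ∀ z ∈ w1.support, z ≠ u := by
    intro z hz
    rw [Walk.support_map, List.mem_map] at hz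
    obtain ⟨⟨z', hz'⟩, _, rfl⟩ := hz
    exact hz'
  obtain ⟨w', hw'B, q0, hq0sub, hq0B⟩ := ZF.first_hit w1 hxB hv
  set q := q0.bypass with hqdef
  have hqpath : q.IsPath := q0.bypass_isPath
  have hqsub : ∀ z ∈ q.support, z ∈ q0.support := fun z hz => q0.support_bypass_subset hz
  have hqu : ∀ z ∈ q.support, z ≠ u := fun z hz => hw1 z (hq0sub z (hqsub z hz))
  have hqB : ∀ z ∈ q.support, z ∈ B → z = w' := fun z hz => hq0B z (hqsub z hz)
  have hw'u : w' ≠ u := hqu w' q.end_mem_support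
  have hxq : x ∈ q.support := q.start_mem_support
  have hw'q : w' ∈ q.support := q.end_mem_support
  set C : Set V := B ∪ {z | z ∈ q.support} with hCdef
  have hBC : B ⊆ C := Set.subset_union_left
  have hqC : ∀ z ∈ q.support, z ∈ C := fun z hz => Or.inr hz
  have huC : u ∈ C := hBC hu
  have hw'C : w' ∈ C := hBC hw'B
  -- connectivity helper: from any z ∈ C, walk to u inside C
  have hCconn : (G.induce C).Connected := by
    apply ZF.connected_anchor huC
    intro z hz
    rcases hz with hzB | hzq
    · obtain ⟨w, hw⟩ := ZF.clique_walk hclq hzB hu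
      exact ⟨w, fun y hy => (hw y hy).elim (fun h => h ▸ hBC hzB) (fun h => h ▸ huC)⟩
    · obtain ⟨w2, hw2⟩ := ZF.clique_walk hclq hw'B hu
      refine ⟨(q.dropUntil z hzq).append w2, ?_⟩
      intro y hy
      rw [Walk.mem_support_append_iff] at hy
      rcases hy with hy | hy
      · exact hqC y (q.support_dropUntil_subset hzq hy)
      · exact (hw2 y hy).elim (fun h => h ▸ hw'C) (fun h => h ▸ huC)
  -- no cut vertex in C
  have hCncv : G.IsConnectedNoCutVertexSet C := by
    refine ⟨hCconn, ?_⟩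
    intro y hyC
    right
    by_cases hyu : y = u
    · -- remove u; anchor w'
      subst hyu
      have hw'm : w' ∈ C \ {y} := ⟨hw'C, hw'u⟩
      apply ZF.connected_anchor hw'm
      intro z hz
      obtain ⟨hzC, hzy⟩ := hz
      rcases hzC with hzB | hzq
      · obtain ⟨w, hw⟩ := ZF.clique_walk hclq hzB hw'B
        refine ⟨w, fun t ht => ?_⟩
        rcases hw t ht with rfl | rfl
        · exact ⟨hBC hzB, hzy⟩
        · exact ⟨hw'C, hw'u⟩
      · refine ⟨q.dropUntil z hzq, fun t ht => ?_⟩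
        have htq := q.support_dropUntil_subset hzq ht
        exact ⟨hqC t htq, hqu t htq⟩
    · -- remove y ≠ u; anchor u
      have hum : u ∈ C \ {y} := ⟨huC, fun h => hyu (h.symm ▸ rfl)⟩
      have huy : u ≠ y := fun h => hyu h.symm
      apply ZF.connected_anchor hum
      intro z hz
      obtain ⟨hzC, hzy'⟩ := hz
      have hzy : z ≠ y := hzy'
      rcases hzC with hzB | hzq
      · obtain ⟨w, hw⟩ := ZF.clique_walk hclq hzB hu
        refine ⟨w, fun t ht => ?_⟩
        rcases hw t ht with rfl | rfl
        · exact ⟨hBC hzB, hzy⟩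
        · exact ⟨huC, huy⟩
      · by_cases hyd : y ∈ (q.dropUntil z hzq).support
        · -- y is after z on q; go backwards z → x, then x—u
          have hyt : y ∉ (q.takeUntil z hzq).support :=
            ZF.not_mem_takeUntil hqpath hzq (Ne.symm hzy) hyd
          refine ⟨((q.takeUntil z hzq).reverse).append (Walk.cons hux.symm Walk.nil), ?_⟩
          intro t ht
          rw [Walk.mem_support_append_iff] at ht
          rcases ht with ht | ht
          · rw [Walk.support_reverse, List.mem_reverse] at ht
            have htq := q.support_takeUntil_subset hzq ht
            exact ⟨hqC t htq, fun h => hyt (h ▸ ht)⟩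
          · simp only [Walk.support_cons, Walk.support_nil, List.mem_cons,
              List.not_mem_nil, or_false] at ht
            rcases ht with rfl | rfl
            · exact ⟨hqC t hxq, fun h => hyt (h ▸ (q.takeUntil z hzq).start_mem_support)⟩
            · exact ⟨huC, huy⟩
        · -- y is before z on q; go z → w', then w'—u
          obtain ⟨w2, hw2⟩ := ZF.clique_walk hclq hw'B hu
          refine ⟨(q.dropUntil z hzq).append w2, ?_⟩
          intro t ht
          rw [Walk.mem_support_append_iff] at ht
          rcases ht with ht | ht
          · have htq := q.support_dropUntil_subset hzq ht
            exact ⟨hqC t htq, fun h => hyd (h ▸ ht)⟩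
          · rcases hw2 t ht with h | h
            · refine ⟨by rw [h]; exact hw'C, fun h2 => hyd ?_⟩
              rw [← h2, h]
              exact (q.dropUntil z hzq).end_mem_support
            · exact ⟨by rw [h]; exact huC, by rw [h]; exact huy⟩
  have hBeq : B = C := hB.2 C hBC hCncv
  exact hxB (hBeq ▸ (Or.inr hxq : x ∈ C))


lemma ZF.zf_exists {V' : Type*} (G : SimpleGraph V') :
    ∃ S : Set V', S.ncard = G.zeroForcingNumber ∧ G.IsZeroForcingSet S := by
  have hne : {n | ∃ S : Set V', S.ncard = n ∧ G.IsZeroForcingSet S}.Nonempty :=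
    ⟨(Set.univ : Set V').ncard, Set.univ, rfl, fun v => SimpleGraph.Forced.init v trivial⟩
  obtain ⟨S, h1, h2⟩ := Nat.sInf_mem hne
  exact ⟨S, h1, h2⟩

lemma ZF.zf_le {V' : Type*} (G : SimpleGraph V') {S : Set V'} (h : G.IsZeroForcingSet S) :
    G.zeroForcingNumber ≤ S.ncard :=
  Nat.sInf_le ⟨S, rfl, h⟩


end ZFAux

/-- Let `G` be a clique tree in which every block has at least 3
vertices, `v` a cut vertex contained in a pendant block `B ≅ K_m` (`m ≥ 3`), and
`G₁ = G - (K_m \ {v})`.  Then `Z(G₁ ⊕_v K_m) = Z(G₁) + Z(K_m) - 1`, i.e.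
`Z(G) = Z(G₁) + m - 2`. -/
theorem zeroForcing_pendant_block {V : Type*} [Fintype V] (G : SimpleGraph V)
    (hG : G.IsCliqueTree)
    (hblocks : ∀ B : Set V, G.IsBlock B → 3 ≤ B.ncard)
    (m : ℕ) (hm : 3 ≤ m)
    (B : Set V) (hB : G.IsBlock B) (hBcard : B.ncard = m)
    (v : V) (hv : v ∈ B) (hcut : G.IsCutVertex v)
    (hpendant : ∀ u ∈ B, G.IsCutVertex u → u = v) :
    G.zeroForcingNumber = (G.induce ((B \ {v})ᶜ)).zeroForcingNumber + m - 2 := by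
  classical
  set A : Set V := B \ {v} with hAdef
  set W : Set V := Aᶜ with hWdef
  have hvW : v ∈ W := fun hc => hc.2 rfl
  have hclq : G.IsClique B := hG.2 B hB
  have S1 : ∀ u ∈ B, u ≠ v → ∀ x, G.Adj u x → x ∈ B := by
    intro u hu huv x hux
    exact ZF.nbhd_in_block hG.1 hB hclq hv hpendant hu huv hux
  have hmemA : ∀ {z : V}, z ∈ A ↔ z ∈ B ∧ z ≠ v := by
    intro z; simp [hAdef]
  have hmemW : ∀ {z : V}, z ∈ W ↔ z ∉ A := by
    intro z; simp [hWdef]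
  have hWadj : ∀ {z y : V}, z ∈ W → z ≠ v → G.Adj z y → y ∈ W := by
    intro z y hz hzv hzy
    rw [hmemW]
    intro hyA
    have hzB : z ∈ B := S1 y (hmemA.mp hyA).1 (hmemA.mp hyA).2 z hzy.symm
    exact (hmemW.mp hz) (hmemA.mpr ⟨hzB, hzv⟩)
  have hAcard : A.ncard = m - 1 := by
    rw [hAdef, Set.ncard_diff_singleton_of_mem hv, hBcard]
  have hAne : A.Nonempty := Set.nonempty_of_ncard_ne_zero (by omega)
  have hthird : ∀ w₀ : V, ∃ u' ∈ B, u' ≠ v ∧ u' ≠ w₀ := by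
    intro w₀
    have h2 : (B \ {v, w₀}).Nonempty := by
      rw [Set.nonempty_iff_ne_empty]
      intro h
      have hsub : B ⊆ {v, w₀} := by
        intro z hz
        by_contra hzn
        have hmem : z ∈ B \ {v, w₀} := ⟨hz, hzn⟩
        rw [h] at hmem
        exact hmem
      have h4 := Set.ncard_le_ncard hsub (Set.toFinite _)
      have h3 : ({v, w₀} : Set V).ncard ≤ 2 := by
        refine le_trans (Set.ncard_insert_le _ _) ?_
        simp [Set.ncard_singleton]
      omega
    obtain ⟨u', hu'⟩ := h2
    refine ⟨u', hu'.1, ?_, ?_⟩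
    · exact fun h => hu'.2 (by simp [h])
    · exact fun h => hu'.2 (by simp [h])
  -- Upper bound
  have hub : G.zeroForcingNumber ≤ (G.induce W).zeroForcingNumber + (m - 2) := by
    obtain ⟨S₁, hS₁card, hS₁⟩ := ZF.zf_exists (G.induce W)
    obtain ⟨w₀, hw₀A⟩ := hAne
    set S : Set V := (Subtype.val '' S₁) ∪ (A \ {w₀}) with hSdef
    have hA_sub_S : A \ {w₀} ⊆ S := Set.subset_union_right
    have hforceA : G.Forced S v → ∀ a ∈ A, G.Forced S a := by
      intro hfv
      obtain ⟨u', hu'B, hu'v, hu'w⟩ := hthird w₀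
      have hw0 : G.Forced S w₀ := by
        refine SimpleGraph.Forced.force u' w₀ (SimpleGraph.Forced.init u' ?_) ?_ ?_
        · exact hA_sub_S ⟨hmemA.mpr ⟨hu'B, hu'v⟩, hu'w⟩
        · exact hclq hu'B (hmemA.mp hw₀A).1 hu'w
        · intro y hy hyw
          have hyB : y ∈ B := S1 u' hu'B hu'v y hy
          by_cases hyv : y = v
          · exact hyv ▸ hfv
          · exact SimpleGraph.Forced.init y (hA_sub_S ⟨hmemA.mpr ⟨hyB, hyv⟩, hyw⟩)
      intro a ha
      by_cases haw : a = w₀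
      · exact haw ▸ hw0
      · exact SimpleGraph.Forced.init a (hA_sub_S ⟨ha, haw⟩)
    have hmain : ∀ (x : ↥W), (G.induce W).Forced S₁ x → G.Forced S (↑x : V) := by
      intro x hx
      induction hx with
      | init y hy => exact SimpleGraph.Forced.init _ (Or.inl ⟨y, hy, rfl⟩)
      | force u w hu hadj hothers ihu ihothers =>
        have hadjG : G.Adj ↑u ↑w := hadj
        by_cases huv : (↑u : V) = v
        · have hfv : G.Forced S v := huv ▸ ihu
          have hAf := hforceA hfv
          refine SimpleGraph.Forced.force v ↑w hfv (huv ▸ hadjG) ?_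
          intro y hy hyw
          by_cases hyA : y ∈ A
          · exact hAf y hyA
          · have hyW : y ∈ W := hmemW.mpr hyA
            have hadj2 : (G.induce W).Adj u ⟨y, hyW⟩ := show G.Adj ↑u y from huv.symm ▸ hy
            exact ihothers ⟨y, hyW⟩ hadj2 (fun hc => hyw (congrArg Subtype.val hc))
        · refine SimpleGraph.Forced.force (G := G) ↑u ↑w ihu hadjG ?_
          intro y hy hyw
          have hyW : y ∈ W := hWadj u.2 huv hy
          have hadj2 : (G.induce W).Adj u ⟨y, hyW⟩ := show G.Adj ↑u y from hy
          exact ihothers ⟨y, hyW⟩ hadj2 (fun hc => hyw (congrArg Subtype.val hc))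
    have hSzfs : G.IsZeroForcingSet S := by
      intro z
      by_cases hz : z ∈ W
      · exact hmain ⟨z, hz⟩ (hS₁ ⟨z, hz⟩)
      · have hzA : z ∈ A := not_not.mp (fun h => hz (hmemW.mpr h))
        have hfv : G.Forced S v := hmain ⟨v, hvW⟩ (hS₁ ⟨v, hvW⟩)
        exact hforceA hfv z hzA
    have hScard : S.ncard ≤ S₁.ncard + (m - 2) := by
      have h1 : S.ncard ≤ (Subtype.val '' S₁).ncard + (A \ {w₀}).ncard :=
        Set.ncard_union_le _ _
      have h2 : (Subtype.val '' S₁).ncard = S₁.ncard :=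
        Set.ncard_image_of_injective _ Subtype.val_injective
      have h3 : (A \ {w₀}).ncard = m - 2 := by
        rw [Set.ncard_diff_singleton_of_mem hw₀A, hAcard]
        omega
      omega
    have h4 := ZF.zf_le G hSzfs
    omega
  -- Lower bound
  have hlb : (G.induce W).zeroForcingNumber + (m - 2) ≤ G.zeroForcingNumber := by
    obtain ⟨S, hScard, hS⟩ := ZF.zf_exists G
    set T : Set ↥W := {y : ↥W | (↑y : V) ∈ S} with hTdef
    have hTcard : T.ncard = (S ∩ W).ncard := by
      have himg : Subtype.val '' T = S ∩ W := by
        ext z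
        constructor
        · rintro ⟨⟨z', hz'⟩, hz'S, rfl⟩
          exact ⟨hz'S, hz'⟩
        · rintro ⟨hzS, hzW⟩
          exact ⟨⟨z, hzW⟩, hzS, rfl⟩
      rw [← himg, Set.ncard_image_of_injective _ Subtype.val_injective]
    have hdisj : Disjoint (S ∩ A) (S ∩ W) := by
      rw [Set.disjoint_left]
      intro a ha hb
      exact (hmemW.mp hb.2) ha.2
    have hsplit : (S ∩ A).ncard + (S ∩ W).ncard = S.ncard := by
      rw [← Set.ncard_union_eq hdisj (Set.toFinite _) (Set.toFinite _),
        ← Set.inter_union_distrib_left]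
      have hAW : A ∪ W = Set.univ := Set.union_compl_self A
      rw [hAW, Set.inter_univ]
    by_cases hAS : A ⊆ S
    · have hSAcard : (S ∩ A).ncard = m - 1 := by
        rw [Set.inter_eq_self_of_subset_right hAS, hAcard]
      set T' : Set ↥W := insert ⟨v, hvW⟩ T with hT'def
      have hvT' : (⟨v, hvW⟩ : ↥W) ∈ T' := Set.mem_insert _ _
      have hTT' : T ⊆ T' := Set.subset_insert _ _
      have hQ : ∀ x, G.Forced S x →
          x ∈ A ∨ ∃ hx : x ∈ W, (G.induce W).Forced T' ⟨x, hx⟩ := by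
        intro x hx
        induction hx with
        | init y hy =>
          by_cases hyA : y ∈ A
          · exact Or.inl hyA
          · exact Or.inr ⟨hmemW.mpr hyA, SimpleGraph.Forced.init _ (hTT' hy)⟩
        | force u w hu hadj hothers ihu ihothers =>
          by_cases hwA : w ∈ A
          · exact Or.inl hwA
          · have hwW : w ∈ W := hmemW.mpr hwA
            by_cases hwv : w = v
            · subst hwv
              exact Or.inr ⟨hwW, SimpleGraph.Forced.init _ hvT'⟩
            · have huA : u ∉ A := fun huA' =>
                hwA (hmemA.mpr ⟨S1 u (hmemA.mp huA').1 (hmemA.mp huA').2 w hadj, hwv⟩)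
              have huW : u ∈ W := hmemW.mpr huA
              have huf : (G.induce W).Forced T' ⟨u, huW⟩ := by
                rcases ihu with h | ⟨h1, h2⟩
                · exact absurd h huA
                · exact h2
              have hadjI : (G.induce W).Adj ⟨u, huW⟩ ⟨w, hwW⟩ := hadj
              refine Or.inr ⟨hwW, SimpleGraph.Forced.force (G := G.induce W) ⟨u, huW⟩ ⟨w, hwW⟩ huf hadjI ?_⟩
              intro y hyadj hyne
              have hyadjG : G.Adj u ↑y := hyadj
              rcases ihothers ↑y hyadjG (fun hc => hyne (Subtype.ext hc)) with h | ⟨h1, h2⟩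
              · exact absurd h (hmemW.mp y.2)
              · exact h2
      have hT'zfs : (G.induce W).IsZeroForcingSet T' := by
        intro x
        rcases hQ ↑x (hS ↑x) with h | ⟨h1, h2⟩
        · exact absurd h (hmemW.mp x.2)
        · exact h2
      have hZ1 := ZF.zf_le (G.induce W) hT'zfs
      have hT'card : T'.ncard ≤ T.ncard + 1 := Set.ncard_insert_le _ _
      omega
    · rcases Set.not_subset.mp hAS with ⟨w₀, hw₀A, hw₀S⟩
      have hvw₀ : v ≠ w₀ := fun h => (hmemA.mp hw₀A).2 h.symm
      have hL1 : ∀ w ∈ A, w ∉ S → w = w₀ := by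
        intro w hwA hwS
        by_contra hne
        have key : ∀ x, G.Forced S x → x ≠ w ∧ x ≠ w₀ := by
          intro x hx
          induction hx with
          | init y hy => exact ⟨fun h => hwS (h ▸ hy), fun h => hw₀S (h ▸ hy)⟩
          | force u t hu hadj hothers ihu ihothers =>
            constructor
            · intro ht
              subst ht
              have huB : u ∈ B := S1 t (hmemA.mp hwA).1 (hmemA.mp hwA).2 u hadj.symm
              by_cases huw0 : u = w₀
              · exact ihu.2 huw0
              · have hadj0 : G.Adj u w₀ := hclq huB (hmemA.mp hw₀A).1 huw0
                exact (ihothers w₀ hadj0 (fun h => hne h.symm)).2 rfl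
            · intro ht
              subst ht
              have huB : u ∈ B := S1 t (hmemA.mp hw₀A).1 (hmemA.mp hw₀A).2 u hadj.symm
              by_cases huw : u = w
              · exact ihu.1 huw
              · have hadjw : G.Adj u w := hclq huB (hmemA.mp hwA).1 huw
                exact (ihothers w hadjw hne).1 rfl
        exact (key w (hS w)).1 rfl
      have hSA : S ∩ A = A \ {w₀} := by
        ext z
        constructor
        · rintro ⟨hzS, hzA⟩
          exact ⟨hzA, fun h => hw₀S (h ▸ hzS)⟩
        · rintro ⟨hzA, hzw⟩
          refine ⟨?_, hzA⟩
          by_contra hzS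
          exact hzw (hL1 z hzA hzS)
      have hSAcard : (S ∩ A).ncard = m - 2 := by
        rw [hSA, Set.ncard_diff_singleton_of_mem hw₀A, hAcard]
        omega
      have hP : ∀ x, G.Forced S x →
          (x ∈ A ∧ x ≠ w₀) ∨ (x = w₀ ∧ (G.induce W).Forced T ⟨v, hvW⟩) ∨
          (∃ hx : x ∈ W, (G.induce W).Forced T ⟨x, hx⟩) := by
        intro x hx
        induction hx with
        | init y hy =>
          by_cases hyA : y ∈ A
          · exact Or.inl ⟨hyA, fun h => hw₀S (h ▸ hy)⟩
          · exact Or.inr (Or.inr ⟨hmemW.mpr hyA, SimpleGraph.Forced.init _ hy⟩)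
        | force u w hu hadj hothers ihu ihothers =>
          by_cases hwA : w ∈ A
          · by_cases hww0 : w = w₀
            · subst hww0
              refine Or.inr (Or.inl ⟨rfl, ?_⟩)
              have huB : u ∈ B := S1 w (hmemA.mp hwA).1 (hmemA.mp hwA).2 u hadj.symm
              by_cases huv2 : u = v
              · subst huv2
                rcases ihu with ⟨h1, _⟩ | ⟨h1, h2⟩ | ⟨h1, h2⟩
                · exact absurd rfl (hmemA.mp h1).2
                · exact absurd h1 hvw₀
                · exact h2
              · have hadjv : G.Adj u v := hclq huB hv huv2
                rcases ihothers v hadjv hvw₀ with ⟨h1, _⟩ | ⟨h1, _⟩ | ⟨h1, h2⟩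
                · exact absurd rfl (hmemA.mp h1).2
                · exact absurd h1 hvw₀
                · exact h2
            · exact Or.inl ⟨hwA, hww0⟩
          · have hwW : w ∈ W := hmemW.mpr hwA
            by_cases huA : u ∈ A
            · have hwB : w ∈ B := S1 u (hmemA.mp huA).1 (hmemA.mp huA).2 w hadj
              have hwv : w = v := by
                by_contra hc
                exact hwA (hmemA.mpr ⟨hwB, hc⟩)
              subst hwv
              refine Or.inr (Or.inr ⟨hwW, ?_⟩)
              by_cases huw0 : u = w₀
              · subst huw0
                rcases ihu with ⟨_, h2⟩ | ⟨h1, h2⟩ | ⟨h1, h2⟩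
                · exact absurd rfl h2
                · exact h2
                · exact absurd hw₀A (hmemW.mp h1)
              · have hadj0 : G.Adj u w₀ := hclq (hmemA.mp huA).1 (hmemA.mp hw₀A).1 huw0
                rcases ihothers w₀ hadj0 (Ne.symm hvw₀) with ⟨_, h2⟩ | ⟨h1, h2⟩ | ⟨h1, h2⟩
                · exact absurd rfl h2
                · exact h2
                · exact absurd hw₀A (hmemW.mp h1)
            · have huW : u ∈ W := hmemW.mpr huA
              have huf : (G.induce W).Forced T ⟨u, huW⟩ := by
                rcases ihu with ⟨h1, _⟩ | ⟨h1, h2⟩ | ⟨h1, h2⟩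
                · exact absurd h1 huA
                · exact absurd (h1.symm ▸ hw₀A) huA
                · exact h2
              have hadjI : (G.induce W).Adj ⟨u, huW⟩ ⟨w, hwW⟩ := hadj
              refine Or.inr (Or.inr ⟨hwW,
                SimpleGraph.Forced.force (G := G.induce W) ⟨u, huW⟩ ⟨w, hwW⟩ huf hadjI ?_⟩)
              intro y hyadj hyne
              have hyadjG : G.Adj u ↑y := hyadj
              rcases ihothers ↑y hyadjG (fun hc => hyne (Subtype.ext hc)) with
                ⟨h1, _⟩ | ⟨h1, _⟩ | ⟨h1, h2⟩
              · exact absurd h1 (hmemW.mp y.2)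
              · exact absurd (h1.symm ▸ hw₀A) (hmemW.mp y.2)
              · exact h2
      have hTzfs : (G.induce W).IsZeroForcingSet T := by
        intro x
        rcases hP ↑x (hS ↑x) with ⟨h1, _⟩ | ⟨h1, _⟩ | ⟨h1, h2⟩
        · exact absurd h1 (hmemW.mp x.2)
        · exact absurd (h1.symm ▸ hw₀A) (hmemW.mp x.2)
        · exact h2
      have hZ1 := ZF.zf_le (G.induce W) hTzfs
      omega
  omega
end

section
/- Let G be a clique tree with b blocks B₁, B₂, …, B_b, where each block has at least 3 vertices. Then the zero forcing number of G satisfies Z(G) = Σ_{i=1}^{b} Z(B_i) − Σ_{v ∈ V(G)} (bi_G(v) − 1), where bi_G(v) denotes the number of blocks of G containing v. -/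
open Classical

namespace CTAux
open SimpleGraph
open SimpleGraph

variable {V : Type*} (G : SimpleGraph V)

/-- reachability inside a vertex set -/
def RIn (A : Set V) : V → V → Prop :=
  Relation.ReflTransGen (fun a b => G.Adj a b ∧ a ∈ A ∧ b ∈ A)

variable {G}

lemma RIn.mono {A C : Set V} (h : A ⊆ C) {x y : V} (hxy : RIn G A x y) : RIn G C x y :=
  Relation.ReflTransGen.mono (r := fun a b => G.Adj a b ∧ a ∈ A ∧ b ∈ A)
    (p := fun a b => G.Adj a b ∧ a ∈ C ∧ b ∈ C) (fun a b hab => ⟨hab.1, h hab.2.1, h hab.2.2⟩) x y hxy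

lemma RIn.symm {A : Set V} {x y : V} (hxy : RIn G A x y) : RIn G A y x := by
  have : Symmetric (fun a b => G.Adj a b ∧ a ∈ A ∧ b ∈ A) :=
    fun a b hab => ⟨hab.1.symm, hab.2.2, hab.2.1⟩
  exact (@Relation.ReflTransGen.stdSymm V _ ⟨fun a b h => this h⟩).symm _ _ hxy

lemma rIn_of_reachable {A : Set V} {x y : ↥A} (h : (G.induce A).Reachable x y) :
    RIn G A (x : V) (y : V) := by
  obtain ⟨p⟩ := h
  induction p with
  | nil => exact Relation.ReflTransGen.refl
  | cons h p ih =>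
      exact Relation.ReflTransGen.head ⟨h, (by simp), (by simp)⟩ ih

lemma reachable_of_rIn {A : Set V} {x y : V} (hx : x ∈ A) (h : RIn G A x y) :
    ∀ hy : y ∈ A, (G.induce A).Reachable ⟨x, hx⟩ ⟨y, hy⟩ := by
  induction h with
  | refl => intro hy; rfl
  | tail hab hbc ih =>
      intro hy
      exact (ih hbc.2.1).trans (SimpleGraph.Adj.reachable (by exact hbc.1))

lemma induce_connected_iff {A : Set V} :
    (G.induce A).Connected ↔ A.Nonempty ∧ ∀ x ∈ A, ∀ y ∈ A, RIn G A x y := by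
  constructor
  · intro h
    refine ⟨Set.nonempty_coe_sort.mp h.nonempty, fun x hx y hy => ?_⟩
    exact rIn_of_reachable (h.preconnected ⟨x, hx⟩ ⟨y, hy⟩)
  · rintro ⟨⟨a, ha⟩, h⟩
    rw [SimpleGraph.connected_iff]
    refine ⟨fun x y => ?_, ⟨⟨a, ha⟩⟩⟩
    exact reachable_of_rIn x.2 (h x x.2 y y.2) y.2

/-- all vertices on a walk whose support lies in `A` are `RIn A`-related to the start -/
lemma rIn_of_mem_support {A : Set V} {a c : V} (p : G.Walk a c)
    (hsub : ∀ z ∈ p.support, z ∈ A) {y : V} (hy : y ∈ p.support) : RIn G A a y := by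
  induction p with
  | nil => simp at hy; subst hy; exact Relation.ReflTransGen.refl
  | @cons u v w h p ih =>
      rcases List.mem_cons.mp (by simpa using hy) with h1 | h2
      · subst h1; exact Relation.ReflTransGen.refl
      · refine Relation.ReflTransGen.head ⟨h, hsub u (by simp), hsub v (by simp)⟩ ?_
        exact ih (fun z hz => hsub z (by simp [hz])) h2


local notation "CNCVS" => G.IsConnectedNoCutVertexSet

lemma cncvs_singleton (v : V) : CNCVS {v} := by
  constructor
  · exact induce_connected_iff.mpr ⟨⟨v, rfl⟩, by
      rintro x rfl y rfl; exact Relation.ReflTransGen.refl⟩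
  · intro x hx; left; simp at hx; subst hx; simp

lemma cncvs_pair {u v : V} (h : G.Adj u v) : CNCVS {u, v} := by
  have hne := h.ne
  constructor
  · refine induce_connected_iff.mpr ⟨⟨u, by simp⟩, ?_⟩
    have step : RIn G {u, v} u v :=
      Relation.ReflTransGen.single ⟨h, by simp, by simp⟩
    rintro x hx y hy
    rcases hx with rfl | rfl <;> rcases hy with rfl | rfl
    · exact Relation.ReflTransGen.refl
    · exact step
    · exact step.symm
    · exact Relation.ReflTransGen.refl
  · intro x hx
    right
    rcases hx with rfl | rfl
    · have : ({x, v} : Set V) \ {x} = {v} := by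
        ext z; simp only [Set.mem_diff, Set.mem_insert_iff, Set.mem_singleton_iff]
        constructor
        · rintro ⟨h1 | h1, h2⟩ <;> tauto
        · rintro rfl; exact ⟨Or.inr rfl, fun h => hne h.symm⟩
      rw [this]
      exact induce_connected_iff.mpr ⟨⟨v, rfl⟩, by
        rintro a rfl y rfl; exact Relation.ReflTransGen.refl⟩
    · have : ({u, x} : Set V) \ {x} = {u} := by
        ext z
        simp only [Set.mem_diff, Set.mem_insert_iff, Set.mem_singleton_iff]
        constructor
        · rintro ⟨h1 | h1, h2⟩ <;> tauto
        · rintro rfl; exact ⟨Or.inl rfl, fun h => hne h⟩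
      rw [this]
      exact induce_connected_iff.mpr ⟨⟨u, rfl⟩, by
        rintro a rfl y rfl; exact Relation.ReflTransGen.refl⟩

lemma conn_union {A C : Set V} (hA : (G.induce A).Connected) (hC : (G.induce C).Connected)
    (hmeet : (A ∩ C).Nonempty) : (G.induce (A ∪ C)).Connected := by
  rw [induce_connected_iff] at hA hC ⊢
  obtain ⟨m, hmA, hmC⟩ := hmeet
  refine ⟨⟨m, Or.inl hmA⟩, ?_⟩
  have key : ∀ x ∈ A ∪ C, RIn G (A ∪ C) x m := by
    intro x hx
    rcases hx with hx | hx
    · exact (hA.2 x hx m hmA).mono Set.subset_union_left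
    · exact (hC.2 x hx m hmC).mono Set.subset_union_right
  intro x hx y hy
  exact (key x hx).trans (key y hy).symm

lemma cncvs_union {A C : Set V} (hA : CNCVS A) (hC : CNCVS C)
    {x y : V} (hx : x ∈ A ∩ C) (hy : y ∈ A ∩ C) (hne : x ≠ y) : CNCVS (A ∪ C) := by
  constructor
  · exact conn_union hA.1 hC.1 ⟨x, hx⟩
  · intro v hv
    right
    have hAv : (G.induce (A \ {v})).Connected ∨ v ∉ A := by
      by_cases hvA : v ∈ A
      · rcases hA.2 v hvA with h0 | h1
        · exfalso
          have : A ⊆ {v} := by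
            intro z hz; by_contra hz'
            exact (Set.eq_empty_iff_forall_notMem.mp h0 z) ⟨hz, hz'⟩
          rcases (show x = v from this hx.1), (show y = v from this hy.1) with ⟨rfl, h⟩
          exact hne (by rw [← h])
        · exact Or.inl h1
      · exact Or.inr hvA
    have hCv : (G.induce (C \ {v})).Connected ∨ v ∉ C := by
      by_cases hvC : v ∈ C
      · rcases hC.2 v hvC with h0 | h1
        · exfalso
          have : C ⊆ {v} := by
            intro z hz; by_contra hz'
            exact (Set.eq_empty_iff_forall_notMem.mp h0 z) ⟨hz, hz'⟩
          rcases (show x = v from this hx.2), (show y = v from this hy.2) with ⟨rfl, h⟩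
          exact hne (by rw [← h])
        · exact Or.inl h1
      · exact Or.inr hvC
    have hsplit : (A ∪ C) \ {v} = (A \ {v}) ∪ (C \ {v}) := by
      ext z; simp [Set.mem_diff]; tauto
    rw [hsplit]
    -- a common point of the two pieces
    have hm : ∃ m, m ∈ (A \ {v}) ∩ (C \ {v}) := by
      by_cases hxv : x = v
      · refine ⟨y, ⟨hy.1, ?_⟩, ⟨hy.2, ?_⟩⟩ <;>
          · intro h
            have : y = v := Set.mem_singleton_iff.mp h
            exact hne (hxv.trans this.symm)
      · exact ⟨x, ⟨hx.1, by simpa using hxv⟩, ⟨hx.2, by simpa using hxv⟩⟩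
    obtain ⟨m, hm⟩ := hm
    have hA' : (G.induce (A \ {v})).Connected := by
      rcases hAv with h | h
      · exact h
      · have : A \ {v} = A := by
          ext z; simp [Set.mem_diff]; intro hz; rintro rfl; exact h hz
        rw [this]; exact hA.1
    have hC' : (G.induce (C \ {v})).Connected := by
      rcases hCv with h | h
      · exact h
      · have : C \ {v} = C := by
          ext z; simp [Set.mem_diff]; intro hz; rintro rfl; exact h hz
        rw [this]; exact hC.1
    exact conn_union hA' hC' ⟨m, hm⟩

/-- extension of a CNCVS set to a block, finite case -/
lemma exists_block_superset_aux [Fintype V] :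
    ∀ (n : ℕ) (A : Set V), Fintype.card V - A.ncard = n → CNCVS A →
      ∃ D, G.IsBlock D ∧ A ⊆ D := by
  intro n
  induction n using Nat.strong_induction_on with
  | _ n ih =>
    intro A hn hA
    by_cases hmax : ∀ C, A ⊆ C → CNCVS C → A = C
    · exact ⟨A, ⟨hA, hmax⟩, subset_rfl⟩
    · push_neg at hmax
      obtain ⟨C, hAC, hCc, hne⟩ := hmax
      have hlt : A.ncard < C.ncard := by
        refine Set.ncard_lt_ncard ?_ (Set.toFinite C)
        exact ⟨hAC, fun h => hne (le_antisymm hAC h)⟩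
      have hC_le : C.ncard ≤ Fintype.card V := by
        simpa [Set.ncard_univ, Nat.card_eq_fintype_card] using Set.ncard_le_ncard (Set.subset_univ C) (Set.toFinite _)
      obtain ⟨D, hD, hCD⟩ := ih (Fintype.card V - C.ncard) (by omega) C rfl hCc
      exact ⟨D, hD, hAC.trans hCD⟩

lemma exists_block_superset [Fintype V] {A : Set V} (hA : CNCVS A) :
    ∃ D, G.IsBlock D ∧ A ⊆ D :=
  exists_block_superset_aux _ A rfl hA

lemma block_eq_of_two_common {A C : Set V} (hA : G.IsBlock A) (hC : G.IsBlock C)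
    {x y : V} (hx : x ∈ A ∩ C) (hy : y ∈ A ∩ C) (hne : x ≠ y) : A = C := by
  have hu := cncvs_union hA.1 hC.1 hx hy hne
  have h1 := hA.2 (A ∪ C) Set.subset_union_left hu
  have h2 := hC.2 (A ∪ C) Set.subset_union_right hu
  rw [h1, ← h2]

/-! ### Cycles give CNCVS sets -/

lemma walk_cons_decomp {a c : V} (p : G.Walk a c) (h : a ≠ c) :
    ∃ (z : V) (had : G.Adj a z) (q : G.Walk z c), p = SimpleGraph.Walk.cons had q := by
  cases p with
  | nil => exact absurd rfl h
  | cons had q => exact ⟨_, had, q, rfl⟩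

lemma closed_mem_support_iff_tail {w z : V} (c : G.Walk w w) (hne : c ≠ SimpleGraph.Walk.nil) :
    z ∈ c.support ↔ z ∈ c.support.tail := by
  constructor
  · intro h
    rcases (SimpleGraph.Walk.mem_support_iff c).mp h with rfl | h
    · cases c with
      | nil => exact absurd rfl hne
      | cons had q =>
          simp only [SimpleGraph.Walk.support_cons, List.tail_cons]
          exact q.end_mem_support
    · exact h
  · intro h
    rw [SimpleGraph.Walk.mem_support_iff]
    exact Or.inr h

lemma cncvs_cycle_support {v : V} (C : G.Walk v v) (hC : C.IsCycle) :
    CNCVS {z | z ∈ C.support} := by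
  constructor
  · refine induce_connected_iff.mpr ⟨⟨v, C.start_mem_support⟩, ?_⟩
    intro x hx y hy
    exact ((rIn_of_mem_support C (fun z hz => hz) hx).symm).trans
      (rIn_of_mem_support C (fun z hz => hz) hy)
  · intro w hw
    right
    -- rotate the cycle to start at w
    have hw' : w ∈ C.support := hw
    set C' := C.rotate w hw' with hC'def
    have hC' : C'.IsCycle := hC.rotate hw'
    have hsupp : ∀ z, z ∈ C'.support ↔ z ∈ C.support := by
      intro z
      rw [closed_mem_support_iff_tail C' hC'.ne_nil, closed_mem_support_iff_tail C hC.ne_nil]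
      exact (SimpleGraph.Walk.support_rotate C w hw').perm.mem_iff
    -- decompose C' = cons h q
    obtain ⟨z, hadj, q, hq⟩ : ∃ (z : V) (had : G.Adj w z) (q : G.Walk z w),
        C' = SimpleGraph.Walk.cons had q := by
      cases hcc : C' with
      | nil => rw [hcc] at hC'; exact absurd rfl hC'.ne_nil
      | cons had q => exact ⟨_, had, q, rfl⟩
    have hqpath : q.IsPath := by
      have := hC'.2
      rw [hq] at this
      rw [SimpleGraph.Walk.isPath_def]
      simpa using this
    -- reverse and decompose again
    have hwz : w ≠ z := hadj.ne
    obtain ⟨c, hadj2, s, hs⟩ := walk_cons_decomp q.reverse hwz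
    have hspath : s.IsPath ∧ w ∉ s.support := by
      have : q.reverse.IsPath := hqpath.reverse
      rw [hs, SimpleGraph.Walk.cons_isPath_iff] at this
      exact this
    have hset : {z' | z' ∈ C.support} \ {w} = {z' | z' ∈ s.support} := by
      ext t
      simp only [Set.mem_diff, Set.mem_setOf_eq, Set.mem_singleton_iff]
      constructor
      · rintro ⟨ht, htw⟩
        rw [← hsupp] at ht
        rw [hq] at ht
        simp only [SimpleGraph.Walk.support_cons, List.mem_cons] at ht
        rcases ht with rfl | ht
        · exact absurd rfl htw
        · have : t ∈ q.reverse.support := by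
            rwa [SimpleGraph.Walk.support_reverse, List.mem_reverse]
          rw [hs] at this
          simp only [SimpleGraph.Walk.support_cons, List.mem_cons] at this
          rcases this with rfl | this
          · exact absurd rfl htw
          · exact this
      · intro ht
        have htw : t ≠ w := fun h => hspath.2 (h ▸ ht)
        refine ⟨?_, htw⟩
        rw [← hsupp, hq]
        have : t ∈ q.reverse.support := by
          rw [hs]; simp [ht]
        rw [SimpleGraph.Walk.support_reverse, List.mem_reverse] at this
        simp [this]
    rw [hset]
    refine induce_connected_iff.mpr ⟨⟨c, s.start_mem_support⟩, ?_⟩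
    intro x hx y hy
    exact ((rIn_of_mem_support s (fun t ht => ht) hx).symm).trans
      (rIn_of_mem_support s (fun t ht => ht) hy)

/-! ### distance lemmas -/

lemma exists_path_length_dist (hconn : G.Connected) (r x : V) :
    ∃ p : G.Walk r x, p.IsPath ∧ p.length = G.dist r x := by
  obtain ⟨p, hp⟩ := hconn.exists_walk_length_eq_dist r x
  refine ⟨p.bypass, p.bypass_isPath, le_antisymm ?_ (G.dist_le _)⟩
  calc p.bypass.length ≤ p.length := SimpleGraph.Walk.length_bypass_le p
  _ = G.dist r x := hp

lemma dist_le_of_adj (hconn : G.Connected) {r x y : V} (h : G.Adj x y) :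
    G.dist r y ≤ G.dist r x + 1 := by
  obtain ⟨p, _, hl⟩ := exists_path_length_dist hconn r x
  calc G.dist r y ≤ (p.concat h).length := G.dist_le _
  _ = p.length + 1 := SimpleGraph.Walk.length_concat p h
  _ = G.dist r x + 1 := by rw [hl]

lemma dist_le_of_mem_support {r x z : V} (p : G.Walk r x) (hz : z ∈ p.support) :
    G.dist r z ≤ p.length := by
  calc G.dist r z ≤ (p.takeUntil z hz).length := G.dist_le _
  _ ≤ p.length := SimpleGraph.Walk.length_takeUntil_le p hz

lemma dist_lt_of_mem_support {r x z : V} (p : G.Walk r x) (hz : z ∈ p.support)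
    (hne : z ≠ x) : G.dist r z < p.length := by
  have hspec := p.take_spec hz
  have hlen : (p.takeUntil z hz).length + (p.dropUntil z hz).length = p.length := by
    rw [← SimpleGraph.Walk.length_append, hspec]
  have hpos : 0 < (p.dropUntil z hz).length := by
    rcases Nat.eq_zero_or_pos (p.dropUntil z hz).length with h0 | h
    · exact absurd (SimpleGraph.Walk.eq_of_length_eq_zero h0) hne
    · exact h
  have := G.dist_le (p.takeUntil z hz)
  omega

lemma eq_of_dist_eq_zero (hconn : G.Connected) {r x : V} (h : G.dist r x = 0) : r = x := by
  obtain ⟨p, _, hl⟩ := exists_path_length_dist hconn r x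
  exact SimpleGraph.Walk.eq_of_length_eq_zero (hl.trans h)

/-! ### the cycle-to-block tool -/

lemma exists_block_of_walk_avoiding [Fintype V] {x y : V} (hxy : G.Adj x y)
    (W : G.Walk x y) (hW : s(x, y) ∉ W.edges) :
    ∃ (D : Set V) (z : V), G.IsBlock D ∧ x ∈ D ∧ y ∈ D ∧ z ∈ D ∧ G.Adj x z ∧
      s(x, z) ∈ W.edges := by
  have hne : x ≠ y := hxy.ne
  set p := W.bypass with hpdef
  have hp : p.IsPath := W.bypass_isPath
  have hpe : p.edges ⊆ W.edges := W.edges_bypass_subset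
  have hpxy : s(x, y) ∉ p.edges := fun h => hW (hpe h)
  set C := SimpleGraph.Walk.cons hxy.symm p with hCdef
  have hC : C.IsCycle := by
    rw [hCdef, SimpleGraph.Walk.cons_isCycle_iff]
    refine ⟨hp, fun h => hpxy ?_⟩
    rwa [Sym2.eq_swap] at h
  obtain ⟨D, hD, hsub⟩ := exists_block_superset (cncvs_cycle_support C hC)
  have hsupp : ∀ t, t ∈ C.support → t ∈ D := fun t ht => hsub ht
  obtain ⟨z, hadj, q, hq⟩ := walk_cons_decomp p hne
  refine ⟨D, z, hD, ?_, ?_, ?_, hadj, hpe (by rw [hq]; simp)⟩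
  · exact hsupp x (by rw [hCdef]; simp)
  · exact hsupp y (by rw [hCdef]; simp)
  · refine hsupp z ?_
    rw [hCdef]
    simp only [SimpleGraph.Walk.support_cons, List.mem_cons]
    right
    rw [hq]
    simp

/-! ### structural facts about clique trees -/

section Structure

variable [Fintype V] {b : ℕ} {B : Fin b → Set V}
  (hG : G.IsCliqueTree) (hinj : Function.Injective B)
  (hblock : ∀ i, G.IsBlock (B i))
  {r : V} {c : Fin b → V}
  (hc : ∀ i, c i ∈ B i ∧ ∀ x ∈ B i, G.dist r (c i) ≤ G.dist r x)

include hG hblock hc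

lemma closest_unique {i : Fin b} {x : V} (hx : x ∈ B i)
    (hdx : G.dist r x = G.dist r (c i)) : x = c i := by
  by_contra hne
  have hconn := hG.1
  set d := G.dist r (c i) with hddef
  -- d ≥ 1
  have hd1 : 1 ≤ d := by
    rcases Nat.eq_zero_or_pos d with h0 | h
    · exfalso
      have hrc : r = c i := eq_of_dist_eq_zero hconn h0
      have hrx : r = x := eq_of_dist_eq_zero hconn (hdx.trans h0)
      exact hne (hrx ▸ hrc ▸ rfl)
    · exact h
  have hxr : x ≠ r := by
    rintro rfl
    rw [SimpleGraph.dist_self] at hdx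
    omega
  obtain ⟨P, hPpath, hPlen⟩ := exists_path_length_dist hconn r x
  obtain ⟨Q, hQpath, hQlen⟩ := exists_path_length_dist hconn r (c i)
  rw [hdx] at hPlen
  -- decompose P.reverse
  obtain ⟨x', h1, P₂, hP₂⟩ := walk_cons_decomp P.reverse hxr
  have hxP₂ : x ∉ P₂.support := by
    have : P.reverse.IsPath := hPpath.reverse
    rw [hP₂, SimpleGraph.Walk.cons_isPath_iff] at this
    exact this.2
  have hP₂len : P₂.length = d - 1 := by
    have : P.reverse.length = d := by rw [SimpleGraph.Walk.length_reverse, hPlen]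
    rw [hP₂] at this
    simp only [SimpleGraph.Walk.length_cons] at this
    omega
  have hx'dist : G.dist r x' ≤ d - 1 := by
    have := G.dist_le P₂.reverse
    rwa [SimpleGraph.Walk.length_reverse, hP₂len] at this
  -- adjacency between x and c i
  have hadj : G.Adj x (c i) := hG.2 (B i) (hblock i) hx (hc i).1 hne
  -- the walk W : x ⇝ c i
  set W := SimpleGraph.Walk.cons h1 (P₂.append Q) with hWdef
  have hxQ : x ∉ Q.support := by
    intro hmem
    have hlt : G.dist r x < Q.length := dist_lt_of_mem_support Q hmem hne
    have e1 : Q.length = G.dist r (c i) := hQlen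
    have e2 : G.dist r x = d := hdx
    have e3 : d = G.dist r (c i) := hddef
    omega
  have hWe : s(x, c i) ∉ W.edges := by
    rw [hWdef]
    simp only [SimpleGraph.Walk.edges_cons, SimpleGraph.Walk.edges_append, List.mem_cons,
      List.mem_append]
    rintro (h | h | h)
    · rcases Sym2.eq_iff.mp h with ⟨-, h2⟩ | ⟨h2, h3⟩
      · -- c i = x'
        have : G.dist r (c i) ≤ d - 1 := h2 ▸ hx'dist
        have e3 : d = G.dist r (c i) := hddef
        omega
      · exact hne h3.symm
    · exact hxP₂ (P₂.fst_mem_support_of_mem_edges h)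
    · exact hxQ (Q.fst_mem_support_of_mem_edges h)
  obtain ⟨D, z, hD, hxD, hcD, hzD, hxza, hxze⟩ := exists_block_of_walk_avoiding hadj W hWe
  -- D = B i
  have hDB : D = B i := block_eq_of_two_common hD (hblock i) ⟨hxD, hx⟩ ⟨hcD, (hc i).1⟩ hne
  -- z = x'
  have hzx' : z = x' := by
    rw [hWdef] at hxze
    simp only [SimpleGraph.Walk.edges_cons, SimpleGraph.Walk.edges_append, List.mem_cons,
      List.mem_append] at hxze
    rcases hxze with h | h | h
    · rcases Sym2.eq_iff.mp h with ⟨-, h2⟩ | ⟨h2, -⟩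
      · exact h2
      · exact absurd h2 h1.ne
    · exact absurd (P₂.fst_mem_support_of_mem_edges h) hxP₂
    · exact absurd (Q.fst_mem_support_of_mem_edges h) hxQ
  -- contradiction : x' ∈ B i but dist r x' < d
  have : d ≤ G.dist r x' := (hc i).2 x' (hDB ▸ hzx' ▸ hzD)
  omega

lemma depth_other {i : Fin b} {x : V} (hx : x ∈ B i) (hne : x ≠ c i) :
    G.dist r x = G.dist r (c i) + 1 := by
  have hconn := hG.1
  have hadj : G.Adj (c i) x := hG.2 (B i) (hblock i) (hc i).1 hx (Ne.symm hne)
  have hle : G.dist r x ≤ G.dist r (c i) + 1 := dist_le_of_adj hconn hadj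
  have hge : G.dist r (c i) ≤ G.dist r x := (hc i).2 x hx
  rcases Nat.lt_or_ge (G.dist r x) (G.dist r (c i) + 1) with h | h
  · exfalso
    exact hne (closest_unique hG hblock hc hx (by omega))
  · omega

include hinj

lemma shared_vertex {i j : Fin b} {v : V} (hvi : v ∈ B i) (hvj : v ∈ B j) (hij : i ≠ j) :
    v = c i ∨ v = c j := by
  by_contra hcon
  push_neg at hcon
  obtain ⟨hvci, hvcj⟩ := hcon
  have hconn := hG.1
  have hdi : G.dist r v = G.dist r (c i) + 1 := depth_other hG hblock hc hvi hvci
  have hdj : G.dist r v = G.dist r (c j) + 1 := depth_other hG hblock hc hvj hvcj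
  have hcij : c i ≠ c j := by
    rintro hcc
    have : B i = B j := block_eq_of_two_common (hblock i) (hblock j)
      ⟨hvi, hvj⟩ ⟨(hc i).1, hcc ▸ (hc j).1⟩ hvci
    exact hij (hinj this)
  obtain ⟨P, hPpath, hPlen⟩ := exists_path_length_dist hconn r (c i)
  obtain ⟨Q, hQpath, hQlen⟩ := exists_path_length_dist hconn r (c j)
  have hvP : v ∉ P.support := by
    intro hmem
    have := dist_le_of_mem_support P hmem
    rw [hPlen] at this
    omega
  have hvQ : v ∉ Q.support := by
    intro hmem
    have := dist_le_of_mem_support Q hmem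
    rw [hQlen] at this
    omega
  have hadj1 : G.Adj v (c i) := hG.2 (B i) (hblock i) hvi (hc i).1 hvci
  have hadj2 : G.Adj v (c j) := hG.2 (B j) (hblock j) hvj (hc j).1 hvcj
  set W := SimpleGraph.Walk.cons hadj1 (P.reverse.append Q) with hWdef
  have hWe : s(v, c j) ∉ W.edges := by
    rw [hWdef]
    simp only [SimpleGraph.Walk.edges_cons, SimpleGraph.Walk.edges_append, List.mem_cons,
      List.mem_append, SimpleGraph.Walk.edges_reverse, List.mem_reverse]
    rintro (h | h | h)
    · rcases Sym2.eq_iff.mp h with ⟨-, h2⟩ | ⟨h2, -⟩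
      · exact hcij h2.symm
      · exact hvci h2
    · exact hvP (P.fst_mem_support_of_mem_edges h)
    · exact hvQ (Q.fst_mem_support_of_mem_edges h)
  obtain ⟨D, z, hD, hvD, hcjD, hzD, hvza, hvze⟩ := exists_block_of_walk_avoiding hadj2 W hWe
  have hDB : D = B j := block_eq_of_two_common hD (hblock j) ⟨hvD, hvj⟩ ⟨hcjD, (hc j).1⟩ hvcj
  have hzci : z = c i := by
    rw [hWdef] at hvze
    simp only [SimpleGraph.Walk.edges_cons, SimpleGraph.Walk.edges_append, List.mem_cons,
      List.mem_append, SimpleGraph.Walk.edges_reverse, List.mem_reverse] at hvze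
    rcases hvze with h | h | h
    · rcases Sym2.eq_iff.mp h with ⟨-, h2⟩ | ⟨h2, -⟩
      · exact h2
      · exact absurd h2 hvci
    · exact absurd (P.fst_mem_support_of_mem_edges h) hvP
    · exact absurd (Q.fst_mem_support_of_mem_edges h) hvQ
  -- c i ∈ B j, so c i and v are two common vertices of B i and B j
  have hciBj : c i ∈ B j := hDB ▸ hzci ▸ hzD
  have : B i = B j := block_eq_of_two_common (hblock i) (hblock j)
    ⟨hvi, hvj⟩ ⟨(hc i).1, hciBj⟩ hvci
  exact hij (hinj this)

end Structure

/-! ### forcing stages and the lower bound -/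

def stage (G : SimpleGraph V) (S : Set V) : ℕ → Set V
  | 0 => S
  | n + 1 => stage G S n ∪
      {w | ∃ u ∈ stage G S n, G.Adj u w ∧ ∀ y, G.Adj u y → y ≠ w → y ∈ stage G S n}

@[simp] lemma stage_zero {S : Set V} : stage G S 0 = S := rfl

lemma stage_succ {S : Set V} (n : ℕ) : stage G S (n + 1) = stage G S n ∪
    {w | ∃ u ∈ stage G S n, G.Adj u w ∧ ∀ y, G.Adj u y → y ≠ w → y ∈ stage G S n} := rfl

lemma stage_mono {S : Set V} {m n : ℕ} (h : m ≤ n) : stage G S m ⊆ stage G S n := by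
  induction n with
  | zero => simp_all
  | succ n ih =>
      rcases Nat.lt_or_ge m (n + 1) with h' | h'
      · exact (ih (by omega)).trans Set.subset_union_left
      · have : m = n + 1 := by omega
        subst this; exact subset_rfl

lemma stage_subset_forced {S : Set V} (n : ℕ) :
    stage G S n ⊆ {v | G.Forced S v} := by
  induction n with
  | zero => exact fun v hv => SimpleGraph.Forced.init v hv
  | succ n ih =>
      rintro v (hv | ⟨u, hu, hadj, hoth⟩)
      · exact ih hv
      · exact SimpleGraph.Forced.force u v (ih hu) hadj (fun y h1 h2 => ih (hoth y h1 h2))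

lemma forced_iff_stage [Fintype V] {S : Set V} {v : V} :
    G.Forced S v ↔ ∃ n, v ∈ stage G S n := by
  constructor
  · intro h
    induction h with
    | init v hv => exact ⟨0, hv⟩
    | force u w hu hadj hoth ihu ihoth =>
        set g : V → ℕ := fun y => if h : ∃ n, y ∈ stage G S n then Nat.find h else 0 with hg
        set M := Finset.univ.sup g with hM
        have key : ∀ y, (∃ n, y ∈ stage G S n) → y ∈ stage G S M := by
          intro y hy
          have h1 : y ∈ stage G S (g y) := by
            rw [hg]; simp only [hy, dif_pos]
            exact Nat.find_spec hy
          exact stage_mono (Finset.le_sup (Finset.mem_univ y)) h1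
        refine ⟨M + 1, Or.inr ⟨u, key u ihu, hadj, fun y h1 h2 => key y (ihoth y h1 h2)⟩⟩
  · rintro ⟨n, hn⟩
    exact stage_subset_forced n hn

section LowerBound

variable [Fintype V] {b : ℕ} {B : Fin b → Set V}
  (hG : G.IsCliqueTree) (hblock : ∀ i, G.IsBlock (B i))
  (hall : ∀ C : Set V, G.IsBlock C → ∃ i, C = B i)

include hG hblock hall

lemma card_le_of_zfs {S : Set V} (hS : G.IsZeroForcingSet S) :
    Fintype.card V ≤ S.ncard + b := by
  classical
  -- for each white vertex pick forcing time and forcing vertex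
  have hfv : ∀ v : V, ∃ n, v ∈ stage G S n := fun v => forced_iff_stage.mp (hS v)
  set t : V → ℕ := fun v => Nat.find (hfv v) with ht
  have tspec : ∀ v, v ∈ stage G S (t v) := fun v => Nat.find_spec (hfv v)
  have tmin : ∀ v m, m < t v → v ∉ stage G S m := fun v m hm => Nat.find_min (hfv v) hm
  have htpos : ∀ v, v ∉ S → 1 ≤ t v := by
    intro v hv
    rcases Nat.eq_zero_or_pos (t v) with h0 | h
    · exfalso
      have h1 := tspec v
      rw [h0, stage_zero] at h1
      exact hv h1
    · exact h
  have hspec : ∀ v, v ∉ S → ∃ u ∈ stage G S (t v - 1), G.Adj u v ∧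
      ∀ y, G.Adj u y → y ≠ v → y ∈ stage G S (t v - 1) := by
    intro v hv
    have h1 : v ∈ stage G S (t v) := tspec v
    have h2 : v ∉ stage G S (t v - 1) := tmin v _ (by have := htpos v hv; omega)
    have h3 : t v = (t v - 1) + 1 := by have := htpos v hv; omega
    rw [h3] at h1
    rcases h1 with h1 | h1
    · exact absurd h1 h2
    · exact h1
  have hnotmem : ∀ v, v ∉ S → v ∉ stage G S (t v - 1) :=
    fun v hv => tmin v _ (by have := htpos v hv; omega)
  -- choose forcing vertex and a block containing the forcing edge
  have hblockof : ∀ v, v ∉ S → ∃ (i : Fin b) (u : V), u ∈ stage G S (t v - 1) ∧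
      G.Adj u v ∧ (∀ y, G.Adj u y → y ≠ v → y ∈ stage G S (t v - 1)) ∧
      u ∈ B i ∧ v ∈ B i := by
    intro v hv
    obtain ⟨u, hu, hadj, hoth⟩ := hspec v hv
    obtain ⟨D, hD, hsub⟩ := exists_block_superset (cncvs_pair hadj)
    obtain ⟨i, rfl⟩ := hall D hD
    exact ⟨i, u, hu, hadj, hoth, hsub (by simp), hsub (by simp)⟩
  set φ : ↥(Sᶜ) → Fin b := fun v => (hblockof v.1 v.2).choose with hφ
  -- injectivity
  have hinjφ : Function.Injective φ := by
    have asym : ∀ v₁ v₂ : ↥(Sᶜ), φ v₁ = φ v₂ → v₁.1 ≠ v₂.1 → t v₁.1 ≤ t v₂.1 → False := by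
      rintro ⟨v₁, hv₁⟩ ⟨v₂, hv₂⟩ heq hne hle
      obtain ⟨u₁, hu₁, hadj₁, hoth₁, huB₁, hvB₁⟩ := (hblockof v₁ hv₁).choose_spec
      obtain ⟨u₂, hu₂, hadj₂, hoth₂, huB₂, hvB₂⟩ := (hblockof v₂ hv₂).choose_spec
      simp only [hφ] at heq
      rw [heq] at huB₁ hvB₁
      have hle' : t v₁ ≤ t v₂ := hle
      have hmono : stage G S (t v₁ - 1) ⊆ stage G S (t v₂ - 1) :=
        stage_mono (by omega)
      have hv₂not : v₂ ∉ stage G S (t v₂ - 1) := hnotmem v₂ hv₂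
      by_cases hcase : v₂ = u₁
      · exact hv₂not (hmono (hcase ▸ hu₁))
      · have hadj' : G.Adj u₁ v₂ :=
          hG.2 _ (hblock ((hblockof v₂ hv₂).choose)) huB₁ hvB₂ (fun h => hcase h.symm)
        exact hv₂not (hmono (hoth₁ v₂ hadj' (Ne.symm hne)))
    intro v₁ v₂ heq
    by_contra hne
    have hne' : v₁.1 ≠ v₂.1 := fun h => hne (Subtype.ext h)
    rcases le_total (t v₁.1) (t v₂.1) with h | h
    · exact absurd (asym v₁ v₂ heq hne' h) not_false
    · exact absurd (asym v₂ v₁ heq.symm (Ne.symm hne') h) not_false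
  have hcard : Fintype.card ↥(Sᶜ) ≤ b := by
    calc Fintype.card ↥(Sᶜ) ≤ Fintype.card (Fin b) := Fintype.card_le_of_injective φ hinjφ
    _ = b := Fintype.card_fin b
  have hsplit : S.ncard + (Sᶜ).ncard = Fintype.card V := by
    rw [← Nat.card_eq_fintype_card]
    exact Set.ncard_add_ncard_compl S
  have : (Sᶜ).ncard = Fintype.card ↥(Sᶜ) := by
    rw [← Nat.card_coe_set_eq, Nat.card_eq_fintype_card]
  omega

end LowerBound

/-! ### zero forcing number of complete graphs -/

lemma zfn_complete {α : Type*} [Fintype α] (H : SimpleGraph α)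
    (hcomp : ∀ a b : α, a ≠ b → H.Adj a b) (hcard : 3 ≤ Fintype.card α) :
    H.zeroForcingNumber = Fintype.card α - 1 := by
  classical
  have hne : Nonempty α := Fintype.card_pos_iff.mp (by omega)
  obtain ⟨x⟩ := hne
  -- the upper-bound witness
  have hSncard : ({x}ᶜ : Set α).ncard = Fintype.card α - 1 := by
    have h1 : ({x} : Set α).ncard = 1 := Set.ncard_singleton x
    have h2 : ({x} : Set α).ncard + ({x}ᶜ : Set α).ncard = Fintype.card α := by
      rw [← Nat.card_eq_fintype_card]; exact Set.ncard_add_ncard_compl _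
    omega
  have hSzfs : H.IsZeroForcingSet ({x}ᶜ : Set α) := by
    intro v
    by_cases hv : v = x
    · subst hv
      obtain ⟨u, hu⟩ := Fintype.exists_ne_of_one_lt_card (by omega) v
      refine SimpleGraph.Forced.force u v (SimpleGraph.Forced.init u hu) (hcomp u v hu) ?_
      intro y hy hyv
      refine SimpleGraph.Forced.init y ?_
      simpa using hyv
    · exact SimpleGraph.Forced.init v (by simpa using hv)
  have hmem : Fintype.card α - 1 ∈ {n | ∃ S : Set α, S.ncard = n ∧ H.IsZeroForcingSet S} :=
    ⟨{x}ᶜ, hSncard, hSzfs⟩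
  refine le_antisymm (Nat.sInf_le hmem) (le_csInf ⟨_, hmem⟩ ?_)
  rintro m ⟨S, rfl, hS⟩
  by_contra hlt
  push_neg at hlt
  -- S misses at least two vertices
  have hsplit : S.ncard + (Sᶜ).ncard = Fintype.card α := by
    rw [← Nat.card_eq_fintype_card]; exact Set.ncard_add_ncard_compl _
  have h2 : 1 < (Sᶜ).ncard := by omega
  obtain ⟨a, ha, c, hc, hac⟩ := (Set.one_lt_ncard (Set.toFinite _)).mp h2
  have habs : ∀ v, H.Forced S v → v ∈ S := by
    intro v hv
    induction hv with
    | init v h => exact h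
    | force u w hu hadj hoth ihu ihoth =>
        exfalso
        have hz : ∃ z, z ∈ (Sᶜ : Set α) ∧ z ≠ w := by
          by_cases haw : a = w
          · exact ⟨c, hc, fun h => hac ((haw.trans h.symm).symm ▸ rfl)⟩
          · exact ⟨a, ha, haw⟩
        obtain ⟨z, hzc, hzw⟩ := hz
        by_cases hzu : z = u
        · exact hzc (hzu ▸ ihu)
        · exact hzc (ihoth z (hcomp u z (fun h => hzu h.symm)) hzw)
  exact ha (habs a (hS a))

/-! ### the upper bound -/

lemma dist_lt_card [Fintype V] (hconn : G.Connected) (r x : V) :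
    G.dist r x < Fintype.card V := by
  obtain ⟨p, hp, hl⟩ := exists_path_length_dist hconn r x
  rw [← hl]
  exact hp.length_lt

section UpperBound

variable [Fintype V] {b : ℕ} {B : Fin b → Set V}
  (hG : G.IsCliqueTree) (hinj : Function.Injective B)
  (hblock : ∀ i, G.IsBlock (B i))
  (hall : ∀ C : Set V, G.IsBlock C → ∃ i, C = B i)
  (hsize : ∀ i, 3 ≤ (B i).ncard)
  {r : V} {c : Fin b → V}
  (hc : ∀ i, c i ∈ B i ∧ ∀ x ∈ B i, G.dist r (c i) ≤ G.dist r x)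
  {w : Fin b → V} (hw : ∀ i, w i ∈ B i ∧ w i ≠ c i)

include hG hinj hblock hall hsize hc hw

lemma not_white_of_ne {i : Fin b} {x : V} (hx : x ∈ B i) (hxc : x ≠ c i) (hxw : x ≠ w i) :
    x ∉ Set.range w := by
  rintro ⟨m, rfl⟩
  have hmi : m ≠ i := fun h => hxw (by rw [h])
  rcases shared_vertex hG hinj hblock hc (hw m).1 hx hmi with h | h
  · exact (hw m).2 h
  · exact hxc h

lemma third_vertex (i : Fin b) : ∃ u ∈ B i, u ≠ c i ∧ u ≠ w i := by
  classical
  have h3 : 3 ≤ (B i).toFinset.card := by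
    have := hsize i
    rwa [Set.ncard_eq_toFinset_card'] at this
  have hpair : ({c i, w i} : Finset V).card ≤ 2 := by
    calc ({c i, w i} : Finset V).card ≤ ({w i} : Finset V).card + 1 := Finset.card_insert_le _ _
    _ ≤ 2 := by simp
  have hsd : ((B i).toFinset \ {c i, w i}).card + ({c i, w i} : Finset V).card
      = ((B i).toFinset ∪ {c i, w i}).card := Finset.card_sdiff_add_card _ _
  have hle : (B i).toFinset.card ≤ ((B i).toFinset ∪ {c i, w i}).card :=
    Finset.card_le_card Finset.subset_union_left
  have hpos : 0 < ((B i).toFinset \ {c i, w i}).card := by omega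
  obtain ⟨u, hu⟩ := Finset.card_pos.mp hpos
  simp only [Finset.mem_sdiff, Set.mem_toFinset, Finset.mem_insert, Finset.mem_singleton,
    not_or] at hu
  exact ⟨u, hu.1, hu.2.1, hu.2.2⟩

lemma white_forced_of_c_forced :
    ∀ (n : ℕ) (i : Fin b), Fintype.card V - G.dist r (c i) = n →
      ¬ G.Forced ((Set.range w)ᶜ) (w i) → G.Forced ((Set.range w)ᶜ) (c i) → False := by
  intro n
  induction n using Nat.strong_induction_on with
  | _ n ih =>
    intro i hn hbad hcF
    set S := ((Set.range w)ᶜ : Set V) with hSdef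
    obtain ⟨u, huB, huc, huw⟩ := third_vertex hG hinj hblock hall hsize hc hw i
    have huS : u ∈ S := not_white_of_ne hG hinj hblock hall hsize hc hw huB huc huw
    have huF : G.Forced S u := SimpleGraph.Forced.init u huS
    have hadj : G.Adj u (w i) := hG.2 (B i) (hblock i) huB (hw i).1 huw
    have hnotall : ¬ (∀ y, G.Adj u y → y ≠ w i → G.Forced S y) := by
      intro hothers
      exact hbad (SimpleGraph.Forced.force u (w i) huF hadj hothers)
    push_neg at hnotall
    obtain ⟨y, hyadj, hyne, hyF⟩ := hnotall
    have hyW : y ∈ Set.range w := by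
      by_contra hyS
      exact hyF (SimpleGraph.Forced.init y hyS)
    obtain ⟨k, hk⟩ := hyW
    subst hk
    have hki : k ≠ i := fun h => hyne (by rw [h])
    -- u belongs to B k
    have huBk : u ∈ B k := by
      obtain ⟨D, hD, hsub⟩ := exists_block_superset (cncvs_pair hyadj)
      obtain ⟨m, rfl⟩ := hall D hD
      have huBm : u ∈ B m := hsub (by simp)
      have hwkBm : w k ∈ B m := hsub (by simp)
      by_cases hmk : m = k
      · exact hmk ▸ huBm
      · exfalso
        rcases shared_vertex hG hinj hblock hc hwkBm (hw k).1 hmk with h | h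
        · -- w k = c m
          by_cases hmi : m = i
          · subst hmi
            exact hyF (h ▸ hcF)
          · rcases shared_vertex hG hinj hblock hc huBm huB hmi with h' | h'
            · exact hyadj.ne (h'.trans h.symm)
            · exact huc h'
        · exact (hw k).2 h
    have huck : u = c k := by
      rcases shared_vertex hG hinj hblock hc huBk huB hki with h | h
      · exact h
      · exact absurd h huc
    have hdk : G.dist r (c k) = G.dist r (c i) + 1 := by
      rw [← huck]
      exact depth_other hG hblock hc huB huc
    have hlt : G.dist r (c i) < Fintype.card V := dist_lt_card hG.1 r (c i)
    exact ih (Fintype.card V - G.dist r (c k)) (by omega) k rfl hyF (huck ▸ huF)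

lemma white_forced :
    ∀ (n : ℕ) (i : Fin b), G.dist r (c i) = n →
      ¬ G.Forced ((Set.range w)ᶜ) (w i) → False := by
  intro n
  induction n using Nat.strong_induction_on with
  | _ n ih =>
    intro i hn hbad
    by_cases hcF : G.Forced ((Set.range w)ᶜ) (c i)
    · exact white_forced_of_c_forced hG hinj hblock hall hsize hc hw _ i rfl hbad hcF
    · have hcW : c i ∈ Set.range w := by
        by_contra hcS
        exact hcF (SimpleGraph.Forced.init _ hcS)
      obtain ⟨j, hj⟩ := hcW
      have hji : j ≠ i := by
        rintro rfl
        exact (hw j).2 hj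
      have hdj : G.dist r (w j) = G.dist r (c j) + 1 :=
        depth_other hG hblock hc (hw j).1 (hw j).2
      rw [hj] at hdj
      exact ih (G.dist r (c j)) (by omega) j rfl (fun h => hcF (hj ▸ h))

lemma zfs_compl_range : G.IsZeroForcingSet ((Set.range w)ᶜ) := by
  intro v
  by_contra hv
  have hvW : v ∈ Set.range w := by
    by_contra hvS
    exact hv (SimpleGraph.Forced.init v hvS)
  obtain ⟨i, rfl⟩ := hvW
  exact white_forced hG hinj hblock hall hsize hc hw _ i rfl hv

end UpperBound

end CTAux

open CTAux in
/-- Let `G` be a clique tree with `b` blocks `B₁, …, B_b`, each of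
size at least 3.  Then `Z(G) = ∑ᵢ Z(Bᵢ) − ∑_{v ∈ V(G)} (bi_G(v) − 1)`, where
`bi_G(v)` is the number of blocks of `G` containing `v`. -/
theorem zeroForcing_blocks_formula {V : Type*} [Fintype V] (G : SimpleGraph V)
    (hG : G.IsCliqueTree)
    (b : ℕ) (B : Fin b → Set V) (hinj : Function.Injective B)
    (hblock : ∀ i, G.IsBlock (B i))
    (hall : ∀ C : Set V, G.IsBlock C → ∃ i, C = B i)
    (hsize : ∀ i, 3 ≤ (B i).ncard) :
    G.zeroForcingNumber =
      (∑ i, (G.induce (B i)).zeroForcingNumber) -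
        ∑ v : V, ((Finset.univ.filter fun i => v ∈ B i).card - 1) := by
  classical
  have hconn := hG.1
  have hne : Nonempty V := hconn.nonempty
  obtain ⟨r⟩ := hne
  -- choose the closest vertex of each block
  have hBne : ∀ i, (B i).Nonempty := by
    intro i
    rcases Set.eq_empty_or_nonempty (B i) with h | h
    · exfalso; have := hsize i; rw [h] at this; simp at this
    · exact h
  have hcex : ∀ i, ∃ x ∈ B i, ∀ y ∈ B i, G.dist r x ≤ G.dist r y := fun i =>
    Set.exists_min_image (B i) _ (Set.toFinite _) (hBne i)
  choose c hc1 hc2 using hcex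
  have hc : ∀ i, c i ∈ B i ∧ ∀ x ∈ B i, G.dist r (c i) ≤ G.dist r x := fun i => ⟨hc1 i, hc2 i⟩
  -- choose a white vertex in each block
  have hwex : ∀ i, ∃ x, x ∈ B i ∧ x ≠ c i := by
    intro i
    have h2 : 1 < (B i).ncard := by have := hsize i; omega
    obtain ⟨x, hx, hxc⟩ := Set.exists_ne_of_one_lt_ncard h2 (c i)
    exact ⟨x, hx, hxc⟩
  choose w hw1 hw2 using hwex
  have hw : ∀ i, w i ∈ B i ∧ w i ≠ c i := fun i => ⟨hw1 i, hw2 i⟩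
  have winj : Function.Injective w := by
    intro i j hij
    by_contra hne'
    have h2 : w i ∈ B j := by rw [hij]; exact hw1 j
    rcases shared_vertex hG hinj hblock hc (hw1 i) h2 hne' with h | h
    · exact hw2 i h
    · exact hw2 j (by rw [← hij]; exact h)
  -- Z(G) = |V| - b
  have hrange : (Set.range w).ncard = b := by
    rw [← Set.image_univ, Set.ncard_image_of_injective _ winj, Set.ncard_univ,
      Nat.card_eq_fintype_card, Fintype.card_fin]
  have hble : b ≤ Fintype.card V := by
    have h1 : (Set.range w).ncard ≤ Fintype.card V := by
      simpa [Set.ncard_univ, Nat.card_eq_fintype_card] using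
        Set.ncard_le_ncard (Set.subset_univ (Set.range w)) (Set.toFinite _)
    omega
  have hcompl : ((Set.range w)ᶜ).ncard = Fintype.card V - b := by
    have h := Set.ncard_add_ncard_compl (Set.range w)
    rw [Nat.card_eq_fintype_card] at h
    omega
  have hmem : Fintype.card V - b ∈
      {n | ∃ S : Set V, S.ncard = n ∧ G.IsZeroForcingSet S} :=
    ⟨(Set.range w)ᶜ, hcompl, zfs_compl_range hG hinj hblock hall hsize hc hw⟩
  have hZ : G.zeroForcingNumber = Fintype.card V - b := by
    refine le_antisymm (Nat.sInf_le hmem) (le_csInf ⟨_, hmem⟩ ?_)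
    rintro m ⟨S, rfl, hS⟩
    have := card_le_of_zfs hG hblock hall hS
    omega
  -- Z of each block
  have hZi : ∀ i, (G.induce (B i)).zeroForcingNumber = (B i).ncard - 1 := by
    intro i
    have hcard : Fintype.card ↥(B i) = (B i).ncard := by
      rw [← Nat.card_eq_fintype_card, Nat.card_coe_set_eq]
    have hcomp : ∀ a b' : ↥(B i), a ≠ b' → (G.induce (B i)).Adj a b' := by
      intro a b' hab
      exact hG.2 (B i) (hblock i) a.2 b'.2 (fun h => hab (Subtype.ext h))
    rw [zfn_complete _ hcomp (by rw [hcard]; exact hsize i), hcard]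
  -- counting
  have hsum1 : (∑ i, (G.induce (B i)).zeroForcingNumber) = (∑ i, (B i).ncard) - b := by
    rw [Finset.sum_congr rfl (fun i _ => hZi i)]
    have h1 : (∑ i, ((B i).ncard - 1)) + b = ∑ i, (B i).ncard := by
      have e : ∀ i ∈ Finset.univ, (B i).ncard = ((B i).ncard - 1) + 1 := fun i _ => by
        have := hsize i; omega
      rw [Finset.sum_congr rfl e, Finset.sum_add_distrib]
      simp
    omega
  have hcount : ∀ v : V, 1 ≤ (Finset.univ.filter fun i => v ∈ B i).card := by
    intro v
    obtain ⟨D, hD, hsub⟩ := exists_block_superset (G := G) (cncvs_singleton v)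
    obtain ⟨i, rfl⟩ := hall D hD
    exact Finset.card_pos.mpr ⟨i, by simp [hsub rfl]⟩
  have hsum2 : (∑ v : V, (Finset.univ.filter fun i => v ∈ B i).card) = ∑ i, (B i).ncard := by
    rw [Finset.sum_congr rfl (fun v _ => Finset.card_filter _ _), Finset.sum_comm]
    refine Finset.sum_congr rfl fun i _ => ?_
    rw [← Finset.card_filter]
    have : Finset.univ.filter (fun v => v ∈ B i) = (B i).toFinset := by
      ext z; simp
    rw [this, Set.ncard_eq_toFinset_card']
  have hnle : Fintype.card V ≤ ∑ i, (B i).ncard := by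
    rw [← hsum2]
    calc Fintype.card V = ∑ _v : V, 1 := by simp
    _ ≤ ∑ v : V, (Finset.univ.filter fun i => v ∈ B i).card :=
        Finset.sum_le_sum fun v _ => hcount v
  have hsum3 : (∑ v : V, ((Finset.univ.filter fun i => v ∈ B i).card - 1))
      = (∑ i, (B i).ncard) - Fintype.card V := by
    have h1 : (∑ v : V, ((Finset.univ.filter fun i => v ∈ B i).card - 1)) + Fintype.card V
        = ∑ v : V, (Finset.univ.filter fun i => v ∈ B i).card := by
      have e : ∀ v ∈ (Finset.univ : Finset V), (Finset.univ.filter fun i => v ∈ B i).card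
          = ((Finset.univ.filter fun i => v ∈ B i).card - 1) + 1 := fun v _ => by
        have := hcount v; omega
      conv_rhs => rw [Finset.sum_congr rfl e]
      rw [Finset.sum_add_distrib]
      simp
    omega
  have hble2 : b ≤ ∑ i, (B i).ncard := by
    calc b = ∑ _i : Fin b, 1 := by simp
    _ ≤ ∑ i, (B i).ncard := Finset.sum_le_sum fun i _ => by have := hsize i; omega
  rw [hZ, hsum1, hsum3]
  omega
end

section
/- Let G be a clique tree on n vertices with exactly b blocks, where each block has at least 3 vertices. Then Z(G) = n − b, and consequently ⌊n/2⌋ + 1 ≤ Z(G) ≤ n − 1. -/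
open Classical

section Aux
open SimpleGraph

variable {V : Type*} {G : SimpleGraph V}

lemma walk_reach {T : Set V} : ∀ {a c : V} (W : G.Walk a c) (hW : ∀ z ∈ W.support, z ∈ T),
    (G.induce T).Reachable ⟨a, hW a W.start_mem_support⟩ ⟨c, hW c W.end_mem_support⟩ := by
  intro a c W
  induction W with
  | nil => intro h; rfl
  | @cons u v w h p ih =>
    intro hW
    have hv : v ∈ T := hW v (by simp [Walk.support_cons])
    have h1 : (G.induce T).Adj ⟨u, hW u (Walk.start_mem_support _)⟩ ⟨v, hv⟩ := by
      simpa using h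
    have h2 := ih (fun z hz => hW z (by simp [Walk.support_cons, hz]))
    exact (h1.reachable).trans h2

lemma reach_mono {s t : Set V} (hst : s ⊆ t) {a b : V} (ha : a ∈ s) (hb : b ∈ s)
    (h : (G.induce s).Reachable ⟨a, ha⟩ ⟨b, hb⟩) :
    (G.induce t).Reachable ⟨a, hst ha⟩ ⟨b, hst hb⟩ := by
  have := h.map (G.induceHomOfLE hst).toHom
  exact this

lemma split_unique {x y w : V} {p : G.Walk x y} (hp : p.IsPath) (hw : w ∈ p.support) {z : V}
    (h1 : z ∈ (p.takeUntil w hw).support) (h2 : z ∈ (p.dropUntil w hw).support) : z = w := by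
  by_contra hzw
  have hz2 : z ∈ (p.dropUntil w hw).support.tail := by
    have := (p.dropUntil w hw).support_eq_cons
    rw [this] at h2
    rcases List.mem_cons.mp h2 with h2 | h2
    · exact absurd h2 hzw
    · exact h2
  have hnd := hp.support_nodup
  rw [← p.take_spec hw, Walk.support_append] at hnd
  exact List.disjoint_of_nodup_append hnd h1 hz2

lemma path_escape {x y w v : V} {p : G.Walk x y} (hp : p.IsPath) (hw : w ∈ p.support)
    (hwv : w ≠ v) : ∃ e, (e = x ∨ e = y) ∧ ∃ q : G.Walk e w,
      (∀ z ∈ q.support, z ∈ p.support) ∧ v ∉ q.support := by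
  by_cases h1 : v ∈ (p.takeUntil w hw).support
  · refine ⟨y, Or.inr rfl, (p.dropUntil w hw).reverse, ?_, ?_⟩
    · intro z hz
      rw [Walk.support_reverse, List.mem_reverse] at hz
      exact p.support_dropUntil_subset hw hz
    · rw [Walk.support_reverse, List.mem_reverse]
      intro h2
      exact hwv (split_unique hp hw h1 h2).symm
  · exact ⟨x, Or.inl rfl, p.takeUntil w hw,
      fun z hz => p.support_takeUntil_subset hw hz, h1⟩

/-- CP: any path between two vertices of a block stays inside the block. -/
lemma block_path_subset {K : Set V} (hK : G.IsBlock K) {x y : V} (p : G.Walk x y)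
    (hp : p.IsPath) (hx : x ∈ K) (hy : y ∈ K) : ∀ z ∈ p.support, z ∈ K := by
  rcases eq_or_ne x y with rfl | hxy
  · have hnil := (Walk.isPath_iff_eq_nil (p := p)).mp hp
    subst hnil
    intro z hz
    simp only [Walk.support_nil, List.mem_singleton] at hz
    subst hz; exact hx
  · set C : Set V := K ∪ {z | z ∈ p.support} with hC
    suffices hKC : K = C by
      intro z hz
      have : z ∈ C := Or.inr hz
      rwa [← hKC] at this
    apply hK.2 C Set.subset_union_left
    constructor
    · exact induce_union_connected hK.1.1.preconnected p.connected_induce_support.preconnected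
        ⟨x, hx, p.start_mem_support⟩
    · intro v hv
      right
      set a : V := if v = x then y else x with haa
      have haK : a ∈ K := by
        rw [haa]; split <;> assumption
      have hav : a ≠ v := by
        rw [haa]; split
        · rename_i h; rw [h]; exact hxy.symm
        · rename_i h; exact fun hh => h hh.symm
      have KCv : (G.induce (K \ {v})).Connected := by
        by_cases hvK : v ∈ K
        · rcases hK.1.2 v hvK with h | h
          · exact absurd h (Set.nonempty_iff_ne_empty.mp ⟨a, haK, hav⟩)
          · exact h
        · rw [Set.diff_singleton_eq_self hvK]
          exact hK.1.1
      have haC : a ∈ C \ {v} := ⟨Or.inl haK, hav⟩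
      apply induce_connected_of_patches a haC
      intro w hw
      obtain ⟨hwC, hwv⟩ := hw
      have hwv : w ≠ v := hwv
      by_cases hwK : w ∈ K
      · refine ⟨K \ {v}, ?_, ⟨haK, hav⟩, ⟨hwK, hwv⟩, ?_⟩
        · intro z hz; exact ⟨Or.inl hz.1, hz.2⟩
        · exact KCv ⟨a, haK, hav⟩ ⟨w, hwK, hwv⟩
      · have hwsup : w ∈ p.support := by
          rcases hwC with h | h
          · exact absurd h hwK
          · exact h
        obtain ⟨e, he, q, hq, hqv⟩ := path_escape hp hwsup hwv
        have heK : e ∈ K := by rcases he with rfl | rfl <;> assumption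
        have hev : e ≠ v := fun h => hqv (h ▸ q.start_mem_support)
        set s' : Set V := (K \ {v}) ∪ {z | z ∈ q.support} with hs'
        have hsub : s' ⊆ C \ {v} := by
          rintro z (⟨hz1, hz2⟩ | hz)
          · exact ⟨Or.inl hz1, hz2⟩
          · exact ⟨Or.inr (hq z hz), fun hzv => hqv (hzv ▸ hz)⟩
        have has' : a ∈ s' := Or.inl ⟨haK, hav⟩
        have hws' : w ∈ s' := Or.inr q.end_mem_support
        have hes'l : e ∈ K \ {v} := ⟨heK, hev⟩
        have r1 : (G.induce s').Reachable ⟨a, has'⟩ ⟨e, Set.subset_union_left hes'l⟩ :=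
          reach_mono (s := K \ {v}) (t := s') Set.subset_union_left ⟨haK, hav⟩ hes'l (KCv.preconnected ⟨a, ⟨haK, hav⟩⟩ ⟨e, hes'l⟩)
        have r2 : (G.induce s').Reachable ⟨e, Set.subset_union_left hes'l⟩ ⟨w, hws'⟩ := by
          have := walk_reach (T := {z | z ∈ q.support}) q (fun z hz => hz)
          exact reach_mono (s := {z | z ∈ q.support}) (t := s') Set.subset_union_right q.start_mem_support q.end_mem_support this
        exact ⟨s', hsub, has', hws', r1.trans r2⟩
section chunk2
variable {V : Type*} {G : SimpleGraph V}
open SimpleGraph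

lemma singleton_conn (x : V) : (G.induce {x}).Connected := by
  rw [induce_singleton_eq_top]
  have : Nonempty ({x} : Set V) := ⟨⟨x, rfl⟩⟩
  exact connected_top

lemma conn_diff {K : Set V} (hK : G.IsBlock K) {v : V} (hne : (K \ {v}).Nonempty) :
    (G.induce (K \ {v})).Connected := by
  by_cases hvK : v ∈ K
  · rcases hK.1.2 v hvK with h | h
    · exact absurd h (Set.nonempty_iff_ne_empty.mp hne)
    · exact h
  · rw [Set.diff_singleton_eq_self hvK]
    exact hK.1.1

lemma pair_CNC {u v : V} (h : G.Adj u v) : G.IsConnectedNoCutVertexSet {u, v} := by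
  constructor
  · exact induce_pair_connected_of_adj h
  · intro z hz
    rcases hz with rfl | rfl
    · right
      rw [Set.pair_diff_left h.ne]
      exact singleton_conn v
    · right
      rw [Set.pair_diff_right h.ne]
      exact singleton_conn u

lemma exists_block_superset {V : Type*} [Fintype V] {G : SimpleGraph V} {T : Set V}
    (hT : G.IsConnectedNoCutVertexSet T) : ∃ K, G.IsBlock K ∧ T ⊆ K := by
  set S : Set (Set V) := {C | T ⊆ C ∧ G.IsConnectedNoCutVertexSet C} with hS
  obtain ⟨C0, hC0, hmax⟩ := Set.Finite.exists_maximalFor Set.ncard S (Set.toFinite _)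
    ⟨T, subset_refl _, hT⟩
  refine ⟨C0, ⟨hC0.2, ?_⟩, hC0.1⟩
  intro D hsub hD
  have hD' : D ∈ S := ⟨hC0.1.trans hsub, hD⟩
  have hle : C0.ncard ≤ D.ncard := Set.ncard_le_ncard hsub (Set.toFinite _)
  exact Set.eq_of_subset_of_ncard_le hsub (hmax hD' hle) (Set.toFinite _)

lemma blocks_inter {K1 K2 : Set V} (hK1 : G.IsBlock K1) (hK2 : G.IsBlock K2) (hne : K1 ≠ K2)
    {x y : V} (hx1 : x ∈ K1) (hx2 : x ∈ K2) (hy1 : y ∈ K1) (hy2 : y ∈ K2) : x = y := by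
  by_contra hxy
  have hCNC : G.IsConnectedNoCutVertexSet (K1 ∪ K2) := by
    constructor
    · exact induce_union_connected hK1.1.1.preconnected hK2.1.1.preconnected ⟨x, hx1, hx2⟩
    · intro v hv
      right
      rw [Set.union_diff_distrib]
      set a : V := if v = x then y else x with haa
      have hav : a ≠ v := by
        rw [haa]; split
        · rename_i h; rw [h]; exact fun hh => hxy hh.symm
        · rename_i h; exact fun hh => h hh.symm
      have ha1 : a ∈ K1 \ {v} := by
        rw [haa]; constructor
        · split <;> assumption
        · exact hav
      have ha2 : a ∈ K2 \ {v} := by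
        rw [haa]; constructor
        · split <;> assumption
        · exact hav
      exact induce_union_connected (conn_diff hK1 ⟨a, ha1⟩).preconnected (conn_diff hK2 ⟨a, ha2⟩).preconnected
        ⟨a, ha1, ha2⟩
  have h1 : K1 = K1 ∪ K2 := hK1.2 _ Set.subset_union_left hCNC
  have h2 : K2 ⊆ K1 := by rw [h1]; exact Set.subset_union_right
  exact hne ((hK2.2 K1 h2 hK1.1).symm)

end chunk2
section chunk3
variable {V : Type*} {G : SimpleGraph V}
open SimpleGraph

lemma shortest_lt {r v : V} {p : G.Walk r v} (hlen : p.length = G.dist r v) {y : V}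
    (hy : y ∈ p.support) (hyv : y ≠ v) : G.dist r y < G.dist r v := by
  have h1 : G.dist r y ≤ (p.takeUntil y hy).length := SimpleGraph.dist_le _
  have h2 : (p.takeUntil y hy).length + (p.dropUntil y hy).length = p.length := by
    rw [← Walk.length_append, p.take_spec hy]
  have h3 : (p.dropUntil y hy).length ≠ 0 := fun h => hyv (Walk.eq_of_length_eq_zero h)
  omega

lemma shortest_le {r v : V} {p : G.Walk r v} (hlen : p.length = G.dist r v) {y : V}
    (hy : y ∈ p.support) : G.dist r y ≤ G.dist r v := by
  rcases eq_or_ne y v with rfl | h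
  · exact le_rfl
  · exact (shortest_lt hlen hy h).le

lemma first_entry {T : Set V} : ∀ {s v' : V} (Q : G.Walk s v'), Q.IsPath → s ∉ T → v' ∈ T →
    ∃ (z : V) (_ : z ∈ T) (Q' : G.Walk s z), Q'.IsPath ∧ (∀ t ∈ Q'.support, t ∈ Q.support) ∧
      (∀ t ∈ Q'.support, t ∈ T → t = z) := by
  intro s v' Q
  induction Q with
  | nil => intro _ hs hv; exact absurd hv hs
  | @cons u v w h p ih =>
    intro hQ hs hv
    by_cases hvT : v ∈ T
    · refine ⟨v, hvT, Walk.cons h Walk.nil, ?_, ?_, ?_⟩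
      · simp [Walk.isPath_def, h.ne]
      · intro t ht
        have ht' : t = u ∨ t = v := by simpa using ht
        rw [Walk.support_cons, List.mem_cons]
        rcases ht' with rfl | rfl
        · exact Or.inl rfl
        · exact Or.inr p.start_mem_support
      · intro t ht htT
        have ht' : t = u ∨ t = v := by simpa using ht
        rcases ht' with rfl | rfl
        · exact absurd htT hs
        · rfl
    · obtain ⟨z, hzT, Q', hQ'p, hQ's, hQ'e⟩ := ih hQ.of_cons hvT hv
      have hsQ' : u ∉ Q'.support := fun hu => ((Walk.cons_isPath_iff h p).mp hQ).2 (hQ's u hu)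
      refine ⟨z, hzT, Walk.cons h Q', ?_, ?_, ?_⟩
      · exact hQ'p.cons hsQ'
      · intro t ht
        rw [Walk.support_cons] at ht ⊢
        rcases List.mem_cons.mp ht with rfl | ht
        · exact List.mem_cons_self
        · exact List.mem_cons_of_mem _ (hQ's t ht)
      · intro t ht htT
        rw [Walk.support_cons] at ht
        rcases List.mem_cons.mp ht with rfl | ht
        · exact absurd htT hs
        · exact hQ'e t ht htT

variable {r : V}

/-- F1: the minimum-distance vertex of a block is unique. -/
lemma gate_unique {K : Set V} (hG : G.Connected) (hK : G.IsBlock K) {u u' : V} (hu : u ∈ K) (hu' : u' ∈ K)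
    (hmin : ∀ z ∈ K, G.dist r u ≤ G.dist r z) (hmin' : ∀ z ∈ K, G.dist r u' ≤ G.dist r z) :
    u = u' := by
  by_contra hne
  have hdeq : G.dist r u' = G.dist r u := le_antisymm (hmin' u hu) (hmin u' hu')
  obtain ⟨P1, hP1p, hP1len⟩ := hG.exists_path_of_dist r u
  obtain ⟨P2, hP2p, hP2len⟩ := hG.exists_path_of_dist r u'
  set W : G.Walk u u' := P1.reverse.append P2 with hW
  set Pb := W.bypass with hPb
  have hPbp : Pb.IsPath := W.bypass_isPath
  have hsupp : ∀ z ∈ Pb.support, z ∈ K := block_path_subset hK Pb hPbp hu hu'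
  obtain ⟨v1, hadj, q, hcons⟩ := Walk.exists_eq_cons_of_ne hne Pb
  have hv1K : v1 ∈ K := hsupp v1 (by rw [hcons, Walk.support_cons]; exact List.mem_cons_of_mem _ q.start_mem_support)
  have hedge : s(u, v1) ∈ W.edges := W.edges_bypass_subset (by
    rw [← hPb, hcons, Walk.edges_cons]; exact List.mem_cons_self)
  rw [hW, Walk.edges_append, List.mem_append, Walk.edges_reverse, List.mem_reverse] at hedge
  rcases hedge with hedge | hedge
  · have hv1sup : v1 ∈ P1.support := P1.snd_mem_support_of_mem_edges hedge
    have : G.dist r v1 < G.dist r u := shortest_lt hP1len hv1sup hadj.ne'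
    exact absurd (hmin v1 hv1K) (by omega)
  · have husup : u ∈ P2.support := P2.fst_mem_support_of_mem_edges hedge
    have : G.dist r u < G.dist r u' := shortest_lt hP2len husup hne
    omega

/-- L4: every walk from the root to a block vertex passes through the gate. -/
lemma gate_on_walks {K : Set V} (hG : G.Connected) (hK : G.IsBlock K) {g : V} (hg : g ∈ K)
    (hmin : ∀ z ∈ K, G.dist r g ≤ G.dist r z) {v : V} (hv : v ∈ K) (W : G.Walk r v) :
    g ∈ W.support := by
  by_cases hrK : r ∈ K
  · have : g = r := by
      have h1 := hmin r hrK
      rw [SimpleGraph.dist_self] at h1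
      have h2 : G.dist r g = 0 := Nat.le_zero.mp h1
      exact ((hG.dist_eq_zero_iff).mp h2).symm
    rw [this]
    exact W.start_mem_support
  · set Q := W.bypass with hQ
    obtain ⟨z, hzT, Q', hQ'p, hQ's, hQ'e⟩ := first_entry Q W.bypass_isPath hrK hv
    have hzg : z = g := by
      by_contra hzg
      obtain ⟨P0, hP0p, hP0len⟩ := hG.exists_path_of_dist r g
      set W2 : G.Walk z g := Q'.reverse.append P0 with hW2
      set Pb := W2.bypass with hPb
      have hPbp : Pb.IsPath := W2.bypass_isPath
      have hsupp : ∀ t ∈ Pb.support, t ∈ K := block_path_subset hK Pb hPbp hzT hg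
      obtain ⟨v1, hadj, q, hcons⟩ := Walk.exists_eq_cons_of_ne hzg Pb
      have hedge : s(z, v1) ∈ W2.edges := W2.edges_bypass_subset (by
        rw [← hPb, hcons, Walk.edges_cons]; exact List.mem_cons_self)
      rw [hW2, Walk.edges_append, List.mem_append, Walk.edges_reverse, List.mem_reverse] at hedge
      rcases hedge with hedge | hedge
      · have hv1sup : v1 ∈ Q'.support := Q'.snd_mem_support_of_mem_edges hedge
        have hv1K : v1 ∈ K := hsupp v1 (by rw [hcons, Walk.support_cons]; exact List.mem_cons_of_mem _ q.start_mem_support)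
        exact hadj.ne (hQ'e v1 hv1sup hv1K).symm
      · have hzsup : z ∈ P0.support := P0.fst_mem_support_of_mem_edges hedge
        have : G.dist r z < G.dist r g := shortest_lt hP0len hzsup hzg
        exact absurd (hmin z hzT) (by omega)
    rw [← hzg]
    exact W.support_bypass_subset (hQ's z Q'.end_mem_support)

/-- F2'': a vertex can fail to be the gate in at most one block. -/
lemma nongate_unique {K1 K2 : Set V} (hG : G.Connected) (hK1 : G.IsBlock K1) (hK2 : G.IsBlock K2)
    (hclq2 : G.IsClique K2) (hne : K1 ≠ K2) {v u1 u2 : V} (hv1 : v ∈ K1) (hv2 : v ∈ K2)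
    (hu1 : u1 ∈ K1) (hd1 : G.dist r u1 < G.dist r v) (hu2 : u2 ∈ K2)
    (hd2 : G.dist r u2 < G.dist r v) : False := by
  have hu2v : u2 ≠ v := fun h => by rw [h] at hd2; omega
  have hadj : G.Adj v u2 := hclq2 hv2 hu2 (Ne.symm hu2v)
  obtain ⟨S1, hS1p, hS1len⟩ := hG.exists_path_of_dist r u1
  obtain ⟨S2, hS2p, hS2len⟩ := hG.exists_path_of_dist r u2
  have hvu1 : v ≠ u1 := fun h => by rw [h] at hd1; omega
  set W : G.Walk v u1 := Walk.cons hadj (S2.reverse.append S1) with hW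
  set Pb := W.bypass with hPb
  have hPbp : Pb.IsPath := W.bypass_isPath
  have hsupp : ∀ t ∈ Pb.support, t ∈ K1 := block_path_subset hK1 Pb hPbp hv1 hu1
  obtain ⟨v1, hadj1, q, hcons⟩ := Walk.exists_eq_cons_of_ne hvu1 Pb
  have hedge : s(v, v1) ∈ W.edges := W.edges_bypass_subset (by
    rw [← hPb, hcons, Walk.edges_cons]; exact List.mem_cons_self)
  rw [hW, Walk.edges_cons, List.mem_cons] at hedge
  rcases hedge with hedge | hedge
  · have hv1u2 : v1 = u2 := Sym2.congr_right.mp hedge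
    have hv1K1 : v1 ∈ K1 := hsupp v1 (by rw [hcons, Walk.support_cons]; exact List.mem_cons_of_mem _ q.start_mem_support)
    subst hv1u2
    exact hu2v (blocks_inter hK1 hK2 hne hv1K1 hu2 hv1 hv2)
  · rw [Walk.edges_append, List.mem_append, Walk.edges_reverse, List.mem_reverse] at hedge
    rcases hedge with hedge | hedge
    · have : v ∈ S2.support := S2.fst_mem_support_of_mem_edges hedge
      have := shortest_le hS2len this
      omega
    · have : v ∈ S1.support := S1.fst_mem_support_of_mem_edges hedge
      have := shortest_le hS1len this
      omega
end chunk3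
section chunk4
open SimpleGraph
variable {V : Type*} {G : SimpleGraph V}

/-- one round of the color change rule -/
def forceStep (G : SimpleGraph V) (X : Set V) : Set V :=
  X ∪ {w | ∃ u ∈ X, G.Adj u w ∧ ∀ y, G.Adj u y → y ≠ w → y ∈ X}

lemma subset_forceStep (X : Set V) : X ⊆ forceStep G X := Set.subset_union_left

lemma iter_forceStep_mono {S : Set V} {k l : ℕ} (h : k ≤ l) :
    (forceStep G)^[k] S ⊆ (forceStep G)^[l] S := by
  induction l with
  | zero => rw [Nat.le_zero.mp h]
  | succ m ih =>
    rcases Nat.lt_or_ge k (m+1) with h' | h'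
    · have := ih (Nat.lt_succ_iff.mp h')
      rw [Function.iterate_succ_apply']
      exact this.trans (subset_forceStep _)
    · have : k = m + 1 := le_antisymm h h'
      rw [this]

lemma forced_mem_iter [Fintype V] {S : Set V} {v : V} (h : G.Forced S v) :
    ∃ k, v ∈ (forceStep G)^[k] S := by
  induction h with
  | init v hv => exact ⟨0, hv⟩
  | @force u w hu hadj hothers ihu ihothers =>
    obtain ⟨k0, hk0⟩ := ihu
    set g : V → ℕ := fun y =>
      if h : G.Adj u y ∧ y ≠ w then Nat.find (ihothers y h.1 h.2) else 0 with hg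
    set K : ℕ := max k0 (Finset.univ.sup g) with hK
    refine ⟨K + 1, ?_⟩
    rw [Function.iterate_succ_apply']
    refine Or.inr ⟨u, iter_forceStep_mono (le_max_left _ _) hk0, hadj, ?_⟩
    intro y hy hyw
    have h1 : g y = Nat.find (ihothers y hy hyw) := by
      simp only [hg]; rw [dif_pos ⟨hy, hyw⟩]
    have h2 : y ∈ (forceStep G)^[g y] S := by
      rw [h1]; exact Nat.find_spec (ihothers y hy hyw)
    exact iter_forceStep_mono (le_trans (Finset.le_sup (Finset.mem_univ y)) (le_max_right _ _)) h2

lemma zfs_lower_bound [Fintype V] {b : ℕ} (B : Fin b → Set V)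
    (hclq : ∀ i, G.IsClique (B i))
    (hedge : ∀ {u v : V}, G.Adj u v → ∃ i, u ∈ B i ∧ v ∈ B i)
    {S : Set V} (hS : G.IsZeroForcingSet S) :
    Fintype.card V - b ≤ S.ncard := by
  classical
  have hex : ∀ v : V, ∃ k, v ∈ (forceStep G)^[k] S := fun v => forced_mem_iter (hS v)
  set t : V → ℕ := fun v => Nat.find (hex v) with ht
  have hwit : ∀ v : ↥(Sᶜ), ∃ (k : ℕ) (u : V) (i : Fin b),
      t v.1 = k + 1 ∧ v.1 ∉ (forceStep G)^[k] S ∧ u ∈ (forceStep G)^[k] S ∧ G.Adj u v.1 ∧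
      (∀ y, G.Adj u y → y ≠ v.1 → y ∈ (forceStep G)^[k] S) ∧ u ∈ B i ∧ v.1 ∈ B i := by
    rintro ⟨v, hv⟩
    have htv : t v ≠ 0 := by
      intro h0
      have hsp := Nat.find_spec (hex v)
      rw [show Nat.find (hex v) = t v from rfl, h0] at hsp
      exact hv hsp
    obtain ⟨k, hk⟩ : ∃ k, t v = k + 1 := ⟨t v - 1, by omega⟩
    have hmem : v ∈ (forceStep G)^[k+1] S := by
      have hsp := Nat.find_spec (hex v)
      rwa [show Nat.find (hex v) = t v from rfl, hk] at hsp
    have hnot : v ∉ (forceStep G)^[k] S :=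
      Nat.find_min (hex v) (m := k) (by rw [show Nat.find (hex v) = t v from rfl, hk]; omega)
    rw [Function.iterate_succ_apply'] at hmem
    rcases hmem with hmem | ⟨u, huk, hadj, hoth⟩
    · exact absurd hmem hnot
    · obtain ⟨i, hui, hvi⟩ := hedge hadj
      exact ⟨k, u, i, hk, hnot, huk, hadj, hoth, hui, hvi⟩
  choose k u ι hk hnot hu hadj hoth hui hvi using hwit
  have hinj : Function.Injective ι := by
    have key : ∀ a c : ↥(Sᶜ), ι a = ι c → t a.1 ≤ t c.1 → a = c := by
      intro a c hac hle
      by_contra hne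
      have hvne : a.1 ≠ c.1 := fun h => hne (Subtype.ext h)
      have hcBa : c.1 ∈ B (ι a) := by rw [hac]; exact hvi c
      rcases Nat.lt_or_ge (k a) (k c) with hlt | hge
      · -- B (ι a) ⊆ F (k a + 1)  and  c ∈ it, with k a + 1 ≤ k c
        have hsub : ∀ z ∈ B (ι a), z ∈ (forceStep G)^[k a + 1] S := by
          intro z hz
          rcases eq_or_ne z a.1 with hza | hza
          · rw [hza]
            have hsp := Nat.find_spec (hex a.1)
            rwa [show Nat.find (hex a.1) = t a.1 from rfl, hk a] at hsp
          · rcases eq_or_ne z (u a) with rfl | hzu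
            · exact iter_forceStep_mono (Nat.le_succ _) (hu a)
            · have hadjz : G.Adj (u a) z := hclq (ι a) (hui a) hz hzu.symm
              exact iter_forceStep_mono (Nat.le_succ _) (hoth a z hadjz hza)
        have hc1 : c.1 ∈ (forceStep G)^[k a + 1] S := hsub c.1 hcBa
        have : c.1 ∈ (forceStep G)^[k c] S :=
          iter_forceStep_mono (by omega) hc1
        exact hnot c this
      · -- k c ≤ k a; by t ordering, k a ≤ k c too, so k a = k c
        have hkeq : k a = k c := by
          have h1 : t a.1 = k a + 1 := hk a
          have h2 : t c.1 = k c + 1 := hk c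
          omega
        -- c is a neighbor of u a distinct from a, so c ∈ F (k a), contradiction
        have hcu : c.1 ≠ u a := by
          intro h
          apply hnot c
          rw [← hkeq]
          have := hu a
          rwa [← h] at this
        have hadjc : G.Adj (u a) c.1 := hclq (ι a) (hui a) hcBa hcu.symm
        have := hoth a c.1 hadjc hvne.symm
        rw [hkeq] at this
        exact hnot c this
    intro a c hac
    rcases le_total (t a.1) (t c.1) with h | h
    · exact key a c hac h
    · exact (key c a hac.symm h).symm
  have hcardle : Sᶜ.ncard ≤ b := by
    have h1 : Nat.card ↥(Sᶜ) ≤ Nat.card (Fin b) := Nat.card_le_card_of_injective ι hinj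
    rw [Nat.card_coe_set_eq] at h1
    simpa using h1
  have h2 : S.ncard + Sᶜ.ncard = Fintype.card V := by
    rw [Set.ncard_add_ncard_compl, Nat.card_eq_fintype_card]
  omega
end chunk4

end Aux

/-- Let `G` be a clique tree on `n` vertices with exactly `b`
blocks, each of size at least 3.  Then `Z(G) = n − b`, and consequently
`⌊n/2⌋ + 1 ≤ Z(G) ≤ n − 1`. -/
theorem zeroForcing_cliqueTree_eq_card_sub_blocks {V : Type*} [Fintype V]
    (G : SimpleGraph V) (hG : G.IsCliqueTree)
    (n b : ℕ) (hn : Fintype.card V = n)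
    (B : Fin b → Set V) (hinj : Function.Injective B)
    (hblock : ∀ i, G.IsBlock (B i))
    (hall : ∀ C : Set V, G.IsBlock C → ∃ i, C = B i)
    (hsize : ∀ i, 3 ≤ (B i).ncard) :
    G.zeroForcingNumber = n - b ∧
      n / 2 + 1 ≤ G.zeroForcingNumber ∧ G.zeroForcingNumber ≤ n - 1 := by
  classical
  obtain ⟨hconn, hclique⟩ := hG
  obtain ⟨r⟩ : Nonempty V := hconn.nonempty
  have hBne : ∀ i, (B i).Nonempty := fun i => Set.nonempty_coe_sort.mp (hblock i).1.1.nonempty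
  have hBclq : ∀ i, G.IsClique (B i) := fun i => hclique _ (hblock i)
  have hBneq : ∀ {i j : Fin b}, i ≠ j → B i ≠ B j := fun h hEq => h (hinj hEq)
  -- every edge lies in a block
  have hedge : ∀ {x y : V}, G.Adj x y → ∃ i, x ∈ B i ∧ y ∈ B i := by
    intro x y hxy
    obtain ⟨K, hK, hsub⟩ := exists_block_superset (pair_CNC hxy)
    obtain ⟨i, rfl⟩ := hall K hK
    exact ⟨i, hsub (Or.inl rfl), hsub (Or.inr rfl)⟩
  -- gates
  have hgate : ∀ i, ∃ gi ∈ B i, ∀ z ∈ B i, G.dist r gi ≤ G.dist r z := fun i =>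
    Set.exists_min_image (B i) (fun v => G.dist r v) (Set.toFinite _) (hBne i)
  choose g hgB hgmin using hgate
  have hgu : ∀ i, ∀ z ∈ B i, z ≠ g i → G.dist r (g i) < G.dist r z := by
    intro i z hz hne
    rcases lt_or_eq_of_le (hgmin i z hz) with h | h
    · exact h
    · exact absurd (gate_unique hconn (hblock i) hz (hgB i)
        (fun y hy => by rw [← h]; exact hgmin i y hy) (hgmin i)) hne
  -- a vertex is a non-gate of at most one block
  have hNG : ∀ {i j : Fin b} {v : V}, v ∈ B i → v ≠ g i → v ∈ B j → v ≠ g j → i = j := by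
    intro i j v hvi hgi hvj hgj
    by_contra hne
    exact nongate_unique hconn (hblock i) (hblock j) (hBclq j) (hBneq hne) hvi hvj
      (hgB i) (hgu i v hvi hgi) (hgB j) (hgu j v hvj hgj)
  -- choose a white vertex and a forcer in each block
  have hexw : ∀ i, ∃ a ∈ (B i) \ {g i}, ∃ c ∈ (B i) \ {g i}, a ≠ c := by
    intro i
    rw [← Set.one_lt_ncard (Set.toFinite _)]
    have h1 : ((B i) \ {g i}).ncard = (B i).ncard - 1 :=
      Set.ncard_diff_singleton_of_mem (hgB i)
    have := hsize i
    omega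
  choose w hw u hu hwu using hexw
  have hwB : ∀ i, w i ∈ B i := fun i => (hw i).1
  have hwg : ∀ i, w i ≠ g i := fun i => (hw i).2
  have huB : ∀ i, u i ∈ B i := fun i => (hu i).1
  have hug : ∀ i, u i ≠ g i := fun i => (hu i).2
  have hwinj : Function.Injective w := by
    intro i j hij
    exact hNG (hwB i) (hwg i) (hij ▸ hwB j) (hij ▸ hwg j)
  set S0 : Set V := (Set.range w)ᶜ with hS0
  have hmemS0 : ∀ {x : V}, (∀ m, x ≠ w m) → x ∈ S0 := by
    intro x hx ⟨m, hm⟩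
    exact hx m hm.symm
  have huS : ∀ i, u i ∈ S0 := by
    intro i
    apply hmemS0
    intro m hm
    have : i = m := hNG (huB i) (hug i) (hm ▸ hwB m) (hm ▸ hwg m)
    exact hwu i (by rw [hm, this])
  -- the D-sets and their cardinalities
  set D : V → Set V := fun x => {y | ∀ W : G.Walk r y, x ∈ W.support} with hD
  have hDself : ∀ x, x ∈ D x := fun x W => W.end_mem_support
  have hDsub : ∀ {i : Fin b} {x : V}, x ∈ B i → D x ⊆ D (g i) := by
    intro i x hx y hy W
    have hxW : x ∈ W.support := hy W
    have := gate_on_walks hconn (hblock i) (hgB i) (hgmin i) hx (W.takeUntil x hxW)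
    exact W.support_takeUntil_subset hxW this
  have hDlt : ∀ {i : Fin b} {x : V}, x ∈ B i → x ≠ g i → (D x).ncard < (D (g i)).ncard := by
    intro i x hx hne
    apply Set.ncard_lt_ncard _ (Set.toFinite _)
    rw [Set.ssubset_iff_of_subset (hDsub hx)]
    refine ⟨g i, hDself _, ?_⟩
    intro hgD
    obtain ⟨P, hPp, hPlen⟩ := hconn.exists_path_of_dist r (g i)
    have hxP : x ∈ P.support := hgD P
    have := shortest_le hPlen hxP
    have := hgu i x hx hne
    omega
  -- main forcing claim
  have key : ∀ N (i : Fin b), (D (g i)).ncard ≤ N → G.Forced S0 (g i) → G.Forced S0 (w i) := by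
    intro N
    induction N using Nat.strong_induction_on with
    | _ N IH =>
      intro i hNi hgF
      refine SimpleGraph.Forced.force (u i) (w i) (SimpleGraph.Forced.init _ (huS i)) 
        (hBclq i (huB i) (hwB i) (fun h => hwu i h.symm)) ?_
      intro y hadjy hynew
      by_cases hyS : y ∈ S0
      · exact SimpleGraph.Forced.init _ hyS
      · obtain ⟨m, rfl⟩ : ∃ m, y = w m := by
          have : y ∈ Set.range w := by
            by_contra h
            exact hyS h
          obtain ⟨m, hm⟩ := this
          exact ⟨m, hm.symm⟩
        have hmnei : m ≠ i := fun h => hynew (by rw [h])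
        obtain ⟨j, hui_j, hyj⟩ := hedge hadjy
        by_cases hji : j = i
        · subst hji
          by_cases hgm : w m = g j
          · rw [hgm]; exact hgF
          · exact absurd (hNG (hwB m) (hwg m) hyj hgm) hmnei
        · have hugj : u i = g j := by
            by_contra hne2
            exact hji (hNG hui_j hne2 (huB i) (hug i))
          have hmj : m = j := by
            by_cases hne3 : w m = g j
            · exact absurd (hne3.trans hugj.symm).symm hadjy.ne
            · exact hNG (hwB m) (hwg m) hyj hne3
          subst hmj
          have hlt : (D (g m)).ncard < (D (g i)).ncard := by
            rw [← hugj]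
            exact hDlt (huB i) (hug i)
          exact IH (D (g m)).ncard (lt_of_lt_of_le hlt hNi) m le_rfl
            (by rw [← hugj]; exact SimpleGraph.Forced.init _ (huS i))
  have allW : ∀ N (i : Fin b), G.dist r (g i) ≤ N → G.Forced S0 (w i) := by
    intro N
    induction N using Nat.strong_induction_on with
    | _ N IH =>
      intro i hNi
      apply key _ i le_rfl
      by_cases hgS : g i ∈ S0
      · exact SimpleGraph.Forced.init _ hgS
      · obtain ⟨m, hm⟩ : ∃ m, g i = w m := by
          have : g i ∈ Set.range w := by
            by_contra h
            exact hgS h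
          obtain ⟨m, hm⟩ := this
          exact ⟨m, hm.symm⟩
        have hlt : G.dist r (g m) < G.dist r (g i) := by
          rw [hm]
          exact hgu m (w m) (hwB m) (hwg m)
        rw [hm]
        exact IH (G.dist r (g m)) (by omega) m le_rfl
  have hZFS : G.IsZeroForcingSet S0 := by
    intro v
    by_cases hv : v ∈ S0
    · exact SimpleGraph.Forced.init _ hv
    · obtain ⟨i, hi⟩ : ∃ i, v = w i := by
        have : v ∈ Set.range w := by
          by_contra h
          exact hv h
        obtain ⟨i, hi⟩ := this
        exact ⟨i, hi.symm⟩
      rw [hi]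
      exact allW _ i le_rfl
  -- cardinalities
  have hbn : b ≤ n := by
    have h1 : (Set.range w).ncard ≤ (Set.univ : Set V).ncard :=
      Set.ncard_le_ncard (Set.subset_univ _) (Set.toFinite _)
    rwa [← Set.image_univ, Set.ncard_image_of_injective _ hwinj, Set.ncard_univ,
      Set.ncard_univ, Nat.card_eq_fintype_card, Nat.card_eq_fintype_card, Fintype.card_fin,
      hn] at h1
  have hS0card : S0.ncard = n - b := by
    have h2 : S0.ncard + S0ᶜ.ncard = n := by
      rw [Set.ncard_add_ncard_compl, Nat.card_eq_fintype_card, hn]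
    have h3 : S0ᶜ.ncard = b := by
      rw [hS0, compl_compl, ← Set.image_univ, Set.ncard_image_of_injective _ hwinj,
        Set.ncard_univ, Nat.card_eq_fintype_card, Fintype.card_fin]
    omega
  have hmem : (n - b) ∈ {nn | ∃ S : Set V, S.ncard = nn ∧ G.IsZeroForcingSet S} :=
    ⟨S0, hS0card, hZFS⟩
  have hlow : ∀ m ∈ {nn | ∃ S : Set V, S.ncard = nn ∧ G.IsZeroForcingSet S}, n - b ≤ m := by
    rintro m ⟨S, rfl, hS⟩
    have := zfs_lower_bound B hBclq (fun {x y} h => hedge h) hS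
    rwa [hn] at this
  have hZ : G.zeroForcingNumber = n - b :=
    le_antisymm (Nat.sInf_le hmem) (le_csInf ⟨_, hmem⟩ hlow)
  -- b ≥ 1
  have hb1 : 1 ≤ b := by
    have hCNC : G.IsConnectedNoCutVertexSet {r} := by
      constructor
      · exact singleton_conn r
      · intro v hv
        left
        rcases hv with rfl
        exact Set.diff_eq_empty.mpr (subset_refl _)
    obtain ⟨K, hK, _⟩ := exists_block_superset hCNC
    obtain ⟨i, _⟩ := hall K hK
    exact i.pos
  -- n ≥ 2b+1 via an injection Fin b × Bool → {v // v ≠ r}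
  have hdr : G.dist r r = 0 := SimpleGraph.dist_self
  have hner : ∀ i, ∀ z ∈ B i, z ≠ g i → z ≠ r := by
    intro i z hz hne h
    have := hgu i z hz hne
    rw [h, hdr] at this
    omega
  have hcount : 2 * b + 1 ≤ n := by
    set f : Fin b × Bool → {v : V // v ≠ r} := fun p =>
      if p.2 then ⟨w p.1, hner p.1 _ (hwB p.1) (hwg p.1)⟩
      else ⟨u p.1, hner p.1 _ (huB p.1) (hug p.1)⟩ with hf
    have hfinj : Function.Injective f := by
      rintro ⟨i, ci⟩ ⟨j, cj⟩ hij
      rw [hf] at hij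
      cases ci <;> cases cj <;> simp only [if_true, if_false, Bool.false_eq_true,
        Subtype.mk.injEq, Prod.mk.injEq] at hij ⊢
      · exact ⟨hNG (huB i) (hug i) (by rw [hij]; exact huB j) (by rw [hij]; exact hug j),
          trivial⟩
      · exfalso
        have hji : j = i := hNG (hwB j) (hwg j) (by rw [← hij]; exact huB i)
          (by rw [← hij]; exact hug i)
        rw [hji] at hij
        exact hwu i hij.symm
      · exfalso
        have hji : i = j := hNG (hwB i) (hwg i) (by rw [hij]; exact huB j)
          (by rw [hij]; exact hug j)
        rw [← hji] at hij
        exact hwu i hij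
      · exact ⟨hwinj hij, trivial⟩
    have hcard := Fintype.card_le_of_injective f hfinj
    have h1 : Fintype.card (Fin b × Bool) = 2 * b := by
      rw [Fintype.card_prod, Fintype.card_fin, Fintype.card_bool]
      omega
    have h2 : Fintype.card {v : V // v ≠ r} = n - 1 := by
      have := Fintype.card_subtype_compl (fun v : V => v = r)
      rw [Fintype.card_subtype_eq, hn] at this
      exact this
    have h3 : 1 ≤ n := by
      rw [← hn]
      exact Fintype.card_pos_iff.mpr ⟨r⟩
    omega
  refine ⟨hZ, ?_, ?_⟩ <;> rw [hZ] <;> omega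
end

section
/- Let G be a connected clique tree with adjacency matrix A and let (ρ(G), x) be the eigenpair corresponding to the Perron value, where x is an entrywise positive eigenvector. Let m ≥ 3 and let K_m be a pendant block of G with vertex set {v₁, …, v_m}, where v₁ is the cut vertex contained in this block. Then x_{v₁} > x_{v_i} for all 2 ≤ i ≤ m, and x_{v_i} = x_{v_j} for all i, j ∈ {2, 3, …, m}. -/
open Classical

namespace CliqueTreeAux

open SimpleGraph

variable {V : Type*} {G : SimpleGraph V}

lemma induce_adj' {S : Set V} {a b : V} (ha : a ∈ S) (hb : b ∈ S) (h : G.Adj a b) :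
    (G.induce S).Adj ⟨a, ha⟩ ⟨b, hb⟩ := by simpa using h

lemma reach_of_walk {S : Set V} : ∀ {a b : V} (W : G.Walk a b),
    (∀ v ∈ W.support, v ∈ S) →
    ∀ (ha : a ∈ S) (hb : b ∈ S), (G.induce S).Reachable ⟨a, ha⟩ ⟨b, hb⟩ := by
  intro a b W
  induction W with
  | nil => intro _ ha hb; exact Reachable.refl _
  | @cons a c b h p ih =>
    intro hsup ha hb
    have hc : c ∈ S := hsup c (by simp)
    exact ((induce_adj' ha hc h).reachable).trans
      (ih (fun v hv => hsup v (by simp [hv])) hc hb)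

lemma connected_of_hub {S : Set V} {h : V} (hh : h ∈ S)
    (hr : ∀ a (ha : a ∈ S), (G.induce S).Reachable ⟨a, ha⟩ ⟨h, hh⟩) :
    (G.induce S).Connected := by
  haveI : Nonempty ↑S := ⟨⟨h, hh⟩⟩
  refine ⟨fun a c => ?_⟩
  obtain ⟨a, ha⟩ := a; obtain ⟨c, hc⟩ := c
  exact (hr a ha).trans (hr c hc).symm

lemma walk_in_induce {S : Set V} {a b : S} (W : (G.induce S).Walk a b) :
    ∃ W' : G.Walk a.1 b.1, ∀ v ∈ W'.support, v ∈ S := by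
  refine ⟨W.map (SimpleGraph.Embedding.induce S).toHom, ?_⟩
  intro v hv
  have hv' : v ∈ (W.map (SimpleGraph.Embedding.induce S).toHom).support := hv
  rw [Walk.support_map, List.mem_map] at hv'
  obtain ⟨⟨w, hw⟩, _, h⟩ := hv'
  exact h ▸ hw

lemma path_split {z b : V} {P : G.Walk z b} (hP : P.IsPath) {v w : V}
    (hv : v ∈ P.support) (hwv : w ≠ v) :
    (∃ Q : G.Walk z v, (∀ y ∈ Q.support, y ∈ P.support) ∧ w ∉ Q.support) ∨
    (∃ Q : G.Walk v b, (∀ y ∈ Q.support, y ∈ P.support) ∧ w ∉ Q.support) := by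
  classical
  by_cases hw1 : w ∈ (P.takeUntil v hv).support
  · right
    refine ⟨P.dropUntil v hv, fun y hy => P.support_dropUntil_subset hv hy, ?_⟩
    intro hw2
    have hspec := P.take_spec hv
    have hnd : P.support.Nodup := hP.support_nodup
    rw [← hspec, Walk.support_append] at hnd
    have htail : w ∈ (P.dropUntil v hv).support.tail := by
      have hcons := Walk.support_eq_cons (P.dropUntil v hv)
      rw [hcons] at hw2
      rcases List.mem_cons.mp hw2 with h | h
      · exact absurd h hwv
      · exact h
    exact (List.disjoint_of_nodup_append hnd) hw1 htail
  · left
    exact ⟨P.takeUntil v hv, fun y hy => P.support_takeUntil_subset hv hy, hw1⟩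

/-- A non-cut vertex of a block has all its neighbors inside the block. -/
lemma block_closed {B : Set V} (hB : G.IsBlock B) (hclique : G.IsClique B)
    {u b : V} (hu : u ∈ B) (hb : b ∈ B) (hbu : b ≠ u)
    (hconn : (G.induce ({u}ᶜ : Set V)).Connected)
    {z : V} (hz : G.Adj u z) : z ∈ B := by
  classical
  by_contra hzB
  have hzu : z ≠ u := hz.ne'
  obtain ⟨W0⟩ := hconn.preconnected ⟨z, by simpa using hzu⟩ ⟨b, by simpa using hbu⟩
  obtain ⟨W, hWS⟩ := walk_in_induce W0
  set P := W.bypass with hPdef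
  have hPpath : P.IsPath := W.bypass_isPath
  have hPu : u ∉ P.support := fun h => (hWS u (W.support_bypass_subset h)) rfl
  set C : Set V := B ∪ {v | v ∈ P.support} with hCdef
  have hBC : B ⊆ C := Set.subset_union_left
  have hPC : ∀ v ∈ P.support, v ∈ C := fun v hv => Or.inr hv
  have hzC : z ∈ C := hPC z P.start_mem_support
  have huC : u ∈ C := hBC hu
  have hbC : b ∈ C := hBC hb
  have connC : (G.induce C).Connected := by
    refine connected_of_hub huC (fun a ha => ?_)
    rcases ha with haB | haP
    · by_cases hau : a = u
      · subst hau; exact Reachable.refl _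
      · exact (induce_adj' (hBC haB) huC (hclique haB hu hau)).reachable
    · refine (reach_of_walk (P.dropUntil a haP)
        (fun y hy => hPC y (P.support_dropUntil_subset haP hy)) (hPC a haP) hbC).trans ?_
      exact (induce_adj' hbC huC (hclique hb hu hbu)).reachable
  have connCv : ∀ v ∈ C, (G.induce (C \ {v})).Connected := by
    intro v hvC
    by_cases hvu : v = u
    · have hbm : b ∈ C \ {v} := ⟨hbC, by rw [hvu]; simpa using hbu⟩
      refine connected_of_hub hbm (fun a ha => ?_)
      obtain ⟨haC, hav⟩ := ha
      have hau' : a ≠ u := by rw [← hvu]; simpa using hav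
      rcases haC with haB | haP
      · by_cases hab : a = b
        · subst hab; exact Reachable.refl _
        · exact (induce_adj' (show a ∈ C \ {v} from ⟨hBC haB, hav⟩) hbm (hclique haB hb hab)).reachable
      · have hQsup : ∀ y ∈ (P.dropUntil a haP).support, y ∈ C \ {v} := by
          intro y hy
          have hyP : y ∈ P.support := P.support_dropUntil_subset haP hy
          have hyu : y ≠ u := fun h => hPu (h ▸ hyP)
          exact ⟨hPC y hyP, by rw [hvu]; simpa using hyu⟩
        exact reach_of_walk (S := C \ {v}) (P.dropUntil a haP) hQsup ⟨hPC a haP, hav⟩ hbm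
    · have huv : u ≠ v := fun h => hvu h.symm
      have hum : u ∈ C \ {v} := ⟨huC, by simpa using huv⟩
      refine connected_of_hub hum (fun a ha => ?_)
      obtain ⟨haC, hav⟩ := ha
      have hav' : a ≠ v := by simpa using hav
      rcases haC with haB | haP
      · by_cases hau : a = u
        · subst hau; exact Reachable.refl _
        · exact (induce_adj' (show a ∈ C \ {v} from ⟨hBC haB, hav⟩) hum (hclique haB hu hau)).reachable
      · rcases path_split hPpath haP (Ne.symm hav') with ⟨Q, hQsub, hQv⟩ | ⟨Q, hQsub, hQv⟩
        · have hQS : ∀ y ∈ Q.support, y ∈ C \ {v} := by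
            intro y hy
            refine ⟨hPC y (hQsub y hy), ?_⟩
            intro hmem
            exact hQv ((Set.mem_singleton_iff.mp hmem) ▸ hy)
          have hzm : z ∈ C \ {v} := hQS z Q.start_mem_support
          refine ((reach_of_walk (S := C \ {v}) Q hQS hzm (hQS a Q.end_mem_support)).symm).trans ?_
          exact (induce_adj' hzm hum hz.symm).reachable
        · have hQS : ∀ y ∈ Q.support, y ∈ C \ {v} := by
            intro y hy
            refine ⟨hPC y (hQsub y hy), ?_⟩
            intro hmem
            exact hQv ((Set.mem_singleton_iff.mp hmem) ▸ hy)
          have hbm : b ∈ C \ {v} := hQS b Q.end_mem_support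
          refine (reach_of_walk (S := C \ {v}) Q hQS (hQS a Q.start_mem_support) hbm).trans ?_
          exact (induce_adj' hbm hum (hclique hb hu hbu)).reachable
  have hBeq : B = C := hB.2 C hBC ⟨connC, fun v hv => Or.inr (connCv v hv)⟩
  exact hzB (hBeq ▸ hzC)

/-- A cut vertex of a clique block has a neighbor outside the block. -/
lemma exists_outside {B : Set V} (hclique : G.IsClique B)
    {v₁ : V} (hcut : G.IsCutVertex v₁)
    {b₀ : V} (hb₀ : b₀ ∈ B) (hb₀v : b₀ ≠ v₁) : ∃ z, G.Adj v₁ z ∧ z ∉ B := by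
  classical
  by_contra hcon
  push_neg at hcon
  apply hcut.2
  have hb₀m : b₀ ∈ ({v₁}ᶜ : Set V) := by simpa using hb₀v
  have key : ∀ (y w : V) (_ : G.Walk y w), w = v₁ → ∀ (hy : y ∈ ({v₁}ᶜ : Set V)),
      (G.induce ({v₁}ᶜ : Set V)).Reachable ⟨y, hy⟩ ⟨b₀, hb₀m⟩ := by
    intro y w W
    induction W with
    | nil =>
      intro hw hy
      rw [hw] at hy
      simp at hy
    | @cons y c w h p ih =>
      intro hw hy
      by_cases hcv : c = v₁
      · have hyB : y ∈ B := hcon y (hcv ▸ h.symm)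
        have hyv : y ≠ v₁ := by simpa using hy
        by_cases hyb : y = b₀
        · subst hyb; exact Reachable.refl _
        · exact (induce_adj' hy hb₀m (hclique hyB hb₀ hyb)).reachable
      · have hcm : c ∈ ({v₁}ᶜ : Set V) := by simpa using hcv
        exact ((induce_adj' hy hcm h).reachable).trans (ih hw hcm)
  refine connected_of_hub hb₀m (fun y hy => ?_)
  obtain ⟨W⟩ := hcut.1.preconnected y v₁
  exact key y v₁ W rfl hy

end CliqueTreeAux
/-- Let `G` be a connected clique tree with Perron eigenpair
`(ρ(G), x)` (`x` entrywise positive), and let `K_m` (`m ≥ 3`) be a pendant block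
of `G` with vertex set `{v₁, …, v_m}`, `v₁` being the cut vertex.  Then
`x_{v₁} > x_{v_i}` for all `2 ≤ i ≤ m`, and `x_{v_i} = x_{v_j}` for all
`i, j ∈ {2, …, m}`. -/
theorem perron_entries_pendant_block {V : Type*} [Fintype V] (G : SimpleGraph V)
    (hG : G.IsCliqueTree)
    (m : ℕ) (hm : 3 ≤ m)
    (B : Set V) (hB : G.IsBlock B) (hBcard : B.ncard = m)
    (v₁ : V) (hv₁ : v₁ ∈ B) (hcut : G.IsCutVertex v₁)
    (hpendant : ∀ u ∈ B, G.IsCutVertex u → u = v₁)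
    (x : V → ℝ) (hx : ∀ v, 0 < x v)
    (heig : G.adjMatR.mulVec x = G.specRad • x) :
    (∀ u ∈ B, u ≠ v₁ → x u < x v₁) ∧
      (∀ u ∈ B, ∀ w ∈ B, u ≠ v₁ → w ≠ v₁ → x u = x w) := by
  classical
  obtain ⟨hGconn, hclall⟩ := hG
  have hclique : G.IsClique B := hclall B hB
  have hcard2 : 1 < B.ncard := by omega
  obtain ⟨u₀, hu₀, hu₀v⟩ := Set.exists_ne_of_one_lt_ncard hcard2 v₁
  -- neighbors of a non-cut vertex of the pendant block are exactly B \ {u}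
  have hnb : ∀ u ∈ B, u ≠ v₁ → ∀ j, G.Adj u j ↔ (j ∈ B ∧ j ≠ u) := by
    intro u hu huv j
    constructor
    · intro hadj
      have hnotcut : ¬ G.IsCutVertex u := fun hc => huv (hpendant u hu hc)
      have hconn : (G.induce ({u}ᶜ : Set V)).Connected := by
        by_contra hc; exact hnotcut ⟨hGconn, hc⟩
      obtain ⟨b, hb, hbu⟩ := Set.exists_ne_of_one_lt_ncard hcard2 u
      exact ⟨CliqueTreeAux.block_closed hB hclique hu hb hbu hconn hadj, hadj.ne'⟩
    · rintro ⟨hj, hju⟩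
      exact hclique hu hj (Ne.symm hju)
  obtain ⟨z, hzadj, hzB⟩ := CliqueTreeAux.exists_outside hclique hcut hu₀ hu₀v
  set ρ := G.specRad with hρ
  have hrow : ∀ a : V, (∑ j, if G.Adj a j then x j else 0) = ρ * x a := by
    intro a
    have h := congrFun heig a
    simpa [SimpleGraph.adjMatR, Matrix.mulVec, dotProduct, ite_mul, one_mul,
      zero_mul, Pi.smul_apply, smul_eq_mul] using h
  set Bf : Finset V := Finset.univ.filter (fun j => j ∈ B) with hBf
  have hmemBf : ∀ j, j ∈ Bf ↔ j ∈ B := by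
    intro j; simp [hBf]
  set Sb := ∑ j ∈ Bf, x j with hSb
  have hkey : ∀ u ∈ B, u ≠ v₁ → (ρ + 1) * x u = Sb := by
    intro u hu huv
    have hfilter : Finset.univ.filter (fun j => G.Adj u j) = Bf.erase u := by
      ext j
      simp only [Finset.mem_filter, Finset.mem_univ, true_and, Finset.mem_erase, hmemBf]
      rw [hnb u hu huv j]
      tauto
    have h1 : ρ * x u = ∑ j ∈ Bf.erase u, x j := by
      rw [← hrow u, ← Finset.sum_filter, hfilter]
    have hu' : u ∈ Bf := (hmemBf u).2 hu
    have h2 := Finset.sum_erase_add Bf x hu'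
    rw [← hSb] at h2
    nlinarith [h1, h2]
  have hρpos : 0 < ρ + 1 := by
    have hk := hkey u₀ hu₀ hu₀v
    have hu' : u₀ ∈ Bf := (hmemBf u₀).2 hu₀
    have hv' : v₁ ∈ Bf.erase u₀ := Finset.mem_erase.mpr ⟨Ne.symm hu₀v, (hmemBf v₁).2 hv₁⟩
    have h3 : x v₁ ≤ ∑ j ∈ Bf.erase u₀, x j :=
      Finset.single_le_sum (fun i _ => (hx i).le) hv'
    have h4 := Finset.sum_erase_add Bf x hu'
    rw [← hSb] at h4
    nlinarith [hx u₀, hx v₁, hk]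
  have heq : ∀ u ∈ B, ∀ w ∈ B, u ≠ v₁ → w ≠ v₁ → x u = x w := by
    intro u hu w hw huv hwv
    have h := (hkey u hu huv).trans (hkey w hw hwv).symm
    exact mul_left_cancel₀ (ne_of_gt hρpos) h
  have hlt : ∀ u ∈ B, u ≠ v₁ → x u < x v₁ := by
    intro u hu huv
    have hzBf : z ∉ Bf.erase v₁ := fun h => hzB ((hmemBf z).1 (Finset.mem_of_mem_erase h))
    have hsub : insert z (Bf.erase v₁) ⊆ Finset.univ.filter (fun j => G.Adj v₁ j) := by
      intro j hj
      rcases Finset.mem_insert.mp hj with rfl | hj'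
      · simp [hzadj]
      · obtain ⟨hjv, hjB⟩ := Finset.mem_erase.mp hj'
        simp only [Finset.mem_filter, Finset.mem_univ, true_and]
        exact hclique hv₁ ((hmemBf j).1 hjB) (Ne.symm hjv)
    have hge : ∑ j ∈ insert z (Bf.erase v₁), x j
        ≤ ∑ j ∈ Finset.univ.filter (fun j => G.Adj v₁ j), x j :=
      Finset.sum_le_sum_of_subset_of_nonneg hsub (fun i _ _ => (hx i).le)
    have hins : ∑ j ∈ insert z (Bf.erase v₁), x j = x z + ∑ j ∈ Bf.erase v₁, x j :=
      Finset.sum_insert hzBf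
    have hrv : ∑ j ∈ Finset.univ.filter (fun j => G.Adj v₁ j), x j = ρ * x v₁ := by
      rw [← hrow v₁, ← Finset.sum_filter]
    have hv' : v₁ ∈ Bf := (hmemBf v₁).2 hv₁
    have herase := Finset.sum_erase_add Bf x hv'
    rw [← hSb] at herase
    have hku := hkey u hu huv
    -- (ρ+1) * x v₁ ≥ Sb + x z = (ρ+1) * x u + x z
    by_contra hle
    push_neg at hle
    have hmul := mul_le_mul_of_nonneg_left hle hρpos.le
    nlinarith [hx z]
  exact ⟨hlt, heq⟩
end

section
/- Let G be a clique tree consisting of one block K_m with m ≥ 3 and all remaining blocks isomorphic to K₃, each attached at a vertex of K_m, with triangle blocks attached at more than one vertex of K_m. Let x be a Perron vector of G, label the vertices of K_m as v₁, …, v_m so that x_{v₁} ≥ x_{v_i} for all 1 ≤ i ≤ m, and let G* be the graph obtained from G by reattaching all the triangle blocks at the single vertex v₁. Then ρ(G) < ρ(G*). -/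
open Classical

namespace CTAux
variable {V : Type*}

lemma clique_induce_connected (G : SimpleGraph V) {S : Set V} (hS : G.IsClique S)
    (hne : S.Nonempty) : (G.induce S).Connected := by
  rw [SimpleGraph.connected_iff]
  refine ⟨fun a b => ?_, ⟨⟨hne.choose, hne.choose_spec⟩⟩⟩
  by_cases hab : a = b
  · subst hab; exact SimpleGraph.Reachable.refl _
  · refine SimpleGraph.Adj.reachable ?_
    simp only [SimpleGraph.comap_adj, Function.Embedding.coe_subtype]
    exact hS a.2 b.2 (fun h => hab (Subtype.ext h))

lemma clique_CNCV (G : SimpleGraph V) {S : Set V} (hS : G.IsClique S)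
    (hne : S.Nonempty) : G.IsConnectedNoCutVertexSet S := by
  refine ⟨clique_induce_connected G hS hne, fun v hv => ?_⟩
  rcases (S \ {v}).eq_empty_or_nonempty with h | h
  · exact Or.inl h
  · exact Or.inr (clique_induce_connected G (hS.subset Set.diff_subset) h)

lemma exists_block_superset_s4 [Fintype V] (G : SimpleGraph V) {S : Set V}
    (hS : G.IsConnectedNoCutVertexSet S) : ∃ B, G.IsBlock B ∧ S ⊆ B := by
  obtain ⟨B, hB, hmax⟩ := Set.Finite.exists_maximalFor Set.ncard
    {C : Set V | S ⊆ C ∧ G.IsConnectedNoCutVertexSet C} (Set.toFinite _) ⟨S, subset_rfl, hS⟩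
  refine ⟨B, ⟨hB.2, fun C hBC hC => ?_⟩, hB.1⟩
  have hCmem : C ∈ {C : Set V | S ⊆ C ∧ G.IsConnectedNoCutVertexSet C} :=
    ⟨hB.1.trans hBC, hC⟩
  have h1 : B.ncard ≤ C.ncard := Set.ncard_le_ncard hBC (Set.toFinite _)
  exact Set.eq_of_subset_of_ncard_le hBC (hmax hCmem h1) (Set.toFinite _)

lemma isClique_triple {G : SimpleGraph V} {a b c : V} (hab : G.Adj a b)
    (hac : G.Adj a c) (hbc : G.Adj b c) : G.IsClique ({a, b, c} : Set V) := by
  intro u hu v hv huv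
  simp only [Set.mem_insert_iff, Set.mem_singleton_iff] at hu hv
  rcases hu with rfl | rfl | rfl <;> rcases hv with rfl | rfl | rfl <;>
    first
      | exact absurd rfl huv
      | assumption
      | exact hab.symm
      | exact hac.symm
      | exact hbc.symm

lemma isClique_pair {G : SimpleGraph V} {a b : V} (hab : G.Adj a b) :
    G.IsClique ({a, b} : Set V) := by
  intro u hu v hv huv
  simp only [Set.mem_insert_iff, Set.mem_singleton_iff] at hu hv
  rcases hu with rfl | rfl <;> rcases hv with rfl | rfl <;>
    first
      | exact absurd rfl huv
      | assumption
      | exact hab.symm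

lemma edge_block [Fintype V] (G : SimpleGraph V) {i j : V} (hij : G.Adj i j) :
    ∃ D, G.IsBlock D ∧ i ∈ D ∧ j ∈ D := by
  obtain ⟨B, hB, hsub⟩ := exists_block_superset_s4 G
    (clique_CNCV G (isClique_pair hij) ⟨i, by simp⟩)
  exact ⟨B, hB, hsub (by simp), hsub (by simp)⟩

lemma exists_adj [Fintype V] (G : SimpleGraph V) (hc : G.Connected)
    (hcard : 2 ≤ Fintype.card V) (u : V) : ∃ v, G.Adj u v := by
  haveI : Nontrivial V := Fintype.one_lt_card_iff_nontrivial.mp hcard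
  obtain ⟨v, hv⟩ := exists_ne u
  obtain ⟨w⟩ := hc.preconnected u v
  cases w with
  | nil => exact absurd rfl hv
  | cons h p => exact ⟨_, h⟩

end CTAux

/-- Let `G` be a clique tree with one block `K_m` (`m ≥ 3`, with
vertex set `B₀`) and all remaining blocks triangles attached at vertices of
`K_m`, attached at more than one vertex of `K_m`.  Let `x` be a Perron vector of
`G`, label the vertices of `K_m` so that `x_{v₁}` is largest, and let `G*` be
obtained from `G` by reattaching all the triangle blocks at the single vertex
`v₁`.  Then `ρ(G) < ρ(G*)`. -/
theorem specRad_lt_move_triangles {V : Type*} [Fintype V] (G : SimpleGraph V)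
    (hG : G.IsCliqueTree)
    (m : ℕ) (hm : 3 ≤ m)
    (B₀ : Set V) (hB₀ : G.IsBlock B₀) (hB₀card : B₀.ncard = m)
    (htri : ∀ C : Set V, G.IsBlock C → C ≠ B₀ →
      C.ncard = 3 ∧ ∃! w, w ∈ C ∩ B₀)
    (hmany : ∃ C₁ C₂ : Set V, G.IsBlock C₁ ∧ G.IsBlock C₂ ∧ C₁ ≠ B₀ ∧ C₂ ≠ B₀ ∧
      ∃ w₁ ∈ C₁ ∩ B₀, ∃ w₂ ∈ C₂ ∩ B₀, w₁ ≠ w₂)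
    (x : V → ℝ) (hx : ∀ v, 0 < x v)
    (heig : G.adjMatR.mulVec x = G.specRad • x)
    (v₁ : V) (hv₁ : v₁ ∈ B₀) (hmax : ∀ u ∈ B₀, x u ≤ x v₁)
    (Gstar : SimpleGraph V)
    (hGstar : Gstar = SimpleGraph.fromRel (fun i j =>
      (i ∈ B₀ ∧ j ∈ B₀) ∨
      (i ∉ B₀ ∧ j ∉ B₀ ∧ ∃ C : Set V, G.IsBlock C ∧ C ≠ B₀ ∧ i ∈ C ∧ j ∈ C) ∨
      (i = v₁ ∧ j ∉ B₀))) :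
    G.specRad < Gstar.specRad := by
  subst hGstar
  have hclB₀ : G.IsClique B₀ := hG.2 B₀ hB₀
  -- basic cardinality facts
  have hcardV : 3 ≤ Fintype.card V := by
    calc 3 ≤ m := hm
    _ = B₀.ncard := hB₀card.symm
    _ ≤ (Set.univ : Set V).ncard := Set.ncard_le_ncard (Set.subset_univ _) (Set.toFinite _)
    _ = Fintype.card V := by rw [Set.ncard_univ, Nat.card_eq_fintype_card]
  -- KEY: each vertex outside B₀ has a unique neighbour in B₀
  have key : ∀ u, u ∉ B₀ → ∃! i, i ∈ B₀ ∧ G.Adj i u := by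
    intro u hu
    obtain ⟨v, huv⟩ := CTAux.exists_adj G hG.1 (by omega) u
    obtain ⟨D, hD, hiD, hjD⟩ := CTAux.edge_block G huv
    have hDne : D ≠ B₀ := fun h => hu (h ▸ hiD)
    obtain ⟨-, w, ⟨hwD, hwB⟩, -⟩ := htri D hD hDne
    have hwu : G.Adj w u := hG.2 D hD hwD hiD (fun h => hu (h ▸ hwB))
    refine ⟨w, ⟨hwB, hwu⟩, ?_⟩
    rintro i ⟨hiB, hiu⟩
    by_contra hne
    have hiw : G.Adj i w := hclB₀ hiB hwB hne
    have hcl3 : G.IsClique ({i, w, u} : Set V) :=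
      CTAux.isClique_triple hiw hiu hwu
    obtain ⟨E, hE, hsubE⟩ := CTAux.exists_block_superset_s4 G
      (CTAux.clique_CNCV G hcl3 ⟨i, by simp⟩)
    have huE : u ∈ E := hsubE (by simp)
    have hEne : E ≠ B₀ := fun h => hu (h ▸ huE)
    obtain ⟨-, w', -, huniq⟩ := htri E hE hEne
    have h1 : i = w' := huniq i ⟨hsubE (by simp), hiB⟩
    have h2 : w = w' := huniq w ⟨hsubE (by simp), hwB⟩
    exact hne (h1.trans h2.symm)
  -- the attachment map
  set wf : V → V := fun u => if hu : u ∉ B₀ then (key u hu).choose else v₁ with hwf_def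
  have hwf_memB : ∀ u, wf u ∈ B₀ := by
    intro u
    by_cases hu : u ∉ B₀
    · simp only [hwf_def, dif_pos hu]
      exact (key u hu).choose_spec.1.1
    · simp only [hwf_def, dif_neg hu]; exact hv₁
  have hwf_adj : ∀ u, u ∉ B₀ → G.Adj (wf u) u := by
    intro u hu
    simp only [hwf_def, dif_pos hu]
    exact (key u hu).choose_spec.1.2
  have hwf_uniq : ∀ u, u ∉ B₀ → ∀ i, i ∈ B₀ → G.Adj i u → i = wf u := by
    intro u hu i hiB hiu
    simp only [hwf_def, dif_pos hu]
    exact (key u hu).choose_spec.2 i ⟨hiB, hiu⟩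
  -- adjacency characterizations
  have hadj_bb : ∀ i ∈ B₀, ∀ j ∈ B₀, (G.Adj i j ↔ i ≠ j) := by
    intro i hi j hj
    exact ⟨SimpleGraph.Adj.ne, fun h => hclB₀ hi hj h⟩
  have hadj_bn : ∀ i ∈ B₀, ∀ j, j ∉ B₀ → (G.Adj i j ↔ i = wf j) := by
    intro i hi j hj
    constructor
    · intro h; exact hwf_uniq j hj i hi h
    · rintro rfl; exact hwf_adj j hj
  have hadj_nn : ∀ i, i ∉ B₀ → ∀ j, j ∉ B₀ →
      (G.Adj i j ↔ (i ≠ j ∧ ∃ C : Set V, G.IsBlock C ∧ C ≠ B₀ ∧ i ∈ C ∧ j ∈ C)) := by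
    intro i hi j hj
    constructor
    · intro h
      obtain ⟨D, hD, hiD, hjD⟩ := CTAux.edge_block G h
      exact ⟨h.ne, D, hD, fun he => hi (he ▸ hiD), hiD, hjD⟩
    · rintro ⟨hne, C, hC, -, hiC, hjC⟩
      exact hG.2 C hC hiC hjC hne
  
  -- name the new graph
  set Gs : SimpleGraph V := SimpleGraph.fromRel (fun i j =>
      (i ∈ B₀ ∧ j ∈ B₀) ∨
      (i ∉ B₀ ∧ j ∉ B₀ ∧ ∃ C : Set V, G.IsBlock C ∧ C ≠ B₀ ∧ i ∈ C ∧ j ∈ C) ∨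
      (i = v₁ ∧ j ∉ B₀)) with hGs
  -- Gstar adjacency characterizations
  have hs_bb : ∀ i ∈ B₀, ∀ j ∈ B₀, (Gs.Adj i j ↔ i ≠ j) := by
    intro i hi j hj
    rw [hGs, SimpleGraph.fromRel_adj]
    exact ⟨fun h => h.1, fun h => ⟨h, Or.inl (Or.inl ⟨hi, hj⟩)⟩⟩
  have hs_bn : ∀ i ∈ B₀, ∀ j, j ∉ B₀ → (Gs.Adj i j ↔ i = v₁) := by
    intro i hi j hj
    rw [hGs, SimpleGraph.fromRel_adj]
    constructor
    · rintro ⟨hne, (⟨-, hjB⟩ | ⟨hiB, -, -⟩ | ⟨h1, -⟩) | (⟨hjB, -⟩ | ⟨-, hiB, -⟩ | ⟨hjv, -⟩)⟩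
      · exact absurd hjB hj
      · exact absurd hi hiB
      · exact h1
      · exact absurd hjB hj
      · exact absurd hi hiB
      · exact absurd (hjv ▸ hv₁) hj
    · rintro rfl
      exact ⟨fun h => hj (h ▸ hi), Or.inl (Or.inr (Or.inr ⟨rfl, hj⟩))⟩
  have hs_nn : ∀ i, i ∉ B₀ → ∀ j, j ∉ B₀ → (Gs.Adj i j ↔ G.Adj i j) := by
    intro i hi j hj
    rw [hGs, SimpleGraph.fromRel_adj, hadj_nn i hi j hj]
    constructor
    · rintro ⟨hne, (⟨hiB, -⟩ | ⟨-, -, C, hC, hCne, hiC, hjC⟩ | ⟨hiv, -⟩) |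
        (⟨hjB, -⟩ | ⟨-, -, C, hC, hCne, hjC, hiC⟩ | ⟨hjv, -⟩)⟩
      · exact absurd hiB hi
      · exact ⟨hne, C, hC, hCne, hiC, hjC⟩
      · exact absurd (hiv ▸ hv₁) hi
      · exact absurd hjB hj
      · exact ⟨hne, C, hC, hCne, hiC, hjC⟩
      · exact absurd (hjv ▸ hv₁) hj
    · rintro ⟨hne, C, hC, hCne, hiC, hjC⟩
      exact ⟨hne, Or.inl (Or.inr (Or.inl ⟨hi, hj, C, hC, hCne, hiC, hjC⟩))⟩
  -- the correction matrix
  set d : V → V → ℝ := fun i j => if i ∈ B₀ then 0 else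
      ((if j = v₁ then (1:ℝ) else 0) - (if j = wf i then (1:ℝ) else 0)) with hd
  have hentry : ∀ i j, Gs.adjMatR i j = G.adjMatR i j + d i j + d j i := by
    intro i j
    by_cases hi : i ∈ B₀ <;> by_cases hj : j ∈ B₀
    · have h1 := hs_bb i hi j hj
      have h2 := hadj_bb i hi j hj
      simp [SimpleGraph.adjMatR, h1, h2, hd, hi, hj]
    · have h1 := hs_bn i hi j hj
      have h2 := hadj_bn i hi j hj
      simp only [SimpleGraph.adjMatR, Matrix.of_apply, h1, h2, hd, if_pos hi, if_neg hj]
      ring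
    · have h1 : Gs.Adj i j ↔ j = v₁ := by
        rw [Gs.adj_comm]; exact hs_bn j hj i hi
      have h2 : G.Adj i j ↔ j = wf i := by
        rw [G.adj_comm]; exact hadj_bn j hj i hi
      simp only [SimpleGraph.adjMatR, Matrix.of_apply, h1, h2, hd, if_pos hj, if_neg hi]
      ring
    · have h1 := hs_nn i hi j hj
      have hjv : j ≠ v₁ := fun h => hj (h ▸ hv₁)
      have hiv : i ≠ v₁ := fun h => hi (h ▸ hv₁)
      have hjw : j ≠ wf i := fun h => hj (h ▸ hwf_memB i)
      have hiw : i ≠ wf j := fun h => hi (h ▸ hwf_memB j)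
      simp [SimpleGraph.adjMatR, h1, hd, hi, hj, hjv, hiv, hjw, hiw]
  -- row sums of the correction
  have hrow : ∀ i, (∑ j, d i j * x j) = if i ∈ B₀ then 0 else x v₁ - x (wf i) := by
    intro i
    by_cases hi : i ∈ B₀
    · simp [hd, hi]
    · simp [hd, if_neg hi, sub_mul, Finset.sum_sub_distrib, ite_mul, one_mul, zero_mul,
        Finset.sum_ite_eq']
  have hmv : ∀ i, Gs.adjMatR.mulVec x i
      = G.adjMatR.mulVec x i + (∑ j, d i j * x j) + (∑ j, d j i * x j) := by
    intro i
    simp only [Matrix.mulVec, dotProduct]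
    rw [← Finset.sum_add_distrib, ← Finset.sum_add_distrib]
    exact Finset.sum_congr rfl fun j _ => by rw [hentry i j]; ring
  have hρcoord : ∀ i, G.adjMatR.mulVec x i = G.specRad * x i := by
    intro i
    rw [heig]
    simp
  -- a triangle attached away from v₁
  have hwit : ∃ u, u ∉ B₀ ∧ wf u ≠ v₁ := by
    obtain ⟨C₁, C₂, hC₁, hC₂, hC₁ne, hC₂ne, w₁, hw₁, w₂, hw₂, hww⟩ := hmany
    have hpick : ∃ C w, G.IsBlock C ∧ C ≠ B₀ ∧ w ∈ C ∩ B₀ ∧ w ≠ v₁ := by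
      by_cases h : w₁ = v₁
      · exact ⟨C₂, w₂, hC₂, hC₂ne, hw₂, fun he => hww (h.trans he.symm)⟩
      · exact ⟨C₁, w₁, hC₁, hC₁ne, hw₁, h⟩
    obtain ⟨C, w, hC, hCne, ⟨hwC, hwB⟩, hwv⟩ := hpick
    obtain ⟨hcard3, w', -, huniq⟩ := htri C hC hCne
    have hgt : (1:ℕ) < C.ncard := by rw [hcard3]; norm_num
    obtain ⟨u, huC, hune⟩ := Set.exists_ne_of_one_lt_ncard hgt w
    have huB : u ∉ B₀ := fun h => hune ((huniq u ⟨huC, h⟩).trans (huniq w ⟨hwC, hwB⟩).symm)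
    have hadjwu : G.Adj w u := hG.2 C hC hwC huC (fun he => hune he.symm)
    have hwu : w = wf u := hwf_uniq u huB w hwB hadjwu
    exact ⟨u, huB, fun he => hwv (hwu.trans he)⟩
  obtain ⟨u0, hu0B, hu0wf⟩ := hwit
  -- strict gain at v₁
  have hC2 : G.specRad * x v₁ < Gs.adjMatR.mulVec x v₁ := by
    rw [hmv v₁, hρcoord v₁]
    have hL0 : (∑ j, d v₁ j * x j) = 0 := by rw [hrow v₁, if_pos hv₁]
    have hpos : 0 < ∑ j, d j v₁ * x j := by
      refine Finset.sum_pos' (fun j _ => ?_) ⟨u0, Finset.mem_univ u0, ?_⟩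
      · by_cases hj : j ∈ B₀
        · simp [hd, hj]
        · refine mul_nonneg ?_ (hx j).le
          simp only [hd, if_neg hj]
          rcases eq_or_ne v₁ (wf j) with h | h
          · simp [h]
          · simp [h]
      · have hne : v₁ ≠ wf u0 := fun h => hu0wf h.symm
        simpa [hd, hu0B, hne] using hx u0
    linarith
  -- quadratic form comparison
  have hQ : G.specRad * (∑ i, x i * x i) ≤ ∑ i, Gs.adjMatR.mulVec x i * x i := by
    have e1 : ∑ i, Gs.adjMatR.mulVec x i * x i
        = ∑ i, G.adjMatR.mulVec x i * x i + (∑ i, (∑ j, d i j * x j) * x i)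
          + (∑ i, (∑ j, d j i * x j) * x i) := by
      rw [← Finset.sum_add_distrib, ← Finset.sum_add_distrib]
      exact Finset.sum_congr rfl fun i _ => by rw [hmv i]; ring
    have e2 : (∑ i, (∑ j, d j i * x j) * x i) = (∑ i, (∑ j, d i j * x j) * x i) := by
      calc ∑ i, (∑ j, d j i * x j) * x i = ∑ i, ∑ j, d j i * x j * x i := by
            simp [Finset.sum_mul]
      _ = ∑ j, ∑ i, d j i * x j * x i := Finset.sum_comm
      _ = ∑ j, (∑ i, d j i * x i) * x j := by
            refine Finset.sum_congr rfl fun j _ => ?_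
            rw [Finset.sum_mul]
            exact Finset.sum_congr rfl fun i _ => by ring
    have e3 : 0 ≤ ∑ i, (∑ j, d i j * x j) * x i := by
      refine Finset.sum_nonneg fun i _ => ?_
      rw [hrow i]
      by_cases hi : i ∈ B₀
      · simp [hi]
      · rw [if_neg hi]
        exact mul_nonneg (sub_nonneg.mpr (hmax _ (hwf_memB i))) (hx i).le
    have e4 : ∑ i, G.adjMatR.mulVec x i * x i = G.specRad * ∑ i, x i * x i := by
      rw [Finset.mul_sum]
      exact Finset.sum_congr rfl fun i _ => by rw [hρcoord i]; ring
    rw [e1, e2, e4]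
    linarith
  -- analytic part
  haveI : Nonempty V := Fintype.card_pos_iff.mp (by omega)
  let xE : EuclideanSpace ℝ V := WithLp.toLp 2 x
  have hxE0 : xE ≠ 0 := by
    intro h
    exact (hx v₁).ne' (by simpa [xE] using congrFun (congrArg WithLp.ofLp h) v₁)
  let LE : EuclideanSpace ℝ V →ₗ[ℝ] EuclideanSpace ℝ V :=
    { toFun := fun y => WithLp.toLp 2 (Gs.adjMatR.mulVec y)
      map_add' := fun y z => by simp [Matrix.mulVec_add]
      map_smul' := fun c y => by simp [Matrix.mulVec_smul] }
  let T : EuclideanSpace ℝ V →L[ℝ] EuclideanSpace ℝ V := LinearMap.toContinuousLinearMap LE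
  have hinner : ∀ y z : EuclideanSpace ℝ V, inner ℝ y z = ∑ i, y i * z i := by
    intro y z
    rw [PiLp.inner_apply]
    exact Finset.sum_congr rfl fun i _ => by simp [RCLike.inner_apply, conj_trivial, mul_comm]
  have hA2symm : ∀ i j, Gs.adjMatR i j = Gs.adjMatR j i := by
    intro i j
    simp [SimpleGraph.adjMatR, SimpleGraph.adj_comm]
  have hsymmLE : LinearMap.IsSymmetric LE := by
    intro y z
    rw [hinner, hinner]
    show (∑ i, Gs.adjMatR.mulVec y i * z i) = ∑ i, y i * Gs.adjMatR.mulVec z i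
    simp only [Matrix.mulVec, dotProduct]
    calc ∑ i, (∑ j, Gs.adjMatR i j * y j) * z i
        = ∑ i, ∑ j, Gs.adjMatR i j * y j * z i := by simp [Finset.sum_mul]
    _ = ∑ j, ∑ i, Gs.adjMatR i j * y j * z i := Finset.sum_comm
    _ = ∑ j, y j * (∑ i, Gs.adjMatR j i * z i) := by
        refine Finset.sum_congr rfl fun j _ => ?_
        rw [Finset.mul_sum]
        exact Finset.sum_congr rfl fun i _ => by rw [hA2symm i j]; ring
  have hcoeT : (T : EuclideanSpace ℝ V →ₗ[ℝ] EuclideanSpace ℝ V) = LE :=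
    LinearMap.coe_toContinuousLinearMap LE
  have hSA : IsSelfAdjoint T := by
    rw [ContinuousLinearMap.isSelfAdjoint_iff_isSymmetric, hcoeT]
    exact hsymmLE
  have hTapp : ∀ y : EuclideanSpace ℝ V, T y = Gs.adjMatR.mulVec y := fun y => rfl
  have hre : ∀ y : EuclideanSpace ℝ V,
      T.reApplyInnerSelf y = ∑ i, Gs.adjMatR.mulVec y i * y i := by
    intro y
    calc T.reApplyInnerSelf y = inner ℝ (T y) y := rfl
    _ = ∑ i, Gs.adjMatR.mulVec y i * y i := by rw [hinner, hTapp]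
  have hnormsq : ∀ y : EuclideanSpace ℝ V, ‖y‖ ^ 2 = ∑ i, y i * y i := by
    intro y
    rw [← real_inner_self_eq_norm_sq, hinner]
  have hray : ∀ z : EuclideanSpace ℝ V,
      T.rayleighQuotient z = T.reApplyInnerSelf z / ‖z‖ ^ 2 := fun _ => rfl
  have hxnorm_pos : (0:ℝ) < ‖xE‖ ^ 2 := by
    rw [hnormsq]
    exact Finset.sum_pos (fun i _ => mul_pos (hx i) (hx i)) Finset.univ_nonempty
  set lam : ℝ := ⨆ y : { y : EuclideanSpace ℝ V // y ≠ 0 }, T.rayleighQuotient (y : EuclideanSpace ℝ V) with hlam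
  have hBdd : BddAbove (Set.range fun y : { y : EuclideanSpace ℝ V // y ≠ 0 } =>
      T.rayleighQuotient (y : EuclideanSpace ℝ V)) := by
    refine ⟨‖T‖, ?_⟩
    rintro t ⟨y, rfl⟩
    show T.rayleighQuotient (y : EuclideanSpace ℝ V) ≤ ‖T‖
    have hny : (0:ℝ) < ‖(y : EuclideanSpace ℝ V)‖ := norm_pos_iff.mpr y.2
    have h1 : T.reApplyInnerSelf (y : EuclideanSpace ℝ V)
        ≤ ‖T‖ * ‖(y : EuclideanSpace ℝ V)‖ ^ 2 := by
      calc T.reApplyInnerSelf (y : EuclideanSpace ℝ V)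
          = inner ℝ (T (y : EuclideanSpace ℝ V)) (y : EuclideanSpace ℝ V) := rfl
      _ ≤ ‖T (y : EuclideanSpace ℝ V)‖ * ‖(y : EuclideanSpace ℝ V)‖ := real_inner_le_norm _ _
      _ ≤ (‖T‖ * ‖(y : EuclideanSpace ℝ V)‖) * ‖(y : EuclideanSpace ℝ V)‖ :=
            mul_le_mul_of_nonneg_right (T.le_opNorm _) (norm_nonneg _)
      _ = ‖T‖ * ‖(y : EuclideanSpace ℝ V)‖ ^ 2 := by ring
    rw [hray, div_le_iff₀ (by positivity)]
    linarith
  have hray_x : G.specRad ≤ T.rayleighQuotient xE := by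
    rw [hray, le_div_iff₀ hxnorm_pos, hre, hnormsq]
    calc G.specRad * ∑ i, xE i * xE i = G.specRad * ∑ i, x i * x i := rfl
    _ ≤ ∑ i, Gs.adjMatR.mulVec x i * x i := hQ
    _ = ∑ i, Gs.adjMatR.mulVec xE i * xE i := rfl
  have hρ_le_lam : G.specRad ≤ lam := hray_x.trans (le_ciSup hBdd ⟨xE, hxE0⟩)
  haveI := FiniteDimensional.proper_rclike ℝ (EuclideanSpace ℝ V)
  obtain ⟨x₀, hx₀mem, hx₀max⟩ := (isCompact_sphere (0 : EuclideanSpace ℝ V) ‖xE‖).exists_isMaxOn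
    ⟨xE, by simp⟩ T.reApplyInnerSelf_continuous.continuousOn
  have hx₀norm : ‖x₀‖ = ‖xE‖ := by simpa using hx₀mem
  have hx₀0 : x₀ ≠ 0 := by
    intro h
    rw [h, norm_zero] at hx₀norm
    exact hxE0 (norm_eq_zero.mp hx₀norm.symm)
  have hmax₀ : IsMaxOn T.reApplyInnerSelf (Metric.sphere 0 ‖x₀‖) x₀ := by rwa [hx₀norm]
  have hev := hSA.hasEigenvector_of_isMaxOn hx₀0 hmax₀
  have hx₀eig : Gs.adjMatR.mulVec (x₀ : V → ℝ) = lam • (x₀ : V → ℝ) := by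
    have h1 := Module.End.mem_eigenspace_iff.mp hev.1
    rw [hcoeT] at h1
    exact congrArg WithLp.ofLp h1
  have hlam_mem : lam ∈ {t : ℝ | ∃ y : V → ℝ, y ≠ 0 ∧ Gs.adjMatR.mulVec y = t • y} :=
    ⟨WithLp.ofLp x₀, fun h => hx₀0 (by simpa using congrArg (WithLp.toLp 2) h), hx₀eig⟩
  have hSetBdd : BddAbove {t : ℝ | ∃ y : V → ℝ, y ≠ 0 ∧ Gs.adjMatR.mulVec y = t • y} := by
    refine ⟨lam, ?_⟩
    rintro t ⟨y, hy0, hyeig⟩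
    have hyE0 : (WithLp.toLp 2 y : EuclideanSpace ℝ V) ≠ 0 :=
      fun h => hy0 (by simpa using congrArg WithLp.ofLp h)
    have hsy : (0:ℝ) < ∑ i, y i * y i := by
      obtain ⟨i0, hi0⟩ := Function.ne_iff.mp hy0
      exact Finset.sum_pos' (fun i _ => mul_self_nonneg _)
        ⟨i0, Finset.mem_univ i0, mul_self_pos.mpr hi0⟩
    have h2 : T.rayleighQuotient (WithLp.toLp 2 y : EuclideanSpace ℝ V) = t := by
      rw [hray, hre, hnormsq]
      have h3 : ∑ i, Gs.adjMatR.mulVec y i * y i = t * ∑ i, y i * y i := by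
        rw [hyeig]
        simp [Finset.mul_sum, mul_assoc]
      calc (∑ i, Gs.adjMatR.mulVec y i * y i) / (∑ i, y i * y i)
          = t * (∑ i, y i * y i) / (∑ i, y i * y i) := by rw [h3]
      _ = t := mul_div_cancel_right₀ t (ne_of_gt hsy)
    rw [← h2]
    exact le_ciSup hBdd ⟨WithLp.toLp 2 y, hyE0⟩
  have hspecGs : Gs.specRad = sSup {t : ℝ | ∃ y : V → ℝ, y ≠ 0 ∧ Gs.adjMatR.mulVec y = t • y} :=
    rfl
  have hlam_le : lam ≤ Gs.specRad := by
    rw [hspecGs]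
    exact le_csSup hSetBdd hlam_mem
  have hρ_ne : G.specRad ≠ lam := by
    intro hEq
    have hfx : T.rayleighQuotient xE = lam :=
      le_antisymm (le_ciSup hBdd ⟨xE, hxE0⟩) (hEq ▸ hray_x)
    have hmaxE : IsMaxOn T.reApplyInnerSelf (Metric.sphere 0 ‖xE‖) xE := by
      intro y hy
      have hyn : ‖y‖ = ‖xE‖ := by simpa using hy
      have hy0 : y ≠ 0 := by
        intro h
        rw [h, norm_zero] at hyn
        exact hxE0 (norm_eq_zero.mp hyn.symm)
      have h3 : T.rayleighQuotient y ≤ lam := le_ciSup hBdd ⟨y, hy0⟩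
      have hyn2 : (0:ℝ) < ‖y‖ ^ 2 := by
        have := norm_pos_iff.mpr hy0
        positivity
      have h4 : T.reApplyInnerSelf y = T.rayleighQuotient y * ‖y‖ ^ 2 := by
        rw [hray, div_mul_cancel₀ _ (ne_of_gt hyn2)]
      have h5 : T.reApplyInnerSelf xE = lam * ‖xE‖ ^ 2 := by
        rw [← hfx, hray, div_mul_cancel₀ _ (ne_of_gt hxnorm_pos)]
      show T.reApplyInnerSelf y ≤ T.reApplyInnerSelf xE
      rw [h4, h5, hyn]
      exact mul_le_mul_of_nonneg_right h3 (by positivity)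
    have hev2 := hSA.hasEigenvector_of_isMaxOn hxE0 hmaxE
    have h6 : Gs.adjMatR.mulVec x = lam • x := by
      have h1 := Module.End.mem_eigenspace_iff.mp hev2.1
      rw [hcoeT] at h1
      exact congrArg WithLp.ofLp h1
    have h7 : Gs.adjMatR.mulVec x v₁ = lam * x v₁ := by
      rw [h6]
      simp
    rw [← hEq] at h7
    exact absurd h7 (ne_of_gt hC2)
  calc G.specRad < lam := lt_of_le_of_ne hρ_le_lam hρ_ne
  _ ≤ Gs.specRad := hlam_le
end

section
/- For integers n, k with ⌊n/2⌋ + 1 ≤ k ≤ n − 1, the zero forcing number of the graph 𝒢(n,k) equals k, i.e., Z(𝒢(n,k)) = k. -/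
open Classical

open Classical SimpleGraph Finset

lemma fort_white {V : Type*} (G : SimpleGraph V) (S F : Set V)
    (hdisj : ∀ v ∈ F, v ∉ S)
    (hfort : ∀ u, u ∉ F → ∀ v ∈ F, G.Adj u v → ∃ v', v' ∈ F ∧ v' ≠ v ∧ G.Adj u v') :
    ∀ v, G.Forced S v → v ∉ F := by
  intro v hv
  induction hv with
  | init w hw => exact fun hF => hdisj w hF hw
  | force u w hu hadj hothers ihu ih =>
      intro hwF
      obtain ⟨v', hv'F, hne, hadj'⟩ := hfort u ihu w hwF hadj
      exact ih v' hadj' hne hv'F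
open Classical SimpleGraph Finset

lemma calG_adj' (n k : ℕ) (i j : Fin n) :
    (calG n k).Adj i j ↔ i ≠ j ∧
      ((i.val = 0 ∨ j.val = 0) ∨
       (i.val ≤ 2*k-n+1 ∧ j.val ≤ 2*k-n+1) ∨
       (2*k-n+1 < i.val ∧ 2*k-n+1 < j.val ∧
         (i.val - (2*k-n+2))/2 = (j.val - (2*k-n+2))/2)) := by
  show (SimpleGraph.fromRel _).Adj i j ↔ _
  rw [SimpleGraph.fromRel_adj]
  constructor
  · rintro ⟨hne, h | h⟩
    · exact ⟨hne, h⟩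
    · refine ⟨hne, ?_⟩
      rcases h with (h | h) | h | ⟨h1, h2, h3⟩
      · exact Or.inl (Or.inr h)
      · exact Or.inl (Or.inl h)
      · exact Or.inr (Or.inl ⟨h.2, h.1⟩)
      · exact Or.inr (Or.inr ⟨h2, h1, h3.symm⟩)
  · rintro ⟨hne, h⟩
    exact ⟨hne, Or.inl h⟩
open Classical SimpleGraph Finset

section Main
variable {n k : ℕ}

lemma upper_bound (hk1 : n / 2 + 1 ≤ k) (hk2 : k ≤ n - 1) :
    ∃ S : Set (Fin n), S.ncard = k ∧ (calG n k).IsZeroForcingSet S := by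
  have hn : 3 ≤ n := by omega
  have hM2 : 2 ≤ 2*k-n+1 := by omega
  have hnn : n = (2*k-n+1) + 1 + 2*(n-k-1) := by omega
  -- the blue set
  set F : Finset ℕ :=
    Finset.Icc 1 (2*k-n+1) ∪ (Finset.range (n-k-1)).image (fun i => (2*k-n+2) + 2*i) with hF
  have hFlt : ∀ m ∈ F, m < n := by
    intro m hm
    simp only [hF, Finset.mem_union, Finset.mem_Icc, Finset.mem_image, Finset.mem_range] at hm
    rcases hm with h | ⟨i, hi, rfl⟩ <;> omega
  refine ⟨↑(F.attachFin hFlt), ?_, ?_⟩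
  · rw [Set.ncard_coe_finset, Finset.card_attachFin, hF,
      Finset.card_union_of_disjoint, Nat.card_Icc,
      Finset.card_image_of_injective _ (fun a b hab => by omega), Finset.card_range]
    · omega
    · rw [Finset.disjoint_left]
      intro a ha hb
      simp only [Finset.mem_Icc] at ha
      simp only [Finset.mem_image, Finset.mem_range] at hb
      obtain ⟨i, hi, rfl⟩ := hb
      omega
  · -- zero forcing
    set S : Set (Fin n) := ↑(F.attachFin hFlt) with hS
    have hmem : ∀ v : Fin n, ((1 ≤ v.val ∧ v.val ≤ 2*k-n+1) ∨
        ∃ i, i < n-k-1 ∧ v.val = 2*k-n+2+2*i) → v ∈ S := by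
      intro v hv
      simp only [hS, Finset.coe_sort_coe, Finset.mem_coe, Finset.mem_attachFin, hF,
        Finset.mem_union, Finset.mem_Icc, Finset.mem_image, Finset.mem_range]
      rcases hv with h | ⟨i, hi, h⟩
      · exact Or.inl h
      · exact Or.inr ⟨i, hi, h.symm⟩
    have hmem' : ∀ v : Fin n, v ∈ S → ((1 ≤ v.val ∧ v.val ≤ 2*k-n+1) ∨
        ∃ i, i < n-k-1 ∧ v.val = 2*k-n+2+2*i) := by
      intro v hv
      simp only [hS, Finset.coe_sort_coe, Finset.mem_coe, Finset.mem_attachFin, hF,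
        Finset.mem_union, Finset.mem_Icc, Finset.mem_image, Finset.mem_range] at hv
      rcases hv with h | ⟨i, hi, h⟩
      · exact Or.inl h
      · exact Or.inr ⟨i, hi, h.symm⟩
    have h0 : (calG n k).Forced S ⟨0, by omega⟩ := by
      refine Forced.force ⟨1, by omega⟩ _ (Forced.init _ (hmem _ (Or.inl (by simp))))
        ?_ ?_
      · rw [calG_adj']
        refine ⟨?_, Or.inl (Or.inr rfl)⟩
        intro h
        have := congrArg Fin.val h
        simp at this
      · intro y hadj hy
        rw [calG_adj'] at hadj
        obtain ⟨hne, hd⟩ := hadj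
        have hy0 : y.val ≠ 0 := fun h => hy (Fin.ext h)
        have hy1 : y.val ≠ 1 := fun h => hne (Fin.ext h.symm)
        have : 1 ≤ y.val ∧ y.val ≤ 2*k-n+1 := by
          simp only [Fin.val_mk] at hd; omega
        exact Forced.init _ (hmem _ (Or.inl this))
    intro v
    by_cases hvS : v ∈ S
    · exact Forced.init _ hvS
    have hvn := v.isLt
    by_cases hv0 : v.val = 0
    · have : v = ⟨0, by omega⟩ := Fin.ext hv0
      rw [this]; exact h0
    -- v is the second vertex of a pair
    have hnot1 : ¬ (1 ≤ v.val ∧ v.val ≤ 2*k-n+1) := fun h => hvS (hmem v (Or.inl h))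
    set j := (v.val - (2*k-n+2))/2 with hj
    have hjlt : j < n-k-1 := by omega
    have hnot2 : v.val ≠ 2*k-n+2+2*j := by
      intro h
      exact hvS (hmem v (Or.inr ⟨j, hjlt, h⟩))
    have hv2 : v.val = 2*k-n+3+2*j := by omega
    refine Forced.force ⟨2*k-n+2+2*j, by omega⟩ v
      (Forced.init _ (hmem _ (Or.inr ⟨j, hjlt, rfl⟩))) ?_ ?_
    · rw [calG_adj']
      constructor
      · intro h
        have := congrArg Fin.val h
        simp only [Fin.val_mk] at this
        omega
      · refine Or.inr (Or.inr ?_)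
        simp only [Fin.val_mk]
        constructor; · omega
        constructor; · omega
        omega
    · intro y hadj hy
      rw [calG_adj'] at hadj
      obtain ⟨hne, hd⟩ := hadj
      simp only [Fin.val_mk] at hd
      have hyv : y.val ≠ v.val := fun h => hy (Fin.ext h)
      have hyu : y.val ≠ 2*k-n+2+2*j := fun h => hne (Fin.ext h.symm)
      have hyn := y.isLt
      have hy0 : y.val = 0 := by omega
      have : y = ⟨0, by omega⟩ := Fin.ext hy0
      rw [this]; exact h0
lemma lower_bound (hk1 : n / 2 + 1 ≤ k) (hk2 : k ≤ n - 1)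
    (S : Set (Fin n)) (hZ : (calG n k).IsZeroForcingSet S) : k ≤ S.ncard := by
  have hn : 3 ≤ n := by omega
  have hM2 : 2 ≤ 2*k-n+1 := by omega
  have hnn : n = (2*k-n+1) + 1 + 2*(n-k-1) := by omega
  set z : Fin n := ⟨0, by omega⟩ with hzdef
  -- Fort consequence 1: at most one white interior vertex
  have hF1 : ∀ x y : Fin n, 1 ≤ x.val → x.val ≤ 2*k-n+1 → 1 ≤ y.val → y.val ≤ 2*k-n+1 →
      x ≠ y → x ∉ S → y ∉ S → False := by
    intro x y hx1 hx2 hy1 hy2 hxy hxS hyS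
    have hfw := fort_white (calG n k) S {x, y} ?_ ?_ x (hZ x)
    · exact hfw (Or.inl rfl)
    · rintro v (rfl | rfl) <;> assumption
    · intro u huF v hvF hadj
      simp only [Set.mem_insert_iff, Set.mem_singleton_iff] at huF hvF
      rw [calG_adj'] at hadj
      obtain ⟨hne, hd⟩ := hadj
      have hvb : (1 ≤ v.val ∧ v.val ≤ 2*k-n+1) := by
        rcases hvF with rfl | rfl <;> exact ⟨by omega, by omega⟩
      have hu : u.val = 0 ∨ u.val ≤ 2*k-n+1 := by omega
      have huadj : ∀ w : Fin n, 1 ≤ w.val → w.val ≤ 2*k-n+1 → u ≠ w → (calG n k).Adj u w := by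
        intro w hw1 hw2 huw
        rw [calG_adj']
        refine ⟨huw, ?_⟩
        rcases hu with h | h
        · exact Or.inl (Or.inl h)
        · exact Or.inr (Or.inl ⟨h, hw2⟩)
      rcases hvF with rfl | rfl
      · exact ⟨y, Or.inr rfl, fun h => hxy h.symm,
          huadj y hy1 hy2 (fun h => huF (Or.inr h))⟩
      · exact ⟨x, Or.inl rfl, hxy,
          huadj x hx1 hx2 (fun h => huF (Or.inl h))⟩
  -- Fort consequence 2: every pair contains a blue vertex
  have hF2 : ∀ (i : ℕ), i < n-k-1 → ∀ p q : Fin n, p.val = 2*k-n+2+2*i →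
      q.val = 2*k-n+3+2*i → p ∈ S ∨ q ∈ S := by
    intro i hi p q hp hq
    by_contra hc
    push_neg at hc
    have hpq : p ≠ q := fun h => by rw [h] at hp; omega
    have hfw := fort_white (calG n k) S {p, q} ?_ ?_ p (hZ p)
    · exact hfw (Or.inl rfl)
    · rintro v (rfl | rfl)
      exacts [hc.1, hc.2]
    · intro u huF v hvF hadj
      simp only [Set.mem_insert_iff, Set.mem_singleton_iff] at huF hvF
      rw [calG_adj'] at hadj
      obtain ⟨hne, hd⟩ := hadj
      have hun := u.isLt
      have hvv : v.val = p.val ∨ v.val = q.val := by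
        rcases hvF with rfl | rfl
        · exact Or.inl rfl
        · exact Or.inr rfl
      have hu0 : u.val = 0 := by
        rcases hd with (h | h) | h | ⟨h1, h2, h3⟩
        · exact h
        · omega
        · omega
        · exfalso
          have : u.val = p.val ∨ u.val = q.val := by omega
          rcases this with h | h
          · exact huF (Or.inl (Fin.val_injective h))
          · exact huF (Or.inr (Fin.val_injective h))
      have huadj : ∀ w : Fin n, 1 ≤ w.val → (calG n k).Adj u w := by
        intro w hw1
        rw [calG_adj']
        exact ⟨fun h => by rw [h] at hu0; omega, Or.inl (Or.inl hu0)⟩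
      rcases hvF with rfl | rfl
      · exact ⟨q, Or.inr rfl, hpq.symm, huadj q (by omega)⟩
      · exact ⟨p, Or.inl rfl, hpq, huadj p (by omega)⟩
  -- counting setup
  classical
  have hcard : S.ncard = S.toFinset.card := Set.ncard_eq_toFinset_card' S
  set sF := S.toFinset with hsF
  set AI : Finset (Fin n) := Finset.univ.filter (fun v => 1 ≤ v.val ∧ v.val ≤ 2*k-n+1)
    with hAI
  have hAIcard : AI.card = 2*k-n+1 := by
    have hAeq : AI = Finset.attachFin (Finset.Icc 1 (2*k-n+1))
        (fun m hm => by simp only [Finset.mem_Icc] at hm; omega) := by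
      ext v
      simp [hAI, Finset.mem_attachFin, Finset.mem_Icc]
    rw [hAeq, Finset.card_attachFin, Nat.card_Icc]
    omega
  set fI := AI.filter (fun v => v ∈ S) with hfI
  set gI := AI.filter (fun v => ¬ v ∈ S) with hgI
  have hIsum : fI.card + gI.card = 2*k-n+1 := by
    rw [hfI, hgI, Finset.card_filter_add_card_filter_not, hAIcard]
  have hgI1 : gI.card ≤ 1 := by
    rw [Finset.card_le_one]
    intro a ha b hb
    simp only [hgI, hAI, Finset.mem_filter, Finset.mem_univ, true_and] at ha hb
    by_contra hab
    exact hF1 a b ha.1.1 ha.1.2 hb.1.1 hb.1.2 hab ha.2 hb.2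
  set f0 : Finset (Fin n) := Finset.univ.filter (fun v => v.val = 0 ∧ v ∈ S) with hf0
  set fB : Finset (Fin n) := Finset.univ.filter (fun v => 2*k-n+1 < v.val ∧ v ∈ S) with hfB
  set N := fB.image Fin.val with hN
  have hNcard : N.card = fB.card := Finset.card_image_of_injective _ Fin.val_injective
  have hNof : ∀ v : Fin n, 2*k-n+1 < v.val → v ∈ S → v.val ∈ N := by
    intro v h1 h2
    simp only [hN, hfB, Finset.mem_image, Finset.mem_filter, Finset.mem_univ, true_and]
    exact ⟨v, ⟨h1, h2⟩, rfl⟩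
  have hNto : ∀ x ∈ N, ∃ v : Fin n, v.val = x ∧ 2*k-n+1 < v.val ∧ v ∈ S := by
    intro x hx
    simp only [hN, hfB, Finset.mem_image, Finset.mem_filter, Finset.mem_univ, true_and] at hx
    obtain ⟨v, hv, rfl⟩ := hx
    exact ⟨v, rfl, hv⟩
  -- the choice function for pairs
  set fch : ℕ → ℕ := fun i => if 2*k-n+2+2*i ∈ N then 2*k-n+2+2*i else 2*k-n+3+2*i
    with hfch
  have hfch_rng : ∀ i, fch i = 2*k-n+2+2*i ∨ fch i = 2*k-n+3+2*i := by
    intro i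
    by_cases h : 2*k-n+2+2*i ∈ N <;> simp [hfch, h]
  have hfch_mem : ∀ i, i < n-k-1 → fch i ∈ N := by
    intro i hi
    by_cases h : 2*k-n+2+2*i ∈ N
    · simpa [hfch, h] using h
    · have h2 : fch i = 2*k-n+3+2*i := by simp [hfch, h]
      rw [h2]
      rcases hF2 i hi ⟨2*k-n+2+2*i, by omega⟩ ⟨2*k-n+3+2*i, by omega⟩ rfl rfl with hp | hq
      · exact absurd (hNof _ (by simp; omega) hp) h
      · exact hNof _ (by simp; omega) hq
  have hfB_ge : n-k-1 ≤ fB.card := by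
    rw [← hNcard]
    calc n-k-1 = (Finset.range (n-k-1)).card := (Finset.card_range _).symm
    _ ≤ N.card := by
        apply Finset.card_le_card_of_injOn fch
        · intro a ha
          simp only [Finset.mem_coe, Finset.mem_range] at ha
          exact hfch_mem a ha
        · intro a ha b hb hab
          rcases hfch_rng a with h1 | h1 <;> rcases hfch_rng b with h2 | h2 <;> omega
  -- partition inequality
  have hdisj01 : Disjoint f0 fI := by
    rw [Finset.disjoint_left]
    intro a ha hb
    simp only [hf0, hfI, hAI, Finset.mem_filter, Finset.mem_univ, true_and] at ha hb
    omega
  have hdisj0B : Disjoint (f0 ∪ fI) fB := by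
    rw [Finset.disjoint_left]
    intro a ha hb
    simp only [hf0, hfI, hAI, hfB, Finset.mem_union, Finset.mem_filter, Finset.mem_univ,
      true_and] at ha hb
    omega
  have hsub : f0 ∪ fI ∪ fB ⊆ sF := by
    intro a ha
    simp only [hf0, hfI, hAI, hfB, Finset.mem_union, Finset.mem_filter, Finset.mem_univ,
      true_and] at ha
    rw [hsF, Set.mem_toFinset]
    tauto
  have hsum : f0.card + fI.card + fB.card ≤ sF.card := by
    calc f0.card + fI.card + fB.card
        = (f0 ∪ fI ∪ fB).card := by
          rw [Finset.card_union_of_disjoint hdisj0B, Finset.card_union_of_disjoint hdisj01]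
    _ ≤ sF.card := Finset.card_le_card hsub
  -- now the case analysis
  by_cases h0S : z ∈ S
  · have hz0 : z ∈ f0 := by
      exact Finset.mem_filter.mpr ⟨Finset.mem_univ z, rfl, h0S⟩
    have h01 : 0 < f0.card := Finset.card_pos.mpr ⟨z, hz0⟩
    omega
  by_cases hgI0 : gI.card = 0
  · omega
  by_cases hboth : ∃ i, i < n-k-1 ∧ ∃ p q : Fin n, p.val = 2*k-n+2+2*i ∧
      q.val = 2*k-n+3+2*i ∧ p ∈ S ∧ q ∈ S
  · -- a pair with both vertices blue: fB.card ≥ n-k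
    obtain ⟨i0, hi0, p0, q0, hp0, hq0, hp0S, hq0S⟩ := hboth
    have hfci0 : fch i0 = 2*k-n+2+2*i0 := by
      have : 2*k-n+2+2*i0 ∈ N := by
        have := hNof p0 (by omega) hp0S
        rwa [hp0] at this
      simp [hfch, this]
    have hfB_ge' : n-k ≤ fB.card := by
      rw [← hNcard]
      have hre : n-k = (Finset.range (n-k)).card := (Finset.card_range _).symm
      rw [hre]
      apply Finset.card_le_card_of_injOn (fun j => if j = n-k-1 then 2*k-n+3+2*i0 else fch j)
      · intro a ha
        simp only [Finset.mem_coe, Finset.mem_range] at ha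
        by_cases h : a = n-k-1
        · simp only [h, if_pos rfl]
          have := hNof q0 (by omega) hq0S
          rwa [hq0] at this
        · simp only [if_neg h]
          exact hfch_mem a (by omega)
      · intro a ha b hb hab
        simp only [Finset.mem_coe, Finset.coe_range, Set.mem_Iio] at ha hb
        by_cases h1 : a = n-k-1
        · by_cases h2 : b = n-k-1
          · omega
          · simp only [if_pos h1, if_neg h2] at hab
            rcases hfch_rng b with h | h
            · omega
            · have hbi0 : b = i0 := by omega
              rw [hbi0] at h
              omega
        · by_cases h2 : b = n-k-1
          · simp only [if_neg h1, if_pos h2] at hab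
            rcases hfch_rng a with h | h
            · omega
            · have hai0 : a = i0 := by omega
              rw [hai0] at h
              omega
          · simp only [if_neg h1, if_neg h2] at hab
            rcases hfch_rng a with h | h <;> rcases hfch_rng b with h' | h' <;> omega
    omega
  -- final case: the complement of S is a fort, contradiction
  · exfalso
    push_neg at hboth
    obtain ⟨w1, hw1⟩ := Finset.card_pos.mp (Nat.pos_of_ne_zero hgI0)
    simp only [hgI, hAI, Finset.mem_filter, Finset.mem_univ, true_and] at hw1
    obtain ⟨⟨hw11, hw12⟩, hw1S⟩ := hw1
    have hfw := fort_white (calG n k) S Sᶜ (fun v hv => hv) ?_ z (hZ z)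
    · exact hfw h0S
    intro u huF v hvF hadj
    simp only [Set.mem_compl_iff, not_not] at huF hvF
    have huS : u ∈ S := huF
    have hun := u.isLt
    have hu0 : u.val ≠ 0 := by
      intro h
      have : u = z := Fin.ext h
      rw [this] at huS
      exact h0S huS
    have hzmem : z ∈ (Sᶜ : Set (Fin n)) := h0S
    have hzval : z.val = 0 := rfl
    by_cases huI : u.val ≤ 2*k-n+1
    · -- interior blue vertex: neighbors z and w1 in the fort
      have huw1 : u ≠ w1 := fun h => hw1S (h ▸ huS)
      have hw1z : w1 ≠ z := by
        intro h
        rw [h] at hw11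
        omega
      have hadjw1 : (calG n k).Adj u w1 := by
        rw [calG_adj']
        exact ⟨huw1, Or.inr (Or.inl ⟨huI, hw12⟩)⟩
      have hadjz : (calG n k).Adj u z := by
        rw [calG_adj']
        exact ⟨fun h => hu0 (by rw [h]), Or.inl (Or.inr rfl)⟩
      by_cases hvz : v = z
      · refine ⟨w1, hw1S, ?_, hadjw1⟩
        rw [hvz]
        exact hw1z
      · exact ⟨z, hzmem, fun h => hvz h.symm, hadjz⟩
    · -- pair region blue vertex: neighbors z and its white partner
      push_neg at huI
      have hjlt : (u.val - (2*k-n+2))/2 < n-k-1 := by omega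
      obtain ⟨w, hwgt, hwpair, hwne, hwS⟩ :
          ∃ w : Fin n, 2*k-n+1 < w.val ∧
            (w.val - (2*k-n+2))/2 = (u.val - (2*k-n+2))/2 ∧ w.val ≠ u.val ∧ w ∉ S := by
        by_cases hcu : u.val = 2*k-n+2+2*((u.val - (2*k-n+2))/2)
        · -- u is the first vertex of its pair; partner is u+1
          have hlt : u.val + 1 < n := by omega
          refine ⟨⟨u.val+1, hlt⟩, ?_, ?_, ?_, ?_⟩
          · simp only [Fin.val_mk]; omega
          · simp only [Fin.val_mk]; omega
          · simp only [Fin.val_mk]; omega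
          · have hwval : ((⟨u.val+1, hlt⟩ : Fin n)).val
                = 2*k-n+3+2*((u.val-(2*k-n+2))/2) := by
              simp only [Fin.val_mk]; omega
            exact hboth _ hjlt u _ hcu hwval huS
        · -- u is the second vertex of its pair; partner is u-1
          have hcu2 : u.val = 2*k-n+3+2*((u.val - (2*k-n+2))/2) := by omega
          have hlt : u.val - 1 < n := by omega
          refine ⟨⟨u.val-1, hlt⟩, ?_, ?_, ?_, ?_⟩
          · simp only [Fin.val_mk]; omega
          · simp only [Fin.val_mk]; omega
          · simp only [Fin.val_mk]; omega
          · have hwval : ((⟨u.val-1, hlt⟩ : Fin n)).val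
                = 2*k-n+2+2*((u.val-(2*k-n+2))/2) := by
              simp only [Fin.val_mk]; omega
            intro hwS'
            exact hboth _ hjlt _ u hwval hcu2 hwS' huS
      have hwz : w ≠ z := by
        intro h
        rw [h] at hwgt
        omega
      have hadjw : (calG n k).Adj u w := by
        rw [calG_adj']
        exact ⟨fun hh => hwne (congrArg Fin.val hh).symm,
          Or.inr (Or.inr ⟨huI, hwgt, hwpair.symm⟩)⟩
      have hadjz : (calG n k).Adj u z := by
        rw [calG_adj']
        exact ⟨fun h => hu0 (by rw [h]), Or.inl (Or.inr rfl)⟩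
      by_cases hvz : v = z
      · refine ⟨w, hwS, ?_, hadjw⟩
        rw [hvz]
        exact hwz
      · exact ⟨z, hzmem, fun h => hvz h.symm, hadjz⟩

end Main

/-- For `⌊n/2⌋ + 1 ≤ k ≤ n − 1`, the zero forcing number of
`𝒢(n,k)` equals `k`. -/
theorem zeroForcing_calG (n k : ℕ) (hk1 : n / 2 + 1 ≤ k) (hk2 : k ≤ n - 1) :
    (calG n k).zeroForcingNumber = k := by
  obtain ⟨S, hScard, hSforce⟩ := upper_bound hk1 hk2
  have hmem : k ∈ {m | ∃ S : Set (Fin n), S.ncard = m ∧ (calG n k).IsZeroForcingSet S} :=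
    ⟨S, hScard, hSforce⟩
  rw [SimpleGraph.zeroForcingNumber]
  apply le_antisymm
  · exact Nat.sInf_le hmem
  · refine le_csInf ⟨k, hmem⟩ ?_
    rintro b ⟨T, hT, hTf⟩
    rw [← hT]
    exact lower_bound hk1 hk2 T hTf
end
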